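/- arXiv:2310.01213 — 13 statements merged into one kernel-verified Lean document; each statement's English description precedes it below -/
import Mathlib

section
/- Let f(x) = x + Σ_{k≥2} a_k x^k be a power series with non-negative real coefficients, positive radius of convergence, and let R ∈ (0,1) satisfy f(R) = 1. Then for every complex z with |z| ≤ R and z ≠ R, we have f(z) ≠ 1. -/
open Set

/-- **Little Narcissus Lemma, part 3.**
Let `f(x) = x + ∑_{k≥2} a_k x^k` be a power series with non-negative real
coefficients, converging (absolutely) at `R`, where `R ∈ (0,1)` satisfies
`f(R) = 1`. Then for every complex `z` with `|z| ≤ R` and `z ≠ R` we have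
`f(z) ≠ 1`. -/
theorem stmt_1 (a : ℕ → ℝ) (R : ℝ)
    (h0 : a 0 = 0) (h1 : a 1 = 1)
    (hnn : ∀ k, 2 ≤ k → 0 ≤ a k)
    (hR : R ∈ Set.Ioo (0:ℝ) 1)
    (hsum : Summable (fun k : ℕ => a k * R ^ k))
    (hroot : ∑' k : ℕ, a k * R ^ k = 1) :
    ∀ z : ℂ, ‖z‖ ≤ R → z ≠ (R : ℂ) →
      ∑' k : ℕ, (a k : ℂ) * z ^ k ≠ 1 := by
  intro z hz hzR hcontra
  have hRpos : 0 < R := hR.1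
  have ha : ∀ k, 0 ≤ a k := by
    intro k
    match k with
    | 0 => simp [h0]
    | 1 => simp [h1]
    | (n+2) => exact hnn _ (by omega)
  -- termwise bound
  have habs : ∀ k, ‖z ^ k‖ ≤ R ^ k := by
    intro k
    rw [norm_pow]
    exact pow_le_pow_left₀ (norm_nonneg z) hz k
  have hb : ∀ k, a k * (z ^ k).re ≤ a k * R ^ k := by
    intro k
    exact mul_le_mul_of_nonneg_left
      ((Complex.re_le_norm _).trans (habs k)) (ha k)
  -- summability of complex series
  have hsumC : Summable (fun k : ℕ => (a k : ℂ) * z ^ k) := by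
    apply Summable.of_norm
    apply hsum.of_nonneg_of_le (fun k => norm_nonneg _)
    intro k
    simp only [norm_mul, Complex.norm_real, Real.norm_eq_abs, abs_of_nonneg (ha k)]
    exact mul_le_mul_of_nonneg_left (habs k) (ha k)
  have hsumRe : Summable (fun k : ℕ => a k * (z ^ k).re) := by
    have := (Complex.hasSum_re hsumC.hasSum).summable
    simpa [Complex.mul_re] using this
  -- Re of the sum
  have hre : ∑' k : ℕ, a k * (z ^ k).re = 1 := by
    have := congrArg Complex.re hcontra
    rw [Complex.re_tsum hsumC] at this
    simpa [Complex.mul_re] using this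
  -- Re z = R
  have hReZ : (z : ℂ).re = R := by
    by_contra hne
    have hlt : z.re < R := lt_of_le_of_ne ((Complex.re_le_norm z).trans hz) hne
    have h1' : a 1 * (z ^ 1).re < a 1 * R ^ 1 := by simpa [h1] using hlt
    have := Summable.tsum_lt_tsum hb h1' hsumRe hsum
    rw [hre, hroot] at this
    exact lt_irrefl _ this
  -- deduce z = R
  have habsz : ‖z‖ = R := le_antisymm hz (by
    calc R = z.re := hReZ.symm
    _ ≤ |z.re| := le_abs_self _
    _ ≤ ‖z‖ := Complex.abs_re_le_norm z)
  have him : z.im = 0 := by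
    have h2 : z.re ^ 2 + z.im ^ 2 = R ^ 2 := by
      have := Complex.sq_norm z
      rw [habsz, Complex.normSq_apply] at this
      nlinarith
    nlinarith [sq_nonneg z.im, hReZ]
  exact hzR (Complex.ext hReZ him)
end

section
/- For every real q > 0, the equation Σ_{i=0}^∞ x^{1+i+⌊i/q⌋} = 1 has a unique solution ρ_q in the interval (0,1), and this ρ_q is strictly decreasing as a function of q. -/
open Set

private noncomputable def fS (q x : ℝ) : ℝ := ∑' i : ℕ, x ^ (1 + i + ⌊(i : ℝ) / q⌋₊)

private lemma fS_summable {q x : ℝ} (hx0 : 0 ≤ x) (hx1 : x < 1) :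
    Summable (fun i : ℕ => x ^ (1 + i + ⌊(i : ℝ) / q⌋₊)) := by
  refine Summable.of_nonneg_of_le (fun i => pow_nonneg hx0 _) (fun i => ?_)
    (summable_geometric_of_lt_one hx0 hx1)
  exact pow_le_pow_of_le_one hx0 hx1.le (by omega)

private lemma fS_strictMono {q a b : ℝ} (ha : 0 ≤ a) (hab : a < b) (hb : b < 1) :
    fS q a < fS q b := by
  refine Summable.tsum_lt_tsum (i := 0) (fun i => pow_le_pow_left₀ ha hab.le _) ?_
    (fS_summable ha (hab.trans hb)) (fS_summable (ha.trans hab.le) hb)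
  simp only [Nat.cast_zero, zero_div, Nat.floor_zero, add_zero, pow_one]
  exact hab

private lemma fS_zero (q : ℝ) : fS q 0 = 0 := by
  unfold fS
  have : ∀ i : ℕ, (0:ℝ) ^ (1 + i + ⌊(i : ℝ) / q⌋₊) = 0 := fun i => zero_pow (by omega)
  simp [this]

private lemma fS_continuousOn {q r : ℝ} (hr : r < 1) :
    ContinuousOn (fS q) (Set.Icc 0 r) := by
  rcases le_or_gt r 0 with h | h
  · have hsub : Set.Icc (0:ℝ) r ⊆ {0} := by
      intro y hy; simp [le_antisymm (hy.2.trans h) hy.1]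
    exact (continuousOn_singleton _ _).mono hsub
  refine continuousOn_tsum (u := fun i : ℕ => r ^ i) (fun i => (continuous_pow _).continuousOn)
    (summable_geometric_of_lt_one h.le hr) (fun n x hx => ?_)
  rw [Real.norm_eq_abs, abs_of_nonneg (pow_nonneg hx.1 _)]
  calc x ^ (1 + n + ⌊(n : ℝ) / q⌋₊) ≤ x ^ n :=
        pow_le_pow_of_le_one hx.1 (hx.2.trans hr.le) (by omega)
    _ ≤ r ^ n := pow_le_pow_left₀ hx.1 hx.2 n

/-- Existence and uniqueness of the root in (0,1). -/
private lemma fS_exists_unique (q : ℝ) :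
    ∃! ρ : ℝ, ρ ∈ Set.Ioo (0:ℝ) 1 ∧ fS q ρ = 1 := by
  -- choose x < 1 with fS q x ≥ 1
  set E : ℕ := 1 + 1 + ⌊(1 : ℝ) / q⌋₊ with hE
  set x : ℝ := (1/2 : ℝ) ^ ((E : ℝ)⁻¹) with hxdef
  have hE1 : 1 ≤ (E : ℝ) := by
    have : (2:ℕ) ≤ E := by omega
    exact_mod_cast Nat.one_le_iff_ne_zero.mpr (by omega)
  have hEpos : (0:ℝ) < E := lt_of_lt_of_le one_pos hE1
  have hx0 : 0 < x := Real.rpow_pos_of_pos (by norm_num) _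
  have hx1 : x < 1 := by
    apply Real.rpow_lt_one (by norm_num) (by norm_num)
    positivity
  have hxE : x ^ E = 1/2 := by
    rw [hxdef, ← Real.rpow_natCast ((1/2 : ℝ) ^ ((E : ℝ)⁻¹)) E, ← Real.rpow_mul (by norm_num),
      inv_mul_cancel₀ (ne_of_gt hEpos), Real.rpow_one]
  have hxhalf : (1/2 : ℝ) ≤ x := by
    calc (1/2 : ℝ) = (1/2 : ℝ) ^ (1:ℝ) := (Real.rpow_one _).symm
      _ ≤ x := Real.rpow_le_rpow_of_exponent_ge (by norm_num) (by norm_num)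
          (by rw [inv_le_one_iff₀]; right; exact hE1)
  have hfx : 1 ≤ fS q x := by
    have h2 : ∑ i ∈ Finset.range 2, x ^ (1 + i + ⌊(i : ℝ) / q⌋₊) ≤ fS q x :=
      Summable.sum_le_tsum _ (fun i _ => pow_nonneg hx0.le _) (fS_summable hx0.le hx1)
    have : ∑ i ∈ Finset.range 2, x ^ (1 + i + ⌊(i : ℝ) / q⌋₊) = x + x ^ E := by
      simp [Finset.sum_range_succ, hE]
    rw [this] at h2
    calc (1:ℝ) = 1/2 + 1/2 := by norm_num
      _ ≤ x + x ^ E := by rw [← hxE] at *; gcongr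
      _ ≤ fS q x := h2
  -- IVT
  have hmem : (1:ℝ) ∈ Set.Icc (fS q 0) (fS q x) := by
    rw [fS_zero]; exact ⟨zero_le_one, hfx⟩
  obtain ⟨ρ, hρmem, hρ⟩ := intermediate_value_Icc hx0.le (fS_continuousOn hx1) hmem
  have hρ0 : 0 < ρ := by
    rcases hρmem.1.lt_or_eq with h | h
    · exact h
    · exfalso; rw [← h, fS_zero] at hρ; norm_num at hρ
  have hρ1 : ρ < 1 := lt_of_le_of_lt hρmem.2 hx1
  refine ⟨ρ, ⟨⟨hρ0, hρ1⟩, hρ⟩, ?_⟩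
  rintro y ⟨⟨hy0, hy1⟩, hy⟩
  by_contra hne
  rcases lt_or_gt_of_ne hne with h | h
  · have := fS_strictMono (q := q) hy0.le h hρ1; rw [hy, hρ] at this; exact lt_irrefl _ this
  · have := fS_strictMono (q := q) hρ0.le h hy1; rw [hy, hρ] at this; exact lt_irrefl _ this

/-- Strict monotonicity in q. -/
private lemma fS_mono_q {q₁ q₂ x : ℝ} (hq₁ : 0 < q₁) (hq : q₁ < q₂)
    (hx0 : 0 < x) (hx1 : x < 1) : fS q₁ x < fS q₂ x := by
  have hq₂ : 0 < q₂ := hq₁.trans hq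
  have hfloor : ∀ i : ℕ, ⌊(i : ℝ) / q₂⌋₊ ≤ ⌊(i : ℝ) / q₁⌋₊ := by
    intro i
    apply Nat.floor_mono
    gcongr
  set i₀ : ℕ := ⌈q₁ * q₂ / (q₂ - q₁)⌉₊ with hi₀
  have hceil : q₁ * q₂ / (q₂ - q₁) ≤ (i₀ : ℝ) := Nat.le_ceil _
  have hkey : (i₀ : ℝ) / q₂ + 1 ≤ (i₀ : ℝ) / q₁ := by
    rw [div_le_iff₀ (by linarith)] at hceil
    rw [div_add' _ _ _ (ne_of_gt hq₂), div_le_div_iff₀ hq₂ hq₁]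
    nlinarith
  have hstrict : ⌊(i₀ : ℝ) / q₂⌋₊ < ⌊(i₀ : ℝ) / q₁⌋₊ := by
    have h1 : ⌊(i₀ : ℝ) / q₂ + 1⌋₊ ≤ ⌊(i₀ : ℝ) / q₁⌋₊ := Nat.floor_mono hkey
    rwa [Nat.floor_add_one (by positivity)] at h1
  refine Summable.tsum_lt_tsum (i := i₀) (fun i => ?_) ?_
    (fS_summable hx0.le hx1) (fS_summable hx0.le hx1)
  · exact pow_le_pow_of_le_one hx0.le hx1.le (by have := hfloor i; omega)
  · exact pow_lt_pow_right_of_lt_one₀ hx0 hx1 (by omega)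

/-- For every real `q > 0`, the equation `∑_{i=0}^∞ x^(1+i+⌊i/q⌋) = 1` has a
unique solution `ρ_q` in `(0,1)`, and this solution is strictly decreasing as
a function of `q`. -/
theorem stmt_3 :
    (∀ q : ℝ, 0 < q →
      ∃! ρ : ℝ, ρ ∈ Set.Ioo (0:ℝ) 1 ∧
        (∑' i : ℕ, ρ ^ (1 + i + ⌊(i : ℝ) / q⌋₊)) = 1) ∧
    (∀ q₁ q₂ : ℝ, 0 < q₁ → q₁ < q₂ → ∀ ρ₁ ρ₂ : ℝ,
      (ρ₁ ∈ Set.Ioo (0:ℝ) 1 ∧ (∑' i : ℕ, ρ₁ ^ (1 + i + ⌊(i : ℝ) / q₁⌋₊)) = 1) →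
      (ρ₂ ∈ Set.Ioo (0:ℝ) 1 ∧ (∑' i : ℕ, ρ₂ ^ (1 + i + ⌊(i : ℝ) / q₂⌋₊)) = 1) →
      ρ₂ < ρ₁) := by
  constructor
  · intro q _; exact fS_exists_unique q
  · rintro q₁ q₂ hq₁ hq ρ₁ ρ₂ ⟨⟨h10, h11⟩, hs1⟩ ⟨⟨h20, h21⟩, hs2⟩
    by_contra hle
    push_neg at hle
    -- ρ₁ ≤ ρ₂
    have key : fS q₂ ρ₁ ≤ fS q₂ ρ₂ := by
      rcases hle.lt_or_eq with h | h
      · exact (fS_strictMono h10.le h h21).le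
      · rw [h]
    have h1 : fS q₁ ρ₁ < fS q₂ ρ₁ := fS_mono_q hq₁ hq h10 h11
    have : (1:ℝ) < 1 := by
      calc (1:ℝ) = fS q₁ ρ₁ := hs1.symm
        _ < fS q₂ ρ₁ := h1
        _ ≤ fS q₂ ρ₂ := key
        _ = 1 := hs2
    exact lt_irrefl _ this
end

section
/- A binary word w is q-decreasing (every maximal factor 0^a 1^b with a>0 satisfies q·a > b) if and only if w can be written as a concatenation 1^m · s_1 · s_2 ⋯ s_k, where m ≥ 0 and each s_j is of the form 0^{1+⌊i/q⌋} 1^i for some i ≥ 0. -/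
/-- A binary word (`true` = 1, `false` = 0) is `q`-decreasing if every
length-maximal occurrence of a factor `0^a 1^b` with `a > 0` (i.e. not
preceded by a `0` and not followed by a `1`) satisfies `q·a > b`. -/
def QDecreasing (q : ℝ) (w : List Bool) : Prop :=
  ∀ u v : List Bool, ∀ a b : ℕ, 0 < a →
    w = u ++ (List.replicate a false ++ List.replicate b true) ++ v →
    u.getLast? ≠ some false → v.head? ≠ some true →
    q * a > b

namespace QDecAux

open List

lemma qdec_nil (q : ℝ) : QDecreasing q [] := by
  intro u v a b ha h _ _
  have := congrArg List.length h
  simp at this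
  omega

/-- peel equal replicate prefixes -/
lemma peel (c : Bool) : ∀ (a a' : ℕ) (x y : List Bool), x.head? ≠ some c → y.head? ≠ some c →
    List.replicate a c ++ x = List.replicate a' c ++ y → a = a' ∧ x = y := by
  intro a
  induction a with
  | zero =>
    intro a' x y hx hy h
    cases a' with
    | zero => simpa using h
    | succ a' =>
      exfalso; apply hx
      simp only [List.replicate_zero, List.nil_append] at h
      rw [h]; simp [List.replicate_succ]
  | succ a ih =>
    intro a' x y hx hy h
    cases a' with
    | zero =>
      exfalso; apply hy
      simp only [List.replicate_zero, List.nil_append] at h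
      rw [← h]; simp [List.replicate_succ]
    | succ a' =>
      simp only [List.replicate_succ, List.cons_append, List.cons.injEq] at h
      obtain ⟨m, h⟩ := ih a' x y hx hy h.2
      exact ⟨by omega, h⟩

/-- peel replicate from the left when u ends with something ≠ c -/
lemma peelL (c : Bool) : ∀ (a : ℕ) (s u t : List Bool), List.replicate a c ++ s = u ++ t →
    u.getLast? ≠ some c → u ≠ [] →
    ∃ u₂, u = List.replicate a c ++ u₂ ∧ s = u₂ ++ t ∧ u₂ ≠ [] ∧ u₂.getLast? = u.getLast? := by
  intro a
  induction a with
  | zero =>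
    intro s u t h hu hne
    simp only [List.replicate_zero, List.nil_append] at h
    exact ⟨u, by simp, h, hne, rfl⟩
  | succ a ih =>
    intro s u t h hu hne
    match u with
    | [] => exact absurd rfl hne
    | d :: u' =>
      simp only [List.replicate_succ, List.cons_append, List.cons.injEq] at h
      obtain ⟨hd, h⟩ := h
      have hu' : u' ≠ [] := by
        rintro rfl
        apply hu
        simp [← hd]
      have hlast : (d :: u').getLast? = u'.getLast? := by
        rw [show d :: u' = [d] ++ u' from rfl, List.getLast?_append_of_ne_nil _ hu']
      obtain ⟨u₂, h1, h2, h3, h4⟩ := ih s u' t h (by rw [← hlast]; exact hu) hu'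
      exact ⟨u₂, by rw [List.replicate_succ, List.cons_append, ← hd, h1], h2, h3, by rw [h4, hlast]⟩

/-- peel replicate from the left when t starts with something ≠ c -/
lemma peelH (c : Bool) : ∀ (b : ℕ) (s u t : List Bool), List.replicate b c ++ s = u ++ t →
    t.head? ≠ some c →
    ∃ u₃, u = List.replicate b c ++ u₃ ∧ s = u₃ ++ t := by
  intro b
  induction b with
  | zero =>
    intro s u t h ht
    simp only [List.replicate_zero, List.nil_append] at h
    exact ⟨u, by simp, h⟩
  | succ b ih =>
    intro s u t h ht
    match u with
    | [] =>
      exfalso; apply ht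
      simp only [List.nil_append] at h
      rw [← h]; simp [List.replicate_succ]
    | d :: u' =>
      simp only [List.replicate_succ, List.cons_append, List.cons.injEq] at h
      obtain ⟨hd, h⟩ := h
      obtain ⟨u₃, h1, h2⟩ := ih s u' t h ht
      exact ⟨u₃, by rw [List.replicate_succ, List.cons_append, ← hd, h1], h2⟩

end QDecAux

namespace QDecAux

lemma floor_iff {q : ℝ} (hq : 0 < q) (a b : ℕ) :
    q * a > b ↔ ⌊(b : ℝ) / q⌋₊ < a := by
  rw [Nat.floor_lt (by positivity), div_lt_iff₀ hq]
  constructor <;> intro h <;> nlinarith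

lemma qdec_cons_true {q : ℝ} {w : List Bool} :
    QDecreasing q (true :: w) ↔ QDecreasing q w := by
  constructor
  · intro hQ u v a b ha heq hu hv
    apply hQ (true :: u) v a b ha (by rw [heq]; rfl) _ hv
    match u with
    | [] => simp
    | d :: u' =>
      rwa [show true :: d :: u' = [true] ++ (d :: u') from rfl,
        List.getLast?_append_of_ne_nil _ (by simp)]
  · intro hQ u v a b ha heq hu hv
    match u with
    | [] =>
      exfalso
      simp only [List.nil_append] at heq
      have : (true : Bool) = false := by
        have := congrArg List.head? heq
        cases a with
        | zero => omega
        | succ a => simpa [List.replicate_succ] using this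
      simp at this
    | d :: u' =>
      have hd : d = true := by
        have := congrArg List.head? heq
        simpa using this.symm
      apply hQ u' v a b ha (by simp only [List.cons_append, List.cons.injEq] at heq; exact heq.2) _ hv
      match u' with
      | [] => simp
      | e :: u'' =>
        rwa [show d :: e :: u'' = [d] ++ (e :: u'') from rfl,
          List.getLast?_append_of_ne_nil _ (by simp)] at hu

/-- prepend a false to a q-decreasing word not starting with true -/
lemma qdec_cons_false {q : ℝ} (hq : 0 < q) {w : List Bool}
    (hw : w.head? ≠ some true) (hQ : QDecreasing q w) :
    QDecreasing q (false :: w) := by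
  intro u v a b ha heq hu hv
  match u with
  | [] =>
    simp only [List.nil_append] at heq
    rcases Nat.eq_zero_or_pos b with hb | hb
    · subst hb; have : (0:ℝ) < q * a := by positivity
      simpa using this
    · match a, ha with
      | a + 1, _ =>
        rw [List.replicate_succ, List.cons_append, List.cons_append] at heq
        have heq' : w = List.replicate a false ++ List.replicate b true ++ v := by
          simp only [List.cons_append, List.cons.injEq, true_and, List.append_assoc] at heq
          simpa using heq
        have ha' : 0 < a := by
          rcases Nat.eq_zero_or_pos a with h0 | h0
          · exfalso; apply hw
            subst h0
            rw [heq']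
            match b, hb with
            | b + 1, _ => simp [List.replicate_succ]
          · exact h0
        have := hQ [] v a b ha' (by simpa using heq') (by simp) hv
        have : q * a > b := this
        push_cast
        nlinarith
  | d :: u' =>
    have hd : d = false := by
      have := congrArg List.head? heq
      simpa using this.symm
    have hu' : u' ≠ [] := by
      rintro rfl; subst hd; simp at hu
    apply hQ u' v a b ha (by simp only [List.cons_append, List.cons.injEq] at heq; exact heq.2) _ hv
    rwa [show d :: u' = [d] ++ u' from rfl,
      List.getLast?_append_of_ne_nil _ hu'] at hu

end QDecAux

namespace QDecAux

lemma getLast?_rep_true (b : ℕ) (hb : 0 < b) :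
    (List.replicate b true).getLast? = some true := by
  match b, hb with
  | b + 1, _ => rw [List.replicate_succ' (n := b)]; exact List.getLast?_concat

lemma qdec_block {q : ℝ} (hq : 0 < q) {a b : ℕ} (ha : 0 < a) (hb : 0 < b)
    (hab : q * a > b) {w'' : List Bool} (hw : w''.head? ≠ some true)
    (hQ : QDecreasing q w'') :
    QDecreasing q (List.replicate a false ++ List.replicate b true ++ w'') := by
  intro u v a' b' ha' heq hu hv
  rcases eq_or_ne u [] with rfl | hune
  · simp only [List.nil_append] at heq
    rcases Nat.eq_zero_or_pos b' with rfl | hb'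
    · have : (0:ℝ) < q * a' := by positivity
      simpa using this
    · have heq' : List.replicate a false ++ (List.replicate b true ++ w'')
          = List.replicate a' false ++ (List.replicate b' true ++ v) := by
        simpa [List.append_assoc] using heq
      have hx : (List.replicate b true ++ w'').head? ≠ some false := by
        match b, hb with
        | b + 1, _ => simp [List.replicate_succ]
      have hy : (List.replicate b' true ++ v).head? ≠ some false := by
        match b', hb' with
        | b' + 1, _ => simp [List.replicate_succ]
      obtain ⟨haa, hxy⟩ := peel false a a' _ _ hx hy heq'
      obtain ⟨hbb, -⟩ := peel true b b' _ _ hw hv hxy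
      subst haa; subst hbb; exact hab
  · simp only [List.append_assoc] at heq
    obtain ⟨u₂, hu2eq, heq2, hu2ne, hu2last⟩ :=
      peelL false a (List.replicate b true ++ w'') u
        (List.replicate a' false ++ (List.replicate b' true ++ v)) heq hu hune
    have ht : (List.replicate a' false ++ (List.replicate b' true ++ v)).head? ≠ some true := by
      match a', ha' with
      | a' + 1, _ => simp [List.replicate_succ]
    obtain ⟨u₃, hu3eq, heq3⟩ := peelH true b w'' u₂ _ heq2 ht
    apply hQ u₃ v a' b' ha' (by simpa [List.append_assoc] using heq3) _ hv
    rcases eq_or_ne u₃ [] with rfl | hu3ne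
    · simp
    · have : u₃.getLast? = u₂.getLast? := by
        rw [hu3eq, List.getLast?_append_of_ne_nil _ hu3ne]
      rw [this, hu2last]; exact hu

lemma qdec_split {q : ℝ} (hq : 0 < q) {a b : ℕ} {w'' : List Bool} (ha : 0 < a)
    (hw : w''.head? ≠ some true) (hb0 : b = 0 → w'' = [])
    (hQ : QDecreasing q (List.replicate a false ++ List.replicate b true ++ w'')) :
    q * a > b ∧ QDecreasing q w'' := by
  constructor
  · exact hQ [] w'' a b ha (by simp [List.append_assoc]) (by simp) hw
  · intro u v a' b' ha' heq hu hv
    apply hQ (List.replicate a false ++ List.replicate b true ++ u) v a' b' ha'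
      (by rw [heq]; simp [List.append_assoc]) _ hv
    rcases eq_or_ne u [] with rfl | hune
    · rcases Nat.eq_zero_or_pos b with rfl | hbpos
      · exfalso
        rw [hb0 rfl] at heq
        have := congrArg List.length heq
        simp at this
        omega
      · rw [List.append_nil,
          List.getLast?_append_of_ne_nil _
            (List.ne_nil_of_length_pos (by simpa using hbpos)),
          getLast?_rep_true b hbpos]
        simp
    · rw [List.getLast?_append_of_ne_nil _ hune]
      exact hu

def lead (c : Bool) : List Bool → ℕ
  | [] => 0
  | d :: t => if d = c then lead c t + 1 else 0

lemma lead_spec (c : Bool) : ∀ w : List Bool,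
    ∃ w', w = List.replicate (lead c w) c ++ w' ∧ w'.head? ≠ some c := by
  intro w
  induction w with
  | nil => exact ⟨[], by simp [lead], by simp⟩
  | cons d t ih =>
    by_cases hd : d = c
    · obtain ⟨w', h1, h2⟩ := ih
      refine ⟨w', ?_, h2⟩
      rw [show lead c (d :: t) = lead c t + 1 by simp [lead, hd],
        List.replicate_succ, List.cons_append, ← h1, hd]
    · exact ⟨d :: t, by simp [lead, hd], by simp [hd]⟩

end QDecAux

namespace QDecAux

noncomputable def f (q : ℝ) : ℕ → List Bool := fun i =>
  List.replicate (1 + ⌊(i : ℝ) / q⌋₊) false ++ List.replicate i true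

lemma flat_head (q : ℝ) : ∀ L : List ℕ, ((L.map (f q)).flatten).head? ≠ some true := by
  intro L
  match L with
  | [] => simp
  | i :: L =>
    have h1 : (1 + ⌊(i : ℝ) / q⌋₊) = ⌊(i : ℝ) / q⌋₊ + 1 := Nat.add_comm _ _
    simp [f, h1, List.replicate_succ]

lemma suff_flat {q : ℝ} (hq : 0 < q) : ∀ L : List ℕ, QDecreasing q ((L.map (f q)).flatten) := by
  intro L
  induction L with
  | nil => simpa using qdec_nil q
  | cons i L ih =>
    rcases Nat.eq_zero_or_pos i with rfl | hi
    · have h0 : f q 0 = [false] := by simp [f]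
      have hg : (((0 : ℕ) :: L).map (f q)).flatten = false :: (L.map (f q)).flatten := by
        simp [h0]
      rw [hg]
      exact qdec_cons_false hq (flat_head q L) ih
    · have hg : ((i :: L).map (f q)).flatten
          = List.replicate (1 + ⌊(i : ℝ) / q⌋₊) false ++ List.replicate i true
              ++ (L.map (f q)).flatten := by
        simp [f]
      rw [hg]
      refine qdec_block hq (by omega) hi ?_ (flat_head q L) ih
      rw [floor_iff hq]
      omega

lemma suff {q : ℝ} (hq : 0 < q) (m : ℕ) (L : List ℕ) :
    QDecreasing q (List.replicate m true ++ (L.map (f q)).flatten) := by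
  induction m with
  | zero => simpa using suff_flat hq L
  | succ m ih =>
    rw [List.replicate_succ, List.cons_append]
    exact qdec_cons_true.mpr ih

lemma flat_rep (k : ℕ) :
    (List.replicate k ([false] : List Bool)).flatten = List.replicate k false := by
  induction k with
  | zero => simp
  | succ k ih => simp [List.replicate_succ, ih]

lemma nec {q : ℝ} (hq : 0 < q) : ∀ n (w : List Bool), w.length = n → QDecreasing q w →
    ∃ (m : ℕ) (L : List ℕ), w = List.replicate m true ++ (L.map (f q)).flatten := by
  intro n
  induction n using Nat.strong_induction_on with
  | _ n ih =>
    intro w hlen hQ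
    match w with
    | [] => exact ⟨0, [], by simp⟩
    | true :: w' =>
      obtain ⟨m, L, h⟩ := ih w'.length (by simp at hlen; omega) w' rfl (qdec_cons_true.mp hQ)
      exact ⟨m + 1, L, by rw [List.replicate_succ, List.cons_append, ← h]⟩
    | false :: w' =>
      obtain ⟨w₁, h1, h1h⟩ := lead_spec false (false :: w')
      obtain ⟨w'', h2, h2h⟩ := lead_spec true w₁
      set a := lead false (false :: w') with ha_def
      set b := lead true w₁ with hb_def
      have ha : 0 < a := by rw [ha_def]; simp [lead]
      have hb0 : b = 0 → w'' = [] := by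
        intro hb
        rw [hb] at h2
        simp only [List.replicate_zero, List.nil_append] at h2
        subst h2
        match w₁, h1h, h2h with
        | [], _, _ => rfl
        | false :: t, hh1, _ => simp at hh1
        | true :: t, _, hh2 => simp at hh2
      have heqw : false :: w' = List.replicate a false ++ List.replicate b true ++ w'' := by
        rw [h1, h2, List.append_assoc]
      obtain ⟨hab, hQ''⟩ := qdec_split hq ha h2h hb0 (heqw ▸ hQ)
      have hlen'' : w''.length < n := by
        have hl := congrArg List.length heqw
        simp at hl hlen
        omega
      obtain ⟨m'', L'', hdec⟩ := ih w''.length hlen'' w'' rfl hQ''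
      have hm0 : m'' = 0 := by
        rcases Nat.eq_zero_or_pos m'' with h0 | h0
        · exact h0
        · exfalso; apply h2h
          rw [hdec]
          match m'', h0 with
          | m'' + 1, _ => simp [List.replicate_succ]
      rw [hm0] at hdec
      simp only [List.replicate_zero, List.nil_append] at hdec
      have hfloor : ⌊(b : ℝ) / q⌋₊ < a := (floor_iff hq a b).mp hab
      refine ⟨0, List.replicate (a - (1 + ⌊(b : ℝ) / q⌋₊)) 0 ++ b :: L'', ?_⟩
      have hf0 : f q 0 = [false] := by simp [f]
      rw [heqw, hdec]
      simp only [List.map_append, List.map_replicate, List.map_cons, hf0,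
        List.flatten_append, List.flatten_cons, flat_rep, List.replicate_zero,
        List.nil_append]
      rw [show a = (a - (1 + ⌊(b : ℝ) / q⌋₊)) + (1 + ⌊(b : ℝ) / q⌋₊) by omega,
        List.replicate_add]
      simp only [f, List.append_assoc]
      rw [List.replicate_add, List.append_assoc]
      rw [show a - (1 + ⌊(b : ℝ) / q⌋₊) + (1 + ⌊(b : ℝ) / q⌋₊) - (1 + ⌊(b : ℝ) / q⌋₊)
            = a - (1 + ⌊(b : ℝ) / q⌋₊) from by omega]

end QDecAux

/-- A word `w` is `q`-decreasing iff `w = 1^m · s_1 · s_2 ⋯ s_k` where each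
`s_j` is of the form `0^(1+⌊i/q⌋) 1^i` for some `i ≥ 0`. -/
theorem stmt_4 (q : ℝ) (hq : 0 < q) (w : List Bool) :
    QDecreasing q w ↔
      ∃ (m : ℕ) (L : List ℕ),
        w = List.replicate m true ++
          (L.map (fun (i : ℕ) =>
            List.replicate (1 + ⌊(i : ℝ) / q⌋₊) false ++
              List.replicate i true)).flatten := by
  constructor
  · intro h
    obtain ⟨m, L, hh⟩ := QDecAux.nec hq w.length w rfl h
    exact ⟨m, L, hh⟩
  · rintro ⟨m, L, rfl⟩
    have := QDecAux.suff hq m L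
    exact this
end

section
/- For q = 2, the number of q-decreasing binary words of length n satisfies the tribonacci recurrence: |W_{2,n}| = |W_{2,n-1}| + |W_{2,n-2}| + |W_{2,n-3}| for n ≥ 3, with |W_{2,0}|=1, |W_{2,1}|=2, |W_{2,2}|=4. -/
/-- The number of `2`-decreasing binary words of length `n`. -/
noncomputable def W2 (n : ℕ) : ℕ :=
  Nat.card {w : List Bool // w.length = n ∧ QDecreasing 2 w}

open List

lemma cast_goal {p q : ℕ} (h : q < 2 * p) : (2:ℝ) * p > q := by
  have : (q:ℝ) < ((2*p : ℕ) : ℝ) := by exact_mod_cast h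
  push_cast at this; linarith

lemma rep_head (n : ℕ) (b : Bool) (hn : 0 < n) (X : List Bool) :
    (List.replicate n b ++ X).head? = some b := by
  cases n with
  | zero => omega
  | succ n => simp [List.replicate_succ]

lemma rep_prefix_le {c : Bool} {p a : ℕ} {X Y : List Bool}
    (h : List.replicate p c ++ X = List.replicate a c ++ Y) (hpa : p ≤ a) :
    X = List.replicate (a - p) c ++ Y := by
  have : List.replicate a c = List.replicate p c ++ List.replicate (a - p) c := by
    rw [← List.replicate_add]; congr 1; omega
  rw [this, List.append_assoc] at h
  exact List.append_cancel_left h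

lemma strip_true : ∀ (b : ℕ) (u X v : List Bool),
    u ++ X = List.replicate b true ++ v → X.head? = some false →
    ∃ u₂, u = List.replicate b true ++ u₂ ∧ v = u₂ ++ X := by
  intro b
  induction b with
  | zero =>
    intro u X v h _
    exact ⟨u, by simp, by simpa using h.symm⟩
  | succ b ih =>
    intro u X v h hX
    cases u with
    | nil =>
      simp only [List.nil_append] at h
      rw [h, List.replicate_succ] at hX
      simp at hX
    | cons c u' =>
      rw [List.replicate_succ] at h
      simp only [List.cons_append, List.cons.injEq] at h
      obtain ⟨rfl, h⟩ := h
      obtain ⟨u₂, hu₂, hv⟩ := ih u' X v h hX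
      exact ⟨u₂, by rw [List.replicate_succ, List.cons_append, hu₂], hv⟩

lemma strip_block : ∀ (a : ℕ) (b : ℕ) (u X v : List Bool),
    u ++ X = List.replicate a false ++ (List.replicate b true ++ v) →
    X.head? = some false → u.getLast? ≠ some false → (u = [] → a = 0) →
    ∃ u₂, u = List.replicate a false ++ List.replicate b true ++ u₂ ∧ v = u₂ ++ X := by
  intro a
  induction a with
  | zero =>
    intro b u X v h hX _ _
    obtain ⟨u₂, hu₂, hv⟩ := strip_true b u X v (by simpa using h) hX
    exact ⟨u₂, by simpa using hu₂, hv⟩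
  | succ a ih =>
    intro b u X v h hX hu h0
    cases u with
    | nil => exact absurd (h0 rfl) (by omega)
    | cons c u' =>
      rw [List.replicate_succ] at h
      simp only [List.cons_append, List.cons.injEq] at h
      obtain ⟨rfl, h⟩ := h
      cases u' with
      | nil =>
        simp only [List.nil_append] at h
        rw [h] at hX
        simp at hu
      | cons d u'' =>
        have hlast : (false :: d :: u'').getLast? = (d :: u'').getLast? := by
          simp [List.getLast?_cons_cons]
        obtain ⟨u₂, hu₂, hv⟩ := ih b (d :: u'') X v h hX (by rw [hlast] at hu; exact hu)
          (by simp)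
        refine ⟨u₂, ?_, hv⟩
        rw [List.replicate_succ, List.cons_append, hu₂]; simp [List.append_assoc]

lemma qd_nil : QDecreasing 2 [] := by
  intro u v a b ha h _ _
  exfalso
  have := congrArg List.length h
  simp at this; omega

lemma qd_strip (z w : List Bool) (hz : z.getLast? = some true)
    (h : QDecreasing 2 (z ++ w)) : QDecreasing 2 w := by
  intro u v a b ha hw hu hv
  refine h (z ++ u) v a b ha (by rw [hw]; simp) ?_ hv
  cases u with
  | nil => simp [hz]
  | cons c u' =>
    rw [List.getLast?_append_of_ne_nil _ (by simp : (c :: u') ≠ [])]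
    exact hu

lemma qd_cons_true {w : List Bool} (h : QDecreasing 2 w) : QDecreasing 2 (true :: w) := by
  intro u v a b ha hw hu hv
  cases u with
  | nil =>
    simp only [List.nil_append] at hw
    have : (true :: w).head? = some false := by
      rw [hw, List.append_assoc]; exact rep_head a false ha _
    simp at this
  | cons c u' =>
    simp only [List.cons_append, List.cons.injEq] at hw
    obtain ⟨rfl, hw⟩ := hw
    refine h u' v a b ha hw ?_ hv
    cases u' with
    | nil => simp
    | cons d u'' => rwa [List.getLast?_cons_cons] at hu

lemma qd_strip_true {w : List Bool} (h : QDecreasing 2 (true :: w)) : QDecreasing 2 w := by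
  intro u v a b ha hw hu hv
  refine h (true :: u) v a b ha (by rw [hw]; simp) ?_ hv
  cases u with
  | nil => simp
  | cons d u'' => rwa [List.getLast?_cons_cons]

lemma qd_extract {a b : ℕ} {v : List Bool} (ha : 0 < a) (hv : v.head? ≠ some true)
    (h : QDecreasing 2 (List.replicate a false ++ List.replicate b true ++ v)) :
    b < 2 * a := by
  have := h [] v a b ha (by simp) (by simp) hv
  have h2 : (b:ℝ) < ((2*a : ℕ):ℝ) := by push_cast; linarith
  exact_mod_cast h2

lemma qd_block {a b : ℕ} {v : List Bool} (ha : 0 < a) (hb : b < 2 * a)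
    (hv : v.head? ≠ some true) (hb0 : b = 0 → v = []) (h : QDecreasing 2 v) :
    QDecreasing 2 (List.replicate a false ++ List.replicate b true ++ v) := by
  intro u v' p q hp hw hu hv'
  rw [List.append_assoc] at hw
  by_cases hu0 : u = []
  · subst hu0
    simp only [List.nil_append] at hw
    rcases le_or_gt p a with hpa | hap
    · have hX : List.replicate q true ++ v' =
          List.replicate (a - p) false ++ (List.replicate b true ++ v) := by
        have := rep_prefix_le (a := a) (p := p) (c := false)
          (X := List.replicate q true ++ v') (Y := List.replicate b true ++ v)
          (by simpa [List.append_assoc] using hw.symm) hpa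
        simpa [List.append_assoc] using this
      by_cases hap0 : a - p = 0
      · have hpa' : p = a := by omega
        rw [hap0, List.replicate_zero, List.nil_append] at hX
        rcases lt_trichotomy q b with hqb | rfl | hbq
        · have := rep_prefix_le (c := true) hX (by omega)
          rw [this] at hv'
          exact absurd (rep_head (b - q) true (by omega) v) hv'
        · exact cast_goal (by omega)
        · have := rep_prefix_le (c := true) hX.symm (by omega)
          rw [this] at hv
          exact absurd (rep_head (q - b) true (by omega) v') hv
      · -- a - p > 0 : q must be 0
        rcases Nat.eq_zero_or_pos q with rfl | hq
        · exact cast_goal (by omega)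
        · exfalso
          have h1 : (List.replicate q true ++ v').head? = some true := rep_head q true hq v'
          have h2 : (List.replicate (a-p) false ++ (List.replicate b true ++ v)).head? = some false :=
            rep_head (a-p) false (by omega) _
          rw [hX] at h1; rw [h1] at h2; simp at h2
    · -- a < p
      exfalso
      have hX : List.replicate (p - a) false ++ (List.replicate q true ++ v') =
          List.replicate b true ++ v := by
        have := rep_prefix_le (a := p) (p := a) (c := false)
          (Y := List.replicate q true ++ v') (X := List.replicate b true ++ v)
          (by simpa [List.append_assoc] using hw) (by omega)
        rw [this]
      rcases Nat.eq_zero_or_pos b with rfl | hbpos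
      · have hv0 : v = [] := hb0 rfl
        subst hv0
        have := congrArg List.length hX
        simp at this; omega
      · have h1 : (List.replicate (p-a) false ++ (List.replicate q true ++ v')).head? = some false :=
          rep_head (p-a) false (by omega) _
        rw [hX] at h1
        rw [rep_head b true hbpos v] at h1
        simp at h1
  · -- u nonempty: factor is inside v
    obtain ⟨u₂, hu₂, hv₂⟩ := strip_block a b u
      (List.replicate p false ++ List.replicate q true ++ v') v
      (by simpa [List.append_assoc] using hw.symm)
      (by rw [List.append_assoc]; exact rep_head p false hp _)
      hu (fun h => absurd h hu0)
    refine h u₂ v' p q hp (by rw [hv₂]; simp [List.append_assoc]) ?_ hv'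
    cases u₂ with
    | nil => simp
    | cons d u'' =>
      rw [hu₂, List.getLast?_append_of_ne_nil _ (by simp : (d :: u'') ≠ [])] at hu
      exact hu

inductive Blk : Type where
  | last (a b : ℕ) : Blk
  | cons (a b : ℕ) (rest : Blk) : Blk

namespace Blk

def valid : Blk → Prop
  | last a b => 0 < a ∧ b < 2 * a
  | cons a b r => 0 < a ∧ 0 < b ∧ b < 2 * a ∧ valid r

def blen : Blk → ℕ
  | last a b => a + b
  | cons a b r => a + b + blen r

def toList : Blk → List Bool
  | last a b => List.replicate a false ++ List.replicate b true
  | cons a b r => List.replicate a false ++ List.replicate b true ++ toList r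

lemma blen_pos {B : Blk} (h : valid B) : 0 < blen B := by
  cases B with
  | last a b => exact Nat.lt_of_lt_of_le h.1 (Nat.le_add_right _ _)
  | cons a b r => exact Nat.lt_of_lt_of_le h.1 (by simp [blen]; omega)

lemma toList_length {B : Blk} : (toList B).length = blen B := by
  induction B with
  | last a b => simp [toList, blen]
  | cons a b r ih => simp [toList, blen, ih]; omega

lemma toList_head {B : Blk} (h : valid B) : (toList B).head? = some false := by
  cases B with
  | last a b => rw [toList, rep_head a false h.1]
  | cons a b r => rw [toList, List.append_assoc, rep_head a false h.1]

lemma toList_ne_nil {B : Blk} (h : valid B) : toList B ≠ [] := by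
  intro hn
  have := toList_head h
  rw [hn] at this; simp at this

lemma toList_qd {B : Blk} (h : valid B) : QDecreasing 2 (toList B) := by
  induction B with
  | last a b =>
    have : toList (last a b) = List.replicate a false ++ List.replicate b true ++ [] := by
      simp [toList]
    rw [this]
    exact qd_block h.1 h.2 (by simp) (fun _ => rfl) qd_nil
  | cons a b r ih =>
    obtain ⟨ha, hb, hab, hr⟩ := h
    rw [toList]
    exact qd_block ha hab (by rw [toList_head hr]; simp) (fun h0 => absurd h0 (by omega))
      (ih hr)

lemma rep_cancel {c : Bool} : ∀ (a₁ a₂ : ℕ) (X Y : List Bool),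
    List.replicate a₁ c ++ X = List.replicate a₂ c ++ Y →
    X.head? ≠ some c → Y.head? ≠ some c → a₁ = a₂ ∧ X = Y := by
  intro a₁
  induction a₁ with
  | zero =>
    intro a₂ X Y h hX hY
    rcases Nat.eq_zero_or_pos a₂ with rfl | ha₂
    · constructor; rfl; simpa using h
    · exfalso; apply hX; simp only [List.replicate_zero, List.nil_append] at h
      rw [h]; exact rep_head a₂ c ha₂ Y
  | succ a₁ ih =>
    intro a₂ X Y h hX hY
    rcases Nat.eq_zero_or_pos a₂ with rfl | ha₂
    · exfalso; apply hY; simp only [List.replicate_zero, List.nil_append] at h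
      rw [← h]; exact rep_head (a₁+1) c (by omega) X
    · obtain ⟨a₂', rfl⟩ : ∃ a₂', a₂ = a₂' + 1 := ⟨a₂ - 1, by omega⟩
      rw [List.replicate_succ, List.replicate_succ] at h
      simp only [List.cons_append, List.cons.injEq, true_and] at h
      obtain ⟨h1, h2⟩ := ih a₂' X Y h hX hY
      exact ⟨by omega, h2⟩

lemma block_cancel {a b a' b' : ℕ} {t t' : List Bool}
    (h : List.replicate a false ++ (List.replicate b true ++ t)
       = List.replicate a' false ++ (List.replicate b' true ++ t'))
    (hb : b = 0 → t.head? ≠ some false) (ht : t.head? ≠ some true)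
    (hb' : b' = 0 → t'.head? ≠ some false) (ht' : t'.head? ≠ some true) :
    a = a' ∧ b = b' ∧ t = t' := by
  obtain ⟨ha, h2⟩ := rep_cancel a a' _ _ h
    (by rcases Nat.eq_zero_or_pos b with rfl|hbp
        · simpa using hb rfl
        · rw [rep_head b true hbp]; simp)
    (by rcases Nat.eq_zero_or_pos b' with rfl|hbp
        · simpa using hb' rfl
        · rw [rep_head b' true hbp]; simp)
  obtain ⟨hbe, h3⟩ := rep_cancel b b' _ _ h2 ht ht'
  exact ⟨ha, hbe, h3⟩

lemma toList_inj : ∀ (B C : Blk), valid B → valid C → toList B = toList C → B = C := by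
  intro B
  induction B with
  | last a b =>
    intro C hB hC h
    cases C with
    | last a' b' =>
      have h' : List.replicate a false ++ (List.replicate b true ++ ([] : List Bool))
          = List.replicate a' false ++ (List.replicate b' true ++ ([] : List Bool)) := by
        simpa [toList, List.append_assoc] using h
      obtain ⟨ha, hbe, -⟩ := block_cancel h' (fun _ => by simp) (by simp)
        (fun _ => by simp) (by simp)
      rw [ha, hbe]
    | cons a' b' r =>
      exfalso
      have h' : List.replicate a false ++ (List.replicate b true ++ ([] : List Bool))
          = List.replicate a' false ++ (List.replicate b' true ++ toList r) := by
        simpa [toList, List.append_assoc] using h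
      obtain ⟨-, -, h3⟩ := block_cancel h' (fun _ => by simp) (by simp)
        (fun h0 => absurd h0 (by have := hC.2.1; omega))
        (by rw [toList_head hC.2.2.2]; simp)
      exact toList_ne_nil hC.2.2.2 h3.symm
  | cons a b r ih =>
    intro C hB hC h
    cases C with
    | last a' b' =>
      exfalso
      have h' : List.replicate a false ++ (List.replicate b true ++ toList r)
          = List.replicate a' false ++ (List.replicate b' true ++ ([] : List Bool)) := by
        simpa [toList, List.append_assoc] using h
      obtain ⟨-, -, h3⟩ := block_cancel h'
        (fun h0 => absurd h0 (by have := hB.2.1; omega))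
        (by rw [toList_head hB.2.2.2]; simp)
        (fun _ => by simp) (by simp)
      exact toList_ne_nil hB.2.2.2 h3
    | cons a' b' r' =>
      have h' : List.replicate a false ++ (List.replicate b true ++ toList r)
          = List.replicate a' false ++ (List.replicate b' true ++ toList r') := by
        simpa [toList, List.append_assoc] using h
      obtain ⟨ha, hbe, h3⟩ := block_cancel h'
        (fun h0 => absurd h0 (by have := hB.2.1; omega))
        (by rw [toList_head hB.2.2.2]; simp)
        (fun h0 => absurd h0 (by have := hC.2.1; omega))
        (by rw [toList_head hC.2.2.2]; simp)
      rw [ha, hbe, ih r' hB.2.2.2 hC.2.2.2 h3]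

end Blk

namespace Blk

lemma head?_ne_of_dropWhile (p : Bool → Bool) (l : List Bool) (c : Bool) (hc : p c = true) :
    (l.dropWhile p).head? ≠ some c := by
  have h := List.head?_dropWhile_not p l
  intro hh
  rw [hh] at h
  simp only at h
  rw [hc] at h
  simp at h

lemma parse_exists : ∀ (n : ℕ) (w : List Bool), w.length ≤ n → QDecreasing 2 w →
    w.head? = some false → ∃ B, Blk.valid B ∧ Blk.toList B = w := by
  intro n
  induction n with
  | zero =>
    intro w hl _ hh
    interval_cases h : w.length
    · rw [List.length_eq_zero_iff] at h; subst h; simp at hh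
  | succ n ih =>
    intro w hl hqd hh
    set t1 := w.takeWhile (!·) with ht1
    set d1 := w.dropWhile (!·) with hd1
    set a := t1.length with ha'
    have ht1r : t1 = List.replicate a false := by
      apply List.eq_replicate_of_mem
      intro x hx
      have := List.mem_takeWhile_imp hx
      simpa using this
    have hw1 : w = t1 ++ d1 := (List.takeWhile_append_dropWhile ..).symm
    have ha : 0 < a := by
      cases w with
      | nil => simp at hh
      | cons c w' =>
        simp at hh
        subst hh
        rw [ha', ht1]
        simp
    have hd1h : d1.head? ≠ some false := head?_ne_of_dropWhile (!·) w false (by simp)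
    set t2 := d1.takeWhile (·) with ht2
    set v := d1.dropWhile (·) with hv'
    set b := t2.length with hb'
    have ht2r : t2 = List.replicate b true := by
      apply List.eq_replicate_of_mem
      intro x hx
      have := List.mem_takeWhile_imp hx
      simpa using this
    have hd2 : d1 = t2 ++ v := (List.takeWhile_append_dropWhile ..).symm
    have hvh : v.head? ≠ some true := head?_ne_of_dropWhile (·) d1 true (by simp)
    have hw : w = List.replicate a false ++ List.replicate b true ++ v := by
      rw [hw1, hd2, ht1r, ht2r, List.append_assoc]
    have hb : b < 2 * a := qd_extract ha hvh (by rw [← hw]; exact hqd)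
    rcases List.eq_nil_or_concat v with hv0 | ⟨l', x, hvc⟩
    · refine ⟨last a b, ⟨ha, hb⟩, ?_⟩
      rw [toList, hw, hv0, List.append_nil]
    · have hvne : v ≠ [] := by rw [hvc]; simp
      have hvhead : v.head? = some false := by
        cases hcv : v.head? with
        | none => exact absurd (List.head?_eq_none_iff.mp hcv) hvne
        | some c =>
          cases c
          · rfl
          · exact absurd hcv hvh
      have hb0 : 0 < b := by
        rcases Nat.eq_zero_or_pos b with h0 | h'
        · exfalso
          have : t2 = [] := List.length_eq_zero_iff.mp (by rw [← hb', h0])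
          rw [this, List.nil_append] at hd2
          rw [← hd2] at hvhead
          exact hd1h hvhead
        · exact h'
      have hqdv : QDecreasing 2 v := by
        apply qd_strip (List.replicate a false ++ List.replicate b true) v
        · obtain ⟨b'', hb''⟩ : ∃ b'', b = b'' + 1 := ⟨b - 1, by omega⟩
          rw [hb'', List.replicate_succ', ← List.append_assoc, List.getLast?_concat]
        · rw [← hw]; exact hqd
      have hvlen : v.length ≤ n := by
        have := congrArg List.length hw
        simp at this
        omega
      obtain ⟨B', hB'v, hB'l⟩ := ih v hvlen hqdv hvhead
      refine ⟨cons a b B', ⟨ha, hb0, hb, hB'v⟩, ?_⟩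
      rw [toList, hB'l, hw]

end Blk

def WQSet (n : ℕ) := {w : List Bool // w.length = n ∧ QDecreasing 2 w}
def SQSet (n : ℕ) := {w : List Bool // w.length = n ∧ (QDecreasing 2 w ∧ w.head? = some false)}
def BQSet (n : ℕ) := {B : Blk // Blk.valid B ∧ Blk.blen B = n}

noncomputable def S2 (n : ℕ) : ℕ := Nat.card (SQSet n)

lemma finite_aux (n : ℕ) (P : List Bool → Prop) :
    Finite {w : List Bool // w.length = n ∧ P w} := by
  apply Finite.of_injective
    (fun x : {w : List Bool // w.length = n ∧ P w} =>
      (fun i : Fin n => x.1.get (Fin.cast x.2.1.symm i)))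
  intro x y h
  apply Subtype.ext
  apply List.ext_get (by rw [x.2.1, y.2.1])
  intro i h1 h2
  have := congrFun h ⟨i, by rw [← x.2.1]; exact h1⟩
  simpa using this

instance (n : ℕ) : Finite (WQSet n) := finite_aux n _
instance (n : ℕ) : Finite (SQSet n) := finite_aux n _

def BtoS (n : ℕ) (B : BQSet n) : SQSet n :=
  ⟨Blk.toList B.1, by rw [Blk.toList_length, B.2.2],
    Blk.toList_qd B.2.1, Blk.toList_head B.2.1⟩

lemma BtoS_bij (n : ℕ) : Function.Bijective (BtoS n) := by
  constructor
  · intro x y h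
    exact Subtype.ext (Blk.toList_inj _ _ x.2.1 y.2.1 (congrArg Subtype.val h))
  · intro w
    obtain ⟨B, hv, hl⟩ := Blk.parse_exists w.1.length w.1 le_rfl w.2.2.1 w.2.2.2
    exact ⟨⟨B, hv, by rw [← Blk.toList_length, hl, w.2.1]⟩, Subtype.ext hl⟩

instance (n : ℕ) : Finite (BQSet n) :=
  Finite.of_injective (BtoS n) (BtoS_bij n).1

lemma S2_eq_BSet (n : ℕ) : S2 n = Nat.card (BQSet n) :=
  (Nat.card_eq_of_bijective (BtoS n) (BtoS_bij n)).symm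

def WStep (n : ℕ) (x : WQSet n ⊕ SQSet (n+1)) : WQSet (n+1) :=
  match x with
  | Sum.inl w => ⟨true :: w.1, by simp [w.2.1], qd_cons_true w.2.2⟩
  | Sum.inr s => ⟨s.1, s.2.1, s.2.2.1⟩

lemma WStep_bij (n : ℕ) : Function.Bijective (WStep n) := by
  constructor
  · rintro (w₁ | s₁) (w₂ | s₂) h
    · have hv := congrArg Subtype.val h
      simp only [WStep] at hv
      rw [Sum.inl.injEq]
      exact Subtype.ext (by simpa using hv)
    · exfalso
      have := congrArg (fun z => (Subtype.val z).head?) h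
      simp only [WStep] at this
      rw [s₂.2.2.2] at this
      simp at this
    · exfalso
      have := congrArg (fun z => (Subtype.val z).head?) h
      simp only [WStep] at this
      rw [s₁.2.2.2] at this
      simp at this
    · have hv := congrArg Subtype.val h
      simp only [WStep] at hv
      rw [Sum.inr.injEq]
      exact Subtype.ext hv
  · intro w
    obtain ⟨l, hl, hqd⟩ := w
    cases l with
    | nil => simp at hl
    | cons c t =>
      cases c
      · exact ⟨Sum.inr ⟨false :: t, hl, hqd, rfl⟩, rfl⟩
      · exact ⟨Sum.inl ⟨t, by simpa using hl, qd_strip_true hqd⟩, rfl⟩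

lemma W2_succ (n : ℕ) : W2 (n+1) = W2 n + S2 (n+1) := by
  have h1 : W2 (n+1) = Nat.card (WQSet (n+1)) := rfl
  have h2 : W2 n = Nat.card (WQSet n) := rfl
  rw [h1, h2, S2, ← Nat.card_eq_of_bijective (WStep n) (WStep_bij n), Nat.card_sum]

namespace Blk

def first_a : Blk → ℕ | last a _ => a | cons a _ _ => a
def first_b : Blk → ℕ | last _ b => b | cons _ b _ => b

def bump : Blk → Blk | last a b => last (a+1) b | cons a b r => cons (a+1) b r
def dec : Blk → Blk | last a b => last (a-1) b | cons a b r => cons (a-1) b r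
def bump2 : Blk → Blk | last a b => last (a+1) (b+2) | cons a b r => cons (a+1) (b+2) r

def gam (B : Blk) : Blk :=
  if 2 * first_a B ≤ first_b B + 2 then bump2 B else cons 2 2 (dec B)

lemma fb_lt_fa {B : Blk} (h : valid B) : first_b B < 2 * first_a B := by
  cases B with
  | last a b => exact h.2
  | cons a b r => exact h.2.2.1

lemma fa_pos {B : Blk} (h : valid B) : 0 < first_a B := by
  cases B with
  | last a b => exact h.1
  | cons a b r => exact h.1

lemma valid_bump {B : Blk} (h : valid B) : valid (bump B) := by
  cases B with
  | last a b => exact ⟨by omega, by have := h.2; simp [bump, valid]; omega⟩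
  | cons a b r => exact ⟨by omega, h.2.1, by have := h.2.2.1; omega, h.2.2.2⟩

lemma blen_bump (B : Blk) : blen (bump B) = blen B + 1 := by
  cases B <;> simp [bump, blen] <;> omega

lemma valid_gam {B : Blk} (h : valid B) : valid (gam B) := by
  rw [gam]
  split_ifs with hc
  · cases B with
    | last a b => exact ⟨by omega, by have := h.2; simp [bump2, valid]; omega⟩
    | cons a b r => exact ⟨by omega, by have := h.2.1; omega, by have := h.2.2.1; omega, h.2.2.2⟩
  · have ha2 : 2 ≤ first_a B := by
      have := fb_lt_fa h
      omega
    refine ⟨by omega, by omega, by omega, ?_⟩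
    cases B with
    | last a b =>
      simp only [first_a, first_b] at hc ha2
      exact ⟨by omega, by have := h.2; simp [dec, valid]; omega⟩
    | cons a b r =>
      simp only [first_a, first_b] at hc ha2
      exact ⟨by omega, h.2.1, by have := h.2.2.1; simp [dec, valid]; omega, h.2.2.2⟩

lemma blen_gam {B : Blk} (h : valid B) : blen (gam B) = blen B + 3 := by
  rw [gam]
  split_ifs with hc
  · cases B <;> simp [bump2, blen] <;> omega
  · have ha2 : 2 ≤ first_a B := by have := fb_lt_fa h; omega
    cases B with
    | last a b =>
      simp only [first_a] at ha2
      simp [dec, blen]; omega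
    | cons a b r =>
      simp only [first_a] at ha2
      simp [dec, blen]; omega

end Blk

namespace Blk

@[simp] lemma fa_bump (B : Blk) : first_a (bump B) = first_a B + 1 := by cases B <;> rfl
@[simp] lemma fb_bump (B : Blk) : first_b (bump B) = first_b B := by cases B <;> rfl
@[simp] lemma fa_bump2 (B : Blk) : first_a (bump2 B) = first_a B + 1 := by cases B <;> rfl
@[simp] lemma fb_bump2 (B : Blk) : first_b (bump2 B) = first_b B + 2 := by cases B <;> rfl

lemma gam_class {B : Blk} (h : valid B) :
    2 * first_a (gam B) ≤ first_b (gam B) + 2 ∧ 2 ≤ first_a (gam B) := by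
  rw [gam]
  split_ifs with hc
  · simp only [fa_bump2, fb_bump2]
    have := fa_pos h
    omega
  · simp only [first_a, first_b]
    omega

lemma bump_class {B : Blk} (h : valid B) :
    first_b (bump B) + 3 ≤ 2 * first_a (bump B) ∧ 2 ≤ first_a (bump B) := by
  simp only [fa_bump, fb_bump]
  have := fb_lt_fa h
  have := fa_pos h
  omega

lemma dec_bump (B : Blk) : dec (bump B) = B := by cases B <;> simp [bump, dec]

end Blk

open Blk in
def PsiMap (n : ℕ) (x : BQSet (n+2) ⊕ BQSet (n+1) ⊕ BQSet n) : BQSet (n+3) :=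
  match x with
  | .inl B => ⟨bump B.1, valid_bump B.2.1, by rw [blen_bump, B.2.2]⟩
  | .inr (.inl B) => ⟨Blk.cons 1 1 B.1, ⟨one_pos, one_pos, by omega, B.2.1⟩,
      by simp only [blen]; rw [B.2.2]; omega⟩
  | .inr (.inr B) => ⟨gam B.1, valid_gam B.2.1, by rw [blen_gam B.2.1, B.2.2]⟩

open Blk in
lemma PsiMap_inj (n : ℕ) : Function.Injective (PsiMap n) := by
  rintro (B₁ | B₁ | B₁) (B₂ | B₂ | B₂) h <;>
    have hv := congrArg Subtype.val h <;>
    simp only [PsiMap] at hv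
  · simp only [Sum.inl.injEq]
    apply Subtype.ext
    obtain ⟨C₁, hC₁⟩ := B₁; obtain ⟨C₂, hC₂⟩ := B₂
    cases C₁ <;> cases C₂ <;> simp_all [bump]
  · exfalso
    have h1 := (bump_class B₁.2.1).2
    rw [hv] at h1
    simp [first_a] at h1
  · exfalso
    have h1 := (bump_class B₁.2.1).1
    have h2 := (gam_class B₂.2.1).1
    have ha := congrArg first_a hv
    have hb := congrArg first_b hv
    omega
  · exfalso
    have h1 := (bump_class B₂.2.1).2
    rw [← hv] at h1
    simp [first_a] at h1
  · simp only [Sum.inr.injEq, Sum.inl.injEq]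
    apply Subtype.ext
    simpa using hv
  · exfalso
    have h2 := (gam_class B₂.2.1).2
    rw [← hv] at h2
    simp [first_a] at h2
  · exfalso
    have h1 := (bump_class B₂.2.1).1
    have h2 := (gam_class B₁.2.1).1
    have ha := congrArg first_a hv
    have hb := congrArg first_b hv
    omega
  · exfalso
    have h2 := (gam_class B₁.2.1).2
    rw [hv] at h2
    simp [first_a] at h2
  · -- gam vs gam
    simp only [Sum.inr.injEq]
    apply Subtype.ext
    obtain ⟨C₁, hC₁v, hC₁l⟩ := B₁; obtain ⟨C₂, hC₂v, hC₂l⟩ := B₂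
    simp only at hv ⊢
    rw [gam, gam] at hv
    split_ifs at hv with hc₁ hc₂ hc₂
    · cases C₁ <;> cases C₂ <;> simp_all [bump2]
    · -- bump2 C₁ = cons 2 2 (dec C₂) : impossible
      exfalso
      cases C₁ with
      | last a b =>
        simp only [bump2] at hv
        cases hv
      | cons a b r =>
        simp only [bump2] at hv
        have hb0 : 0 < b := hC₁v.2.1
        simp only [first_a, first_b] at hc₁
        injection hv with h1 h2 h3
        omega
    · exfalso
      cases C₂ with
      | last a b =>
        simp only [bump2] at hv
        cases hv
      | cons a b r =>
        simp only [bump2] at hv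
        have hb0 : 0 < b := hC₂v.2.1
        injection hv with h1 h2 h3
        omega
    · injection hv with h1 h2 h3
      have e1 := fa_pos hC₁v
      have e2 := fa_pos hC₂v
      cases C₁ <;> cases C₂ <;> simp_all [dec, first_a] <;> omega

open Blk in
lemma PsiMap_surj (n : ℕ) : Function.Surjective (PsiMap n) := by
  rintro ⟨C, hv, hl⟩
  cases C with
  | last a b =>
    have ha : 0 < a := hv.1
    have hb : b < 2*a := hv.2
    have hlen : a + b = n + 3 := hl
    by_cases hc : b + 3 ≤ 2*a
    · refine ⟨Sum.inl ⟨Blk.last (a-1) b, ⟨by omega, by omega⟩,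
        by simp only [blen]; omega⟩, ?_⟩
      apply Subtype.ext
      simp only [PsiMap, bump]
      rw [show a - 1 + 1 = a by omega]
    · refine ⟨Sum.inr (Sum.inr ⟨Blk.last (a-1) (b-2), ⟨by omega, by omega⟩,
        by simp only [blen]; omega⟩), ?_⟩
      apply Subtype.ext
      simp only [PsiMap, gam]
      rw [if_pos (by simp only [first_a, first_b]; omega)]
      simp only [bump2]
      rw [show a - 1 + 1 = a by omega, show b - 2 + 2 = b by omega]
  | cons a b r =>
    obtain ⟨ha, hb0, hb, hr⟩ := hv
    have hlen : a + b + blen r = n + 3 := hl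
    have hrpos := blen_pos hr
    by_cases h1 : a = 1
    · subst h1
      have hb1 : b = 1 := by omega
      subst hb1
      exact ⟨Sum.inr (Sum.inl ⟨r, hr, by omega⟩), rfl⟩
    · by_cases h2 : b + 3 ≤ 2*a
      · refine ⟨Sum.inl ⟨Blk.cons (a-1) b r, ⟨by omega, hb0, by omega, hr⟩,
          by simp only [blen]; omega⟩, ?_⟩
        apply Subtype.ext
        simp only [PsiMap, bump]
        rw [show a - 1 + 1 = a by omega]
      · by_cases h3 : 3 ≤ b
        · refine ⟨Sum.inr (Sum.inr ⟨Blk.cons (a-1) (b-2) r, ⟨by omega, by omega, by omega, hr⟩,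
            by simp only [blen]; omega⟩), ?_⟩
          apply Subtype.ext
          simp only [PsiMap, gam]
          rw [if_pos (by simp only [first_a, first_b]; omega)]
          simp only [bump2]
          rw [show a - 1 + 1 = a by omega, show b - 2 + 2 = b by omega]
        · have ha2 : a = 2 ∧ b = 2 := by omega
          obtain ⟨rfl, rfl⟩ := ha2
          refine ⟨Sum.inr (Sum.inr ⟨bump r, valid_bump hr, by rw [blen_bump]; omega⟩), ?_⟩
          apply Subtype.ext
          simp only [PsiMap, gam]
          rw [if_neg (by
            simp only [fa_bump, fb_bump]
            have := fb_lt_fa hr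
            omega)]
          rw [dec_bump]

lemma S2_rec (n : ℕ) : S2 (n+3) = S2 (n+2) + S2 (n+1) + S2 n := by
  rw [S2_eq_BSet, S2_eq_BSet, S2_eq_BSet, S2_eq_BSet,
    ← Nat.card_eq_of_bijective (PsiMap n) ⟨PsiMap_inj n, PsiMap_surj n⟩,
    Nat.card_sum, Nat.card_sum]
  omega

lemma S2_zero : S2 0 = 0 := by
  rw [S2_eq_BSet]
  have : IsEmpty (BQSet 0) := by
    constructor
    rintro ⟨B, hv, hl⟩
    have := Blk.blen_pos hv
    omega
  simp

lemma S2_one : S2 1 = 1 := by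
  rw [S2_eq_BSet]
  have : Unique (BQSet 1) := by
    refine ⟨⟨⟨Blk.last 1 0, ⟨one_pos, by omega⟩, rfl⟩⟩, ?_⟩
    rintro ⟨B, hv, hl⟩
    apply Subtype.ext
    cases B with
    | last a b =>
      simp only [Blk.blen] at hl
      have h1 := hv.1
      have h2 := hv.2
      simp only [default]
      have : a = 1 ∧ b = 0 := by omega
      rw [this.1, this.2]
    | cons a b r =>
      exfalso
      have := Blk.blen_pos hv.2.2.2
      simp only [Blk.blen] at hl
      have := hv.1
      have := hv.2.1
      omega
  exact Nat.card_unique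

lemma S2_two : S2 2 = 2 := by
  rw [S2_eq_BSet]
  rw [Nat.card_eq_two_iff]
  refine ⟨⟨Blk.last 1 1, (Blk.valid.eq_1 1 1).mpr ⟨one_pos, by omega⟩, (Blk.blen.eq_1 1 1).trans (by norm_num)⟩, ⟨Blk.last 2 0, (Blk.valid.eq_1 2 0).mpr ⟨by omega, by omega⟩, (Blk.blen.eq_1 2 0).trans (by norm_num)⟩,
    by intro h; have := congrArg Subtype.val h; simp at this, ?_⟩
  ext ⟨B, hv, hl⟩
  refine iff_of_true ?_ trivial; show _ = _ ∨ _ = _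
  cases B with
  | last a b =>
    simp only [Blk.blen] at hl
    have h1 := hv.1
    have h2 := hv.2
    rcases (by omega : a = 1 ∧ b = 1 ∨ a = 2 ∧ b = 0) with ⟨rfl, rfl⟩ | ⟨rfl, rfl⟩
    · left; rfl
    · right; rfl
  | cons a b r =>
    exfalso
    have := Blk.blen_pos hv.2.2.2
    simp only [Blk.blen] at hl
    have := hv.1
    have := hv.2.1
    omega

lemma W2_zero : W2 0 = 1 := by
  have : Unique (WQSet 0) := by
    refine ⟨⟨⟨[], rfl, qd_nil⟩⟩, ?_⟩
    rintro ⟨w, hl, hq⟩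
    apply Subtype.ext
    simpa using List.length_eq_zero_iff.mp hl
  rw [show W2 0 = Nat.card (WQSet 0) from rfl]
  exact Nat.card_unique

lemma claim2 (n : ℕ) : S2 (n+2) + S2 n = 2 * W2 n := by
  induction n with
  | zero => rw [S2_two, S2_zero, W2_zero]
  | succ n ih =>
    have h1 : S2 (n+1+2) = S2 (n+2) + S2 (n+1) + S2 n := S2_rec n
    have h2 : W2 (n+1) = W2 n + S2 (n+1) := W2_succ n
    omega

lemma W2_trib (n : ℕ) : W2 (n+3) = W2 (n+2) + W2 (n+1) + W2 n := by
  have h1 : W2 (n+3) = W2 (n+2) + S2 (n+3) := W2_succ (n+2)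
  have h2 : W2 (n+2) = W2 (n+1) + S2 (n+2) := W2_succ (n+1)
  have h3 : W2 (n+1) = W2 n + S2 (n+1) := W2_succ n
  have h4 := S2_rec n
  have h5 := claim2 n
  omega

/-- The number of `2`-decreasing words of length `n` satisfies the tribonacci
recurrence `|W_{2,n}| = |W_{2,n-1}| + |W_{2,n-2}| + |W_{2,n-3}|` for `n ≥ 3`,
with initial values `1, 2, 4`. -/
theorem stmt_8 :
    W2 0 = 1 ∧ W2 1 = 2 ∧ W2 2 = 4 ∧
      ∀ n : ℕ, 3 ≤ n → W2 n = W2 (n - 1) + W2 (n - 2) + W2 (n - 3) := by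
  have w0 : W2 0 = 1 := W2_zero
  have w1 : W2 1 = 2 := by
    have h := W2_succ 0
    rw [w0, S2_one] at h
    exact h
  have w2 : W2 2 = 4 := by
    have h := W2_succ 1
    rw [w1, S2_two] at h
    exact h
  refine ⟨w0, w1, w2, ?_⟩
  intro n hn
  obtain ⟨m, rfl⟩ : ∃ m, n = m + 3 := ⟨n - 3, by omega⟩
  rw [show m + 3 - 1 = m + 2 from rfl, show m + 3 - 2 = m + 1 from rfl,
    show m + 3 - 3 = m from rfl]
  exact W2_trib m
end

section
/- For every positive integer k, the number of k-decreasing binary words of length n equals the number of binary words of length n avoiding k+1 consecutive 1s. -/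
namespace Stmt9
open List


instance instFin (n : ℕ) (P : List Bool → Prop) :
    Finite {w : List Bool // w.length = n ∧ P w} := by
  have h : Finite {w : List Bool // w.length = n} := (List.finite_length_eq Bool n).to_subtype
  exact Finite.of_injective (fun x => (⟨x.1, x.2.1⟩ : {w : List Bool // w.length = n}))
    (fun a b hab => Subtype.ext (by simpa using congrArg Subtype.val hab))


lemma card_congr {n : ℕ} {P Q : List Bool → Prop}
    (h : ∀ w : List Bool, w.length = n → (P w ↔ Q w)) :
    Nat.card {w : List Bool // w.length = n ∧ P w} =
      Nat.card {w : List Bool // w.length = n ∧ Q w} :=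
  Nat.card_congr (Equiv.subtypeEquivRight fun w =>
    ⟨fun hw => ⟨hw.1, (h w hw.1).1 hw.2⟩, fun hw => ⟨hw.1, (h w hw.1).2 hw.2⟩⟩)

def consEquiv (n : ℕ) (P : List Bool → Prop) :
    {w : List Bool // w.length = n + 1 ∧ P w} ≃
      ({w : List Bool // w.length = n ∧ P (false :: w)} ⊕
        {w : List Bool // w.length = n ∧ P (true :: w)}) where
  toFun := fun x => match x with
    | ⟨[], h⟩ => absurd h.1 (by simp)
    | ⟨false :: w, h⟩ => Sum.inl ⟨w, by simpa using h⟩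
    | ⟨true :: w, h⟩ => Sum.inr ⟨w, by simpa using h⟩
  invFun := fun s => match s with
    | Sum.inl ⟨w, h⟩ => ⟨false :: w, by simpa using h⟩
    | Sum.inr ⟨w, h⟩ => ⟨true :: w, by simpa using h⟩
  left_inv := by
    rintro ⟨(_ | ⟨(_|_), w⟩), h⟩
    · exact absurd h.1 (by simp)
    · rfl
    · rfl
  right_inv := by rintro (⟨w, h⟩ | ⟨w, h⟩) <;> rfl

lemma card_cons (n : ℕ) (P : List Bool → Prop) :
    Nat.card {w : List Bool // w.length = n + 1 ∧ P w} =
      Nat.card {w : List Bool // w.length = n ∧ P (false :: w)} +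
        Nat.card {w : List Bool // w.length = n ∧ P (true :: w)} := by
  rw [Nat.card_congr (consEquiv n P), Nat.card_sum]

lemma card_nil_pos {P : List Bool → Prop} (h : P []) :
    Nat.card {w : List Bool // w.length = 0 ∧ P w} = 1 := by
  have : Unique {w : List Bool // w.length = 0 ∧ P w} :=
    { default := ⟨[], rfl, h⟩
      uniq := fun x => Subtype.ext (List.length_eq_zero_iff.1 x.2.1) }
  exact Nat.card_unique

lemma card_empty {n : ℕ} {P : List Bool → Prop} (h : ∀ w : List Bool, w.length = n → ¬ P w) :
    Nat.card {w : List Bool // w.length = n ∧ P w} = 0 := by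
  have : IsEmpty {w : List Bool // w.length = n ∧ P w} :=
    ⟨fun x => h x.1 x.2.1 x.2.2⟩
  exact Nat.card_of_isEmpty

lemma card_nil_neg {P : List Bool → Prop} (h : ¬ P []) :
    Nat.card {w : List Bool // w.length = 0 ∧ P w} = 0 :=
  card_empty (fun w hw hp => h (List.length_eq_zero_iff.1 hw ▸ hp))


-- index facts
lemma getElem?_left_run {a : ℕ} {y : List Bool} {i : ℕ} (h : i < a) :
    (replicate a false ++ y)[i]? = some false := by
  rw [List.getElem?_append_left (by simpa using h), List.getElem?_replicate, if_pos h]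

lemma getElem?_mid_run {a b : ℕ} {y : List Bool} {j : ℕ} (h : j < b) :
    (replicate a false ++ (replicate b true ++ y))[a + j]? = some true := by
  rw [List.getElem?_append_right (by simp), List.getElem?_append_left]
  · simp [List.getElem?_replicate, h]
  · simpa using h

lemma getElem?_after_run {a b : ℕ} {y : List Bool} :
    (replicate a false ++ (replicate b true ++ y))[a + b]? = y.head? := by
  rw [List.getElem?_append_right (by simp), List.getElem?_append_right (by simp)]
  simp [← List.head?_eq_getElem?]

lemma getElem?_of_prefix {u y : List Bool} {i : ℕ} (h : i < u.length) :
    (u ++ y)[i]? = u[i]? := List.getElem?_append_left h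

/-- Rigidity: a "maximal factor" occurrence in `0^a 1^b ++ x` (with `x` empty or
starting with `0`) either is the canonical first block, or lies entirely in `x`. -/
lemma rigid {a b a' b' : ℕ} {x u v : List Bool} (ha : 0 < a) (hb : 0 < b)
    (ha' : 0 < a') (hb' : 0 < b') (hx : x.head? ≠ some true)
    (heq : replicate a false ++ (replicate b true ++ x) =
      u ++ (replicate a' false ++ replicate b' true) ++ v)
    (hu : u.getLast? ≠ some false) (hv : v.head? ≠ some true) :
    (u = [] ∧ a' = a ∧ b' = b ∧ v = x) ∨
      ∃ u₀ : List Bool, u = replicate a false ++ (replicate b true ++ u₀) ∧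
        x = u₀ ++ (replicate a' false ++ replicate b' true) ++ v := by
  set W : List Bool := replicate a false ++ (replicate b true ++ x) with hW
  set L : ℕ := u.length with hL
  have heq' : W = u ++ (replicate a' false ++ (replicate b' true ++ v)) := by
    rw [heq]; simp [List.append_assoc]
  have fact1 : ∀ i, i < a → W[i]? = some false := fun i hi => getElem?_left_run hi
  have fact2 : ∀ j, j < b → W[a + j]? = some true := fun j hj => getElem?_mid_run hj
  have fact3 : W[a + b]? = x.head? := getElem?_after_run
  have factR1 : ∀ i, i < a' → W[L + i]? = some false := by
    intro i hi
    rw [heq', List.getElem?_append_right (by omega)]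
    simpa [hL] using getElem?_left_run (y := replicate b' true ++ v) hi
  have factR2 : ∀ j, j < b' → W[L + (a' + j)]? = some true := by
    intro j hj
    rw [heq', List.getElem?_append_right (by omega)]
    have := getElem?_mid_run (a := a') (y := v) hj
    simpa [hL] using this
  have factR3 : W[L + (a' + b')]? = v.head? := by
    rw [heq', List.getElem?_append_right (by omega),
      show L + (a' + b') - u.length = a' + b' by omega]
    exact getElem?_after_run
  have factR0 : u ≠ [] → W[L - 1]? = u.getLast? := by
    intro hne
    rw [heq', getElem?_of_prefix (by
      have : 0 < L := by simpa [hL, List.length_pos_iff] using hne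
      omega)]
    exact List.getLast?_eq_getElem?.symm
  have hcase : L = 0 ∨ a + b ≤ L := by
    by_contra hc
    push_neg at hc
    obtain ⟨h0, hab⟩ := hc
    by_cases hLa : L ≤ a
    · have hne : u ≠ [] := by
        intro h; rw [h] at hL; simp at hL; omega
      have := factR0 hne
      rw [fact1 (L-1) (by omega)] at this
      exact hu this.symm
    · push_neg at hLa
      have h1 : W[L]? = some true := by
        have := fact2 (L - a) (by omega)
        rwa [show a + (L - a) = L by omega] at this
      have h2 : W[L]? = some false := by
        have := factR1 0 ha'
        simpa using this
      rw [h1] at h2; exact Bool.noConfusion (Option.some.inj h2)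
  rcases hcase with h0 | hge
  · -- canonical case
    have hu0 : u = [] := List.length_eq_zero_iff.1 h0
    subst hu0
    have haa : a' = a := by
      rcases Nat.lt_trichotomy a' a with h | h | h
      · have h1 := fact1 a' h
        have h2 := factR2 0 hb'
        simp only [h0, Nat.zero_add, Nat.add_zero] at h2
        rw [h2] at h1; exact absurd (Option.some.inj h1) (by simp)
      · exact h
      · have h1 := fact2 0 hb
        have h2 := factR1 a h
        simp only [h0, Nat.zero_add, Nat.add_zero] at h1 h2
        rw [h2] at h1; exact absurd (Option.some.inj h1) (by simp)
    subst haa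
    have hbb : b' = b := by
      rcases Nat.lt_trichotomy b' b with h | h | h
      · have h1 := fact2 b' h
        have h2 := factR3
        simp only [h0, Nat.zero_add] at h2
        rw [h1] at h2; exact absurd h2.symm hv
      · exact h
      · have h1 := fact3
        have h2 := factR2 b h
        simp only [h0, Nat.zero_add] at h2
        rw [h2] at h1; exact absurd h1.symm hx
    subst hbb
    left
    refine ⟨rfl, rfl, rfl, ?_⟩
    have := heq'
    simp only [List.nil_append] at this
    have h1 : replicate a' false ++ (replicate b' true ++ x) =
        replicate a' false ++ (replicate b' true ++ v) := this
    exact (List.append_cancel_left (List.append_cancel_left h1)).symm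
  · -- occurrence inside x
    right
    have hu' : u = W.take L := by
      rw [heq']; exact List.take_left.symm
    have hx' : u = replicate a false ++ (replicate b true ++ x.take (L - (a + b))) := by
      rw [hu', hW]
      rw [List.take_append, List.take_append]
      rw [List.take_of_length_le (by simp; omega), List.take_of_length_le (by simp; omega)]
      congr 2
      simp
      omega
    refine ⟨x.take (L - (a + b)), hx', ?_⟩
    have h2 : W = (replicate a false ++ (replicate b true ++ x.take (L - (a+b)))) ++
        (replicate a' false ++ replicate b' true) ++ v := by rw [← hx', heq]
    rw [hW] at h2
    simp only [List.append_assoc] at h2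
    have h3 := List.append_cancel_left (List.append_cancel_left h2)
    simpa [List.append_assoc] using h3



variable {k : ℕ}

def QD (k : ℕ) : List Bool → Prop := QDecreasing (k : ℝ)

lemma qd_cast {a b : ℕ} : ((k : ℝ) * a > (b : ℝ)) ↔ b < k * a := by
  exact_mod_cast Iff.rfl

lemma getLast?_append_ne {p u : List Bool} (h : (p ++ u).getLast? ≠ some false)
    (hne : u ≠ []) : u.getLast? ≠ some false := by
  rwa [List.getLast?_append_of_ne_nil p hne] at h

lemma getLast?_rep_block {a b : ℕ} (hb : 0 < b) :
    (replicate a false ++ replicate b true).getLast? = some true := by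
  obtain ⟨b', rfl⟩ : ∃ b', b = b' + 1 := ⟨b - 1, by omega⟩
  rw [List.replicate_succ', ← List.append_assoc]
  exact List.getLast?_concat

lemma qd_nil : QD k [] := by
  intro u v a b ha heq _ _
  have := congrArg List.length heq
  simp at this
  omega

lemma qd_cons_true {w : List Bool} : QD k (true :: w) ↔ QD k w := by
  constructor
  · intro h u v a b ha heq hu hv
    refine h (true :: u) v a b ha (by rw [heq]; rfl) ?_ hv
    rcases u.eq_nil_or_concat with rfl | ⟨u', x, rfl⟩
    · simp
    · rw [show true :: u'.concat x = (true :: u') ++ [x] by simp,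
        List.getLast?_concat]
      rw [List.concat_eq_append, List.getLast?_concat] at hu
      exact hu
  · intro h u v a b ha heq hu hv
    match u, heq with
    | [], heq =>
      exfalso
      have : (true : Bool) = false := by
        have h0 := congrArg List.head? heq
        obtain ⟨a', rfl⟩ : ∃ a', a = a' + 1 := ⟨a - 1, by omega⟩
        simpa [List.replicate_succ] using h0
      simp at this
    | c :: u', heq =>
      have hc : c = true ∧ w = u' ++ (replicate a false ++ replicate b true) ++ v := by
        have := List.cons.injEq c (u' ++ (replicate a false ++ replicate b true) ++ v) true w
        constructor
        · exact (List.cons.inj heq.symm).1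
        · exact (List.cons.inj heq.symm).2.symm
      refine h u' v a b ha hc.2 ?_ hv
      rcases u'.eq_nil_or_concat with rfl | ⟨u'', x, rfl⟩
      · simp
      · refine getLast?_append_ne (p := [c]) ?_ (by simp)
        simpa using hu

lemma qd_all_false (hk : 0 < k) (a : ℕ) : QD k (replicate a false) := by
  intro u v a' b' ha' heq hu hv
  rcases Nat.eq_zero_or_pos b' with rfl | hb'
  · rw [gt_iff_lt]
    rw [show ((0:ℕ):ℝ) = 0 by simp]
    positivity
  · exfalso
    have hmem : true ∈ replicate a false := by
      rw [heq]
      simp [List.mem_replicate, hb'.ne']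
    exact absurd (List.eq_of_mem_replicate hmem) (by simp)

lemma qd_block_iff (hk : 0 < k) {a b : ℕ} {x : List Bool} (ha : 0 < a) (hb : 0 < b)
    (hx : x.head? ≠ some true) :
    QD k (replicate a false ++ (replicate b true ++ x)) ↔ (b < k * a ∧ QD k x) := by
  constructor
  · intro h
    constructor
    · rw [← qd_cast]
      exact h [] x a b ha (by simp [List.append_assoc]) (by simp) hx
    · intro u v a' b' ha' heq hu hv
      refine h (replicate a false ++ (replicate b true ++ u)) v a' b' ha'
        (by rw [heq]; simp [List.append_assoc]) ?_ hv
      rcases eq_or_ne u [] with rfl | hne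
      · rw [List.append_nil, getLast?_rep_block hb]
        simp
      · rw [← List.append_assoc]
        rw [List.getLast?_append_of_ne_nil _ hne]
        exact hu
  · rintro ⟨hkb, hxq⟩ u v a' b' ha' heq hu hv
    rcases Nat.eq_zero_or_pos b' with rfl | hb'
    · rw [gt_iff_lt, show ((0:ℕ):ℝ) = 0 by simp]
      positivity
    · rcases rigid ha hb ha' hb' hx heq hu hv with ⟨_, rfl, rfl, rfl⟩ | ⟨u₀, hu₀, hx₀⟩
      · exact qd_cast.2 hkb
      · refine hxq u₀ v a' b' ha' hx₀ ?_ hv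
        rcases eq_or_ne u₀ [] with rfl | hne
        · simp
        · refine getLast?_append_ne (p := replicate a false ++ replicate b true) ?_ hne
          rw [hu₀] at hu
          rwa [List.append_assoc]



def AV (k : ℕ) (w : List Bool) : Prop := ¬ (List.replicate (k + 1) true <:+: w)

lemma av_short {w : List Bool} (h : w.length ≤ k) : AV k w := by
  intro hi
  have := hi.length_le
  simp at this
  omega

lemma not_prefix_run {j : ℕ} {w : List Bool} (hj : j ≤ k) :
    ¬ (replicate (k+1) true <+: replicate j true ++ false :: w) := by
  intro h
  obtain ⟨s, hs⟩ := h
  have h1 : (replicate j true ++ false :: w)[j]? = some false := by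
    rw [List.getElem?_append_right (by simp)]
    simp
  have h2 : (replicate j true ++ false :: w)[j]? = some true := by
    rw [← hs, List.getElem?_append_left (by simp; omega), List.getElem?_replicate,
      if_pos (by omega)]
  rw [h1] at h2
  simp at h2

lemma infix_run {j : ℕ} {w : List Bool} (hj : j ≤ k)
    (h : replicate (k+1) true <:+: replicate j true ++ false :: w) :
    replicate (k+1) true <:+: w := by
  induction j with
  | zero =>
    simp only [List.replicate_zero, List.nil_append] at h
    rcases List.infix_cons_iff.1 h with hp | hi
    · rw [List.replicate_succ] at hp
      exact absurd (List.cons_prefix_cons.1 hp).1 (by simp)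
    · exact hi
  | succ j ih =>
    rw [show replicate (j+1) true ++ false :: w = true :: (replicate j true ++ false :: w) by
      rw [List.replicate_succ]; rfl] at h
    rcases List.infix_cons_iff.1 h with hp | hi
    · refine absurd ?_ (not_prefix_run (j := j+1) (w := w) hj)
      rw [show replicate (j+1) true ++ false :: w = true :: (replicate j true ++ false :: w) by
        rw [List.replicate_succ]; rfl]
      exact hp
    · exact ih (by omega) hi

lemma av_run_cons {j : ℕ} {w : List Bool} (hj : j ≤ k) :
    AV k (replicate j true ++ false :: w) ↔ AV k w := by
  constructor
  · intro h hi
    exact h (hi.trans (((List.suffix_cons false w).trans (List.suffix_append _ _)).isInfix))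
  · intro h hi
    exact h (infix_run hj hi)

lemma av_dead {j : ℕ} {w : List Bool} (hj : k + 1 ≤ j) :
    ¬ AV k (replicate j true ++ w) := by
  intro h
  refine h ⟨[], replicate (j - (k+1)) true ++ w, ?_⟩
  rw [List.nil_append, ← List.append_assoc, ← List.replicate_add,
    show k + 1 + (j - (k+1)) = j by omega]

lemma rep_cons {a : ℕ} {c : Bool} {w : List Bool} :
    replicate a c ++ (c :: w) = replicate (a+1) c ++ w := by
  rw [List.replicate_succ', List.append_assoc]
  rfl

noncomputable def dA (k n : ℕ) : ℕ := Nat.card {w : List Bool // w.length = n ∧ QD k w}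
noncomputable def dP (k n a b : ℕ) : ℕ :=
  Nat.card {w : List Bool // w.length = n ∧
    QD k (replicate a false ++ (replicate b true ++ w))}
noncomputable def tA (k n : ℕ) : ℕ := Nat.card {w : List Bool // w.length = n ∧ AV k w}
noncomputable def tR (k n j : ℕ) : ℕ :=
  Nat.card {w : List Bool // w.length = n ∧ AV k (replicate j true ++ w)}

lemma dA_def (k n : ℕ) : dA k n = Nat.card {w : List Bool // w.length = n ∧ QD k w} := rfl
lemma dP_def (k n a b : ℕ) : dP k n a b = Nat.card {w : List Bool // w.length = n ∧
    QD k (replicate a false ++ (replicate b true ++ w))} := rfl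
lemma tA_def (k n : ℕ) : tA k n = Nat.card {w : List Bool // w.length = n ∧ AV k w} := rfl
lemma tR_def (k n j : ℕ) : tR k n j = Nat.card {w : List Bool // w.length = n ∧
    AV k (replicate j true ++ w)} := rfl

lemma dA_zero : dA k 0 = 1 := card_nil_pos qd_nil

lemma F1 (n : ℕ) : dA k (n+1) = dP k n 1 0 + dA k n := by
  have h1 : Nat.card {w : List Bool // w.length = n ∧ QD k (false :: w)} = dP k n 1 0 := by
    rw [dP_def]
    exact card_congr fun w _ => by
      rw [show replicate 1 false ++ (replicate 0 true ++ w) = false :: w by simp]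
  have h2 : Nat.card {w : List Bool // w.length = n ∧ QD k (true :: w)} = dA k n := by
    rw [dA_def]
    exact card_congr fun w _ => qd_cons_true
  rw [dA_def, card_cons, h1, h2]

lemma F3 (hk : 0 < k) {a : ℕ} (ha : 0 < a) (b : ℕ) :
    dP k 0 a b = if b < k * a then 1 else 0 := by
  rw [dP_def]
  rcases Nat.eq_zero_or_pos b with rfl | hb
  · rw [if_pos (Nat.mul_pos hk ha)]
    refine card_nil_pos ?_
    rw [show replicate a false ++ (replicate 0 true ++ ([] : List Bool)) = replicate a false
      by simp]
    exact qd_all_false hk a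
  · have hiff := qd_block_iff (k := k) (x := ([] : List Bool)) hk ha hb (by simp)
    split_ifs with h
    · exact card_nil_pos (hiff.2 ⟨h, qd_nil⟩)
    · exact card_nil_neg (fun hq => h (hiff.1 hq).1)

lemma F2 (hk : 0 < k) (n : ℕ) {a : ℕ} (ha : 0 < a) (b : ℕ) :
    dP k (n+1) a b =
      (if b = 0 then dP k n (a+1) 0 else if b < k * a then dP k n 1 0 else 0) +
        dP k n a (b+1) := by
  rw [dP_def, card_cons]
  congr 1
  · rcases Nat.eq_zero_or_pos b with rfl | hb
    · rw [if_pos rfl, dP_def]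
      exact card_congr fun w _ => by
        rw [show replicate a false ++ (replicate 0 true ++ (false :: w)) =
          replicate (a+1) false ++ (replicate 0 true ++ w) by simp [rep_cons]]
    · rw [if_neg (by omega)]
      have hiff : ∀ w : List Bool,
          QD k (replicate a false ++ (replicate b true ++ (false :: w))) ↔
            (b < k * a ∧ QD k (false :: w)) :=
        fun w => qd_block_iff hk ha hb (by simp)
      split_ifs with h
      · rw [dP_def]
        exact card_congr fun w _ => by
          rw [show replicate 1 false ++ (replicate 0 true ++ w) = false :: w by simp,
            hiff w]
          exact ⟨fun hw => hw.2, fun hw => ⟨h, hw⟩⟩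
      · exact card_empty fun w _ hw => h ((hiff w).1 hw).1
  · rw [dP_def]
    exact card_congr fun w _ => by rw [show replicate b true ++ (true :: w) =
      replicate (b+1) true ++ w from rep_cons]

lemma tA_zero : tA k 0 = 1 := card_nil_pos (av_short (by simp))

lemma tA_tR (n : ℕ) : tA k n = tR k n 0 := by
  rw [tA_def, tR_def]
  exact card_congr fun w _ => by rw [show replicate 0 true ++ w = w by simp]

lemma F4 {n j : ℕ} (hj : k + 1 ≤ j) : tR k n j = 0 :=
  card_empty fun w _ hw => av_dead hj hw

lemma F5 {j : ℕ} (hj : j ≤ k) : tR k 0 j = 1 :=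
  card_nil_pos (av_short (by simp [hj]))

lemma F6 (n : ℕ) {j : ℕ} (hj : j ≤ k) : tR k (n+1) j = tA k n + tR k n (j+1) := by
  rw [tR_def, card_cons, tA_def, tR_def]
  congr 1
  · exact card_congr fun w _ => av_run_cons hj
  · exact card_congr fun w _ => by rw [show replicate j true ++ (true :: w) =
      replicate (j+1) true ++ w from rep_cons]

def tfun (k : ℕ) (n : ℕ) : ℕ :=
  if n ≤ k then 2^n else ∑ i ∈ Finset.range (k+1), tfun k (n-1-i)
termination_by n
decreasing_by omega

def Ufun (k : ℕ) (m : ℕ) : ℕ :=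
  if m ≤ k then 0 else tfun k (m-(k+1)) + Ufun k (m-(k+1))
termination_by m
decreasing_by omega

variable {k : ℕ}

lemma tfun_le {n : ℕ} (h : n ≤ k) : tfun k n = 2^n := by rw [tfun, if_pos h]

lemma tfun_gt {n : ℕ} (h : k < n) :
    tfun k n = ∑ i ∈ Finset.range (k+1), tfun k (n-1-i) := by
  rw [tfun, if_neg (by omega)]

lemma Ufun_le {m : ℕ} (h : m ≤ k) : Ufun k m = 0 := by rw [Ufun, if_pos h]

lemma Ufun_gt {m : ℕ} (h : k < m) :
    Ufun k m = tfun k (m-(k+1)) + Ufun k (m-(k+1)) := by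
  rw [Ufun, if_neg (by omega)]

lemma sum_pow {n : ℕ} (h : n ≤ k) : (∑ m ∈ Finset.range n, tfun k m) + 1 = 2^n := by
  induction n with
  | zero => simp
  | succ n ih =>
    rw [Finset.sum_range_succ, tfun_le (by omega), pow_succ]
    have := ih (by omega)
    omega

lemma sumsplit (f : ℕ → ℕ) {n : ℕ} (h : k + 1 ≤ n) :
    ∑ m ∈ Finset.range n, f m =
      (∑ m ∈ Finset.range (n-k-1), f m) + ∑ i ∈ Finset.range (k+1), f (n-1-i) := by
  rw [Finset.range_eq_Ico,
    ← Finset.sum_Ico_consecutive f (Nat.zero_le (n-k-1)) (show n-k-1 ≤ n by omega),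
    ← Finset.range_eq_Ico]
  congr 1
  rw [Finset.sum_Ico_eq_sum_range, show n - (n-k-1) = k+1 by omega]
  conv_lhs => rw [← Finset.sum_range_reflect]
  exact Finset.sum_congr rfl fun i hi => by
    have : i < k + 1 := Finset.mem_range.1 hi
    congr 1
    omega

lemma star (hk : 0 < k) (n : ℕ) :
    tfun k (n+1) + Ufun k (n+1) = tfun k n + 1 + ∑ m ∈ Finset.range n, tfun k m := by
  induction n using Nat.strong_induction_on with
  | _ n ih =>
  rcases lt_trichotomy n k with h | rfl | h
  · rw [tfun_le (by omega), tfun_le (by omega), Ufun_le (by omega), pow_succ]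
    have := sum_pow (k := k) (n := n) (by omega)
    omega
  · rw [Ufun_gt (by omega), show n+1-(n+1) = 0 by omega, Ufun_le (Nat.zero_le n),
      tfun_le (Nat.zero_le n), tfun_gt (show n < n+1 by omega)]
    have e1 : ∑ i ∈ Finset.range (n+1), tfun n (n+1-1-i) =
        ∑ i ∈ Finset.range (n+1), tfun n i := Finset.sum_range_reflect (tfun n) (n+1)
    have e2 : ∑ i ∈ Finset.range (n+1), tfun n i =
        (∑ i ∈ Finset.range n, tfun n i) + tfun n n := Finset.sum_range_succ _ _
    have e3 : tfun n n = 2^n := tfun_le (le_refl n)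
    omega
  · have hk1 : k < n + 1 := by omega
    have e0 : tfun k (n+1) = ∑ i ∈ Finset.range (k+1), tfun k (n-i) := by
      rw [tfun_gt hk1]
      exact Finset.sum_congr rfl fun i _ => by congr 1 <;> omega
    have e1 : ∑ i ∈ Finset.range (k+1), tfun k (n-i) =
        (∑ i ∈ Finset.range k, tfun k (n-1-i)) + tfun k n := by
      rw [Finset.sum_range_succ' (fun i => tfun k (n-i)) k]
      simp only [Nat.sub_zero]
      congr 1
      exact Finset.sum_congr rfl fun i _ => by congr 1 <;> omega
    have e2 : tfun k n = (∑ i ∈ Finset.range k, tfun k (n-1-i)) + tfun k (n-1-k) := by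
      rw [tfun_gt h, Finset.sum_range_succ]
    have e3 : ∑ m ∈ Finset.range n, tfun k m =
        (∑ m ∈ Finset.range (n-k-1), tfun k m) +
          ((∑ i ∈ Finset.range k, tfun k (n-1-i)) + tfun k (n-1-k)) := by
      rw [sumsplit (tfun k) (show k+1 ≤ n by omega), Finset.sum_range_succ]
    have e4 : Ufun k (n+1) = tfun k (n-k-1) + 1 + ∑ m ∈ Finset.range (n-k-1), tfun k m := by
      rw [Ufun_gt hk1, show n+1-(k+1) = (n-k-1)+1 by omega]
      exact ih (n-k-1) (by omega)
    have e5 : tfun k (n-1-k) = tfun k (n-k-1) := by congr 1; omega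
    omega

lemma WU (hk : 0 < k) (n : ℕ) :
    (∑ i ∈ Finset.range n, if k*(1+i) ≤ n - i then tfun k (n - i - k*(1+i)) else 0) =
      Ufun k (n+1) := by
  induction n using Nat.strong_induction_on with
  | _ n ih =>
  rcases lt_or_ge n k with h | h
  · rw [Ufun_le (by omega)]
    refine Finset.sum_eq_zero fun i _ => ?_
    have hK : k ≤ k*(1+i) := Nat.le_mul_of_pos_right k (by omega)
    rw [if_neg (by omega)]
  · obtain ⟨m, rfl⟩ : ∃ m, n = m + 1 := ⟨n-1, by omega⟩
    rw [Finset.sum_range_succ' (fun i =>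
      if k*(1+i) ≤ m+1 - i then tfun k (m+1 - i - k*(1+i)) else 0) m]
    have hterm0 : (if k*(1+0) ≤ m+1-0 then tfun k (m+1-0-k*(1+0)) else 0) =
        tfun k (m+1-k) := by
      rw [if_pos (by omega)]
      congr 1
      omega
    have hUf : Ufun k (m+1+1) = tfun k (m+1-k) + Ufun k (m+1-k) := by
      rw [Ufun_gt (by omega)]
      have e : m+1+1-(k+1) = m+1-k := by omega
      rw [e]
    rcases lt_or_ge m k with hm | hm
    · -- here k = m+1
      have hk2 : k = m+1 := by omega
      have hrest : ∑ j ∈ Finset.range m,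
          (if k*(1+(j+1)) ≤ m+1-(j+1) then tfun k (m+1-(j+1)-k*(1+(j+1))) else 0) = 0 := by
        refine Finset.sum_eq_zero fun j _ => ?_
        have hK : 2*k ≤ k*(1+(j+1)) := by nlinarith
        rw [if_neg (by omega)]
      rw [hrest, hterm0, hUf, show m+1-k = 0 by omega, Ufun_le (Nat.zero_le k)]
      omega
    · -- k ≤ m
      have hrest : ∑ j ∈ Finset.range m,
          (if k*(1+(j+1)) ≤ m+1-(j+1) then tfun k (m+1-(j+1)-k*(1+(j+1))) else 0) =
          ∑ j ∈ Finset.range (m-k),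
            (if k*(1+j) ≤ (m-k) - j then tfun k ((m-k) - j - k*(1+j)) else 0) := by
        have hstep : ∀ j : ℕ,
            (if k*(1+(j+1)) ≤ m+1-(j+1) then tfun k (m+1-(j+1)-k*(1+(j+1))) else 0) =
            (if k*(1+j) ≤ (m-k) - j then tfun k ((m-k) - j - k*(1+j)) else 0) := by
          intro j
          have e : k*(1+(j+1)) = k + k*(1+j) := by ring
          have hK : k ≤ k*(1+j) := Nat.le_mul_of_pos_right k (by omega)
          by_cases hc : k*(1+j) ≤ (m-k) - j
          · rw [if_pos (by omega), if_pos hc]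
            congr 1
            omega
          · rw [if_neg (by omega), if_neg hc]
        rw [Finset.sum_congr rfl fun j _ => hstep j]
        refine (Finset.sum_subset (Finset.range_subset_range.2 (by omega)) fun x _ hx => ?_).symm
        have hx' : m - k ≤ x := by
          by_contra hcc
          exact hx (Finset.mem_range.2 (by omega))
        have hK : k ≤ k*(1+x) := Nat.le_mul_of_pos_right k (by omega)
        rw [if_neg (by omega)]
      rw [hrest, hterm0, hUf]
      have e2 : m+1-k = (m-k)+1 := by omega
      rw [e2, ih (m-k) (by omega)]
      omega

lemma Lq (hk : 0 < k) (n : ℕ) : ∀ a b : ℕ, 0 < a → 0 < b →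
    dP k n a b + (if k*a - b ≤ n then dA k (n - (k*a - b)) else 0) = dA k n := by
  induction n with
  | zero =>
    intro a b ha hb
    rw [F3 hk ha b, dA_zero]
    by_cases hc : b < k*a
    · rw [if_pos hc, if_neg (by omega)]
    · rw [if_neg hc, if_pos (by omega), show 0 - (k*a-b) = 0 by omega, dA_zero]
  | succ n ih =>
    intro a b ha hb
    rw [F2 hk n ha b, if_neg (by omega)]
    have h2 := ih a (b+1) ha (by omega)
    by_cases hc : b < k*a
    · rw [if_pos hc]
      by_cases hc2 : k*a - (b+1) ≤ n
      · rw [if_pos hc2] at h2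
        rw [if_pos (by omega), show n+1-(k*a-b) = n - (k*a-(b+1)) by omega, F1 n]
        omega
      · rw [if_neg hc2] at h2
        rw [if_neg (by omega), F1 n]
        omega
    · rw [if_neg hc, if_pos (by omega), show n+1-(k*a-b) = n+1 by omega, F1 n]
      rw [if_pos (by omega), show n - (k*a-(b+1)) = n by omega] at h2
      omega

lemma Lb (hk : 0 < k) (n : ℕ) : ∀ a : ℕ, 0 < a →
    dP k n a 0 + (∑ i ∈ Finset.range n, if k*(a+i) ≤ n - i then dA k (n - i - k*(a+i)) else 0)
      = 1 + ∑ m ∈ Finset.range n, dA k m := by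
  induction n with
  | zero =>
    intro a ha
    rw [F3 hk ha 0, if_pos (Nat.mul_pos hk ha)]
    simp
  | succ n ih =>
    intro a ha
    rw [F2 hk n ha 0, if_pos rfl]
    have hq := Lq hk n a 1 ha one_pos
    have hsum : (∑ i ∈ Finset.range (n+1),
        if k*(a+i) ≤ n+1 - i then dA k (n+1 - i - k*(a+i)) else 0) =
        (∑ i ∈ Finset.range n,
          if k*((a+1)+i) ≤ n - i then dA k (n - i - k*((a+1)+i)) else 0) +
          (if k*a ≤ n+1 then dA k (n+1-k*a) else 0) := by
      rw [Finset.sum_range_succ' (fun i =>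
        if k*(a+i) ≤ n+1 - i then dA k (n+1 - i - k*(a+i)) else 0) n]
      congr 1
      all_goals try rw [show a+0 = a by omega, show n+1-0 = n+1 by omega]
      all_goals refine Finset.sum_congr rfl fun j _ => ?_
      all_goals rw [show a+(j+1) = (a+1)+j by omega, show n+1-(j+1) = n-j by omega]
    have hih := ih (a+1) (by omega)
    have hterm : (if k*a ≤ n+1 then dA k (n+1-k*a) else 0) =
        (if k*a - 1 ≤ n then dA k (n-(k*a-1)) else 0) := by
      have h1 : 0 < k*a := Nat.mul_pos hk ha
      by_cases hc : k*a ≤ n+1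
      · rw [if_pos hc, if_pos (by omega)]
        congr 1
        omega
      · rw [if_neg hc, if_neg (by omega)]
    rw [hsum, Finset.sum_range_succ (dA k) n, hterm]
    have hz : dP k n a (0+1) = dP k n a 1 := rfl
    omega

lemma dec_final (hk : 0 < k) (n : ℕ) : dA k n = tfun k n := by
  induction n using Nat.strong_induction_on with
  | _ n ih =>
  match n with
  | 0 => rw [dA_zero, tfun_le (Nat.zero_le k), pow_zero]
  | n+1 =>
    have hLb := Lb hk n 1 one_pos
    have hF1 := F1 (k := k) n
    have hsum1 : ∑ m ∈ Finset.range n, dA k m = ∑ m ∈ Finset.range n, tfun k m :=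
      Finset.sum_congr rfl fun m hm => ih m (by have := Finset.mem_range.1 hm; omega)
    have hsum2 : (∑ i ∈ Finset.range n, if k*(1+i) ≤ n - i then dA k (n - i - k*(1+i)) else 0)
        = (∑ i ∈ Finset.range n, if k*(1+i) ≤ n - i then tfun k (n - i - k*(1+i)) else 0) := by
      refine Finset.sum_congr rfl fun i _ => ?_
      by_cases hc : k*(1+i) ≤ n - i
      · rw [if_pos hc, if_pos hc, ih (n - i - k*(1+i)) (by omega)]
      · rw [if_neg hc, if_neg hc]
    have hWU := WU hk n
    have hstar := star hk n
    have hdan : dA k n = tfun k n := ih n (by omega)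
    omega

lemma Lr (hk : 0 < k) (n : ℕ) : ∀ j : ℕ, j ≤ k →
    tR k n j = (if n + j ≤ k then 1 else 0) +
      ∑ i ∈ Finset.range (min n (k+1-j)), tA k (n-1-i) := by
  induction n with
  | zero =>
    intro j hj
    rw [F5 hj]
    simp [hj]
  | succ n ih =>
    intro j hj
    rw [F6 n hj]
    by_cases hjk : j = k
    · rw [hjk, F4 (by omega)]
      have h1 : min (n+1) (k+1-k) = 1 := by omega
      rw [h1, if_neg (by omega)]
      simp [Finset.sum_range_one]
    · rw [ih (j+1) (by omega)]
      have h2 : min (n+1) (k+1-j) = min n (k-j) + 1 := by omega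
      rw [h2, Finset.sum_range_succ' (fun i => tA k (n+1-1-i)) (min n (k-j))]
      have h3 : (∑ i ∈ Finset.range (min n (k+1-(j+1))), tA k (n-1-i)) =
          ∑ i ∈ Finset.range (min n (k-j)), tA k (n+1-1-(i+1)) := by
        rw [show k+1-(j+1) = k-j by omega]
        exact Finset.sum_congr rfl fun i _ => by congr 1 <;> omega
      have h4 : tA k (n+1-1-0) = tA k n := rfl
      have h5 : (if n+(j+1) ≤ k then 1 else 0) = (if n+1+j ≤ k then (1:ℕ) else 0) := by
        by_cases hc : n+(j+1) ≤ k
        · rw [if_pos hc, if_pos (by omega)]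
        · rw [if_neg hc, if_neg (by omega)]
      rw [h3, h4, h5]
      omega

lemma av_final (hk : 0 < k) (n : ℕ) : tA k n = tfun k n := by
  induction n using Nat.strong_induction_on with
  | _ n ih =>
  match n with
  | 0 => rw [tA_zero, tfun_le (Nat.zero_le k), pow_zero]
  | n+1 =>
    rw [tA_tR (k := k) (n+1), Lr hk (n+1) 0 (Nat.zero_le k)]
    have hsum : (∑ i ∈ Finset.range (min (n+1) (k+1-0)), tA k (n+1-1-i)) =
        ∑ i ∈ Finset.range (min (n+1) (k+1)), tfun k (n-i) := by
      rw [show k+1-0 = k+1 by omega]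
      refine Finset.sum_congr rfl fun i hi => ?_
      rw [show n+1-1-i = n-i by omega]
      exact ih (n-i) (by omega)
    rw [hsum]
    rcases le_or_gt (n+1) k with h | h
    · rw [if_pos (by omega), show min (n+1) (k+1) = n+1 by omega]
      have e1 : ∑ i ∈ Finset.range (n+1), tfun k (n-i) =
          ∑ i ∈ Finset.range (n+1), tfun k (n+1-1-i) :=
        Finset.sum_congr rfl fun i _ => by congr 1 <;> omega
      rw [e1, Finset.sum_range_reflect (tfun k) (n+1)]
      have hsp := sum_pow (k := k) (n := n+1) h
      rw [tfun_le h]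
      omega
    · rw [if_neg (by omega), show min (n+1) (k+1) = k+1 by omega]
      have e1 : ∑ i ∈ Finset.range (k+1), tfun k (n-i) =
          ∑ i ∈ Finset.range (k+1), tfun k (n+1-1-i) :=
        Finset.sum_congr rfl fun i _ => by congr 1 <;> omega
      rw [e1, ← tfun_gt h]
      omega

end Stmt9

/-- For every positive integer `k`, the number of `k`-decreasing binary words
of length `n` equals the number of binary words of length `n` avoiding `k+1`
consecutive `1`s. -/
theorem stmt_9 (k : ℕ) (hk : 0 < k) (n : ℕ) :
    Nat.card {w : List Bool // w.length = n ∧ QDecreasing (k : ℝ) w} =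
      Nat.card {w : List Bool // w.length = n ∧
        ¬ (List.replicate (k + 1) true <:+: w)} := by
  have h1 : Nat.card {w : List Bool // w.length = n ∧ QDecreasing (k : ℝ) w} = Stmt9.dA k n := rfl
  have h2 : Nat.card {w : List Bool // w.length = n ∧
      ¬ (List.replicate (k + 1) true <:+: w)} = Stmt9.tA k n := rfl
  rw [h1, h2, Stmt9.dec_final hk n, Stmt9.av_final hk n]
end

section
/- Let q = c/d be an irreducible positive fraction. The polynomial Π_q(x) = 1 - x^{c+d} - Σ_{i=0}^{c-1} x^{1+i+⌊i·d/c⌋} has a unique root of smallest modulus among its complex roots, and this root is real and lies in (0,1). -/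
open Polynomial

/-- For an irreducible positive fraction `q = c/d`, the polynomial
`Π_q(x) = 1 - x^(c+d) - ∑_{i=0}^{c-1} x^(1+i+⌊i·d/c⌋)` has a unique root of
smallest modulus among its complex roots, and this root is real and lies in
`(0,1)`. (Here `i * d / c` is natural-number division, i.e. the floor.) -/
theorem stmt_10 (c d : ℕ) (hc : 0 < c) (hd : 0 < d) (hcd : Nat.Coprime c d) :
    ∃ ρ : ℝ, ρ ∈ Set.Ioo (0:ℝ) 1 ∧
      ((1 : Polynomial ℂ) - X ^ (c + d) -
        ∑ i ∈ Finset.range c, X ^ (1 + i + i * d / c)).IsRoot (ρ : ℂ) ∧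
      ∀ z : ℂ,
        ((1 : Polynomial ℂ) - X ^ (c + d) -
          ∑ i ∈ Finset.range c, X ^ (1 + i + i * d / c)).IsRoot z →
        z ≠ (ρ : ℂ) → ρ < ‖z‖ := by
  set e : ℕ → ℕ := fun i => 1 + i + i * d / c with he
  set g : ℝ → ℝ := fun t => t ^ (c + d) + ∑ i ∈ Finset.range c, t ^ e i with hg
  have hgcont : Continuous g := by
    apply Continuous.add (continuous_pow _)
    exact continuous_finset_sum _ fun i _ => continuous_pow _
  have hg0 : g 0 = 0 := by
    simp only [hg]
    rw [zero_pow (by omega), Finset.sum_eq_zero fun i _ => zero_pow (by simp [he])]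
    ring
  have hg1 : (1:ℝ) < g 1 := by
    simp only [hg, one_pow, Finset.sum_const, Finset.card_range, nsmul_eq_mul, mul_one]
    have : (1:ℝ) ≤ c := by exact_mod_cast hc
    linarith
  have hmono : StrictMonoOn g (Set.Ici 0) := by
    intro a ha b hb hab
    have h1 : a ^ (c + d) < b ^ (c + d) := pow_lt_pow_left₀ hab ha (by omega)
    have h2 : ∑ i ∈ Finset.range c, a ^ e i ≤ ∑ i ∈ Finset.range c, b ^ e i :=
      Finset.sum_le_sum fun i _ => pow_le_pow_left₀ ha hab.le _
    exact add_lt_add_of_lt_of_le h1 h2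
  have hiv := intermediate_value_Ioo (le_of_lt one_pos) hgcont.continuousOn
    (a := (0:ℝ)) (b := 1)
  have h1mem : (1:ℝ) ∈ Set.Ioo (g 0) (g 1) := by rw [hg0]; exact ⟨one_pos, hg1⟩
  obtain ⟨ρ, hρmem, hρ⟩ := hiv h1mem
  have hρ0 : (0:ℝ) ≤ ρ := hρmem.1.le
  refine ⟨ρ, hρmem, ?_, ?_⟩
  · simp only [IsRoot, eval_sub, eval_one, eval_pow, eval_X, eval_finset_sum]
    have : ((g ρ : ℝ) : ℂ) = 1 := by rw [hρ]; norm_num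
    simp only [hg] at this
    push_cast at this
    linear_combination -this
  · intro z hz hzne
    simp only [IsRoot, eval_sub, eval_one, eval_pow, eval_X, eval_finset_sum] at hz
    have hz' : z ^ (c + d) + ∑ i ∈ Finset.range c, z ^ e i = 1 := by
      linear_combination -hz
    set r := ‖z‖ with hr
    have hr0 : 0 ≤ r := norm_nonneg z
    have hgr : (1:ℝ) ≤ g r := by
      have := congrArg (‖·‖) hz'
      rw [norm_one] at this
      calc (1:ℝ) = ‖z ^ (c + d) + ∑ i ∈ Finset.range c, z ^ e i‖ := this.symm
        _ ≤ ‖z ^ (c + d)‖ + ‖∑ i ∈ Finset.range c, z ^ e i‖ :=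
            norm_add_le _ _
        _ ≤ ‖z ^ (c + d)‖ + ∑ i ∈ Finset.range c, ‖z ^ e i‖ := by
            gcongr; exact norm_sum_le _ _
        _ = g r := by simp [hg, hr, norm_pow]
    have hle : ρ ≤ r := by
      by_contra h
      push_neg at h
      have := hmono (Set.mem_Ici.mpr hr0) (Set.mem_Ici.mpr hρ0) h
      rw [hρ] at this
      linarith
    rcases lt_or_eq_of_le hle with h | h
    · exact h
    · -- r = ρ : derive z = ρ, contradiction
      exfalso
      apply hzne
      have hre : (z ^ (c + d)).re + ∑ i ∈ Finset.range c, (z ^ e i).re = 1 := by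
        have := congrArg Complex.re hz'
        simpa [Complex.add_re, Complex.re_sum] using this
      have hgρ : r ^ (c + d) + ∑ i ∈ Finset.range c, r ^ e i = 1 := by
        rw [h] at hρ; simpa [hg] using hρ
      have hkey : (r ^ (c + d) - (z ^ (c + d)).re)
          + ∑ i ∈ Finset.range c, (r ^ e i - (z ^ e i).re) = 0 := by
        rw [Finset.sum_sub_distrib]
        linarith
      have habs : ∀ n : ℕ, (z ^ n).re ≤ r ^ n := by
        intro n
        calc (z ^ n).re ≤ ‖z ^ n‖ := Complex.re_le_norm _
          _ = r ^ n := by rw [norm_pow]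
      have hterm0 : ∀ i ∈ Finset.range c, r ^ e i - (z ^ e i).re = 0 := by
        rw [← Finset.sum_eq_zero_iff_of_nonneg (fun i _ => sub_nonneg.mpr (habs _))]
        have h1 : 0 ≤ r ^ (c + d) - (z ^ (c + d)).re := sub_nonneg.mpr (habs _)
        have h2 : 0 ≤ ∑ i ∈ Finset.range c, (r ^ e i - (z ^ e i).re) :=
          Finset.sum_nonneg fun i _ => sub_nonneg.mpr (habs _)
        linarith
      have h0 := hterm0 0 (Finset.mem_range.mpr hc)
      have he0 : e 0 = 1 := by simp [he]
      rw [he0] at h0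
      simp only [pow_one] at h0
      have hzre : z.re = r := by linarith
      have him : z.im = 0 := by
        have := Complex.sq_norm z
        rw [Complex.normSq_apply, ← hr, ← hzre] at this
        nlinarith
      apply Complex.ext
      · rw [Complex.ofReal_re, hzre, ← h]
      · simp [him]
end

section
/- Let q = c/d be an irreducible positive fraction and let ρ be a complex number with 0 < |ρ| < 1. Then Σ_{i=0}^∞ ρ^{1+i+⌊i·d/c⌋} = (Σ_{i=0}^{c-1} ρ^{1+i+⌊i·d/c⌋})/(1 - ρ^{c+d}). In particular, Σ_{i=0}^∞ ρ^{1+i+⌊i/q⌋} = 1 if and only if 1 - ρ^{c+d} - Σ_{i=0}^{c-1} ρ^{1+i+⌊i·d/c⌋} = 0. -/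
/-- Let `q = c/d` be an irreducible positive fraction and `ρ` a complex number
with `0 < |ρ| < 1`. Then
`∑_{i=0}^∞ ρ^(1+i+⌊i·d/c⌋) = (∑_{i=0}^{c-1} ρ^(1+i+⌊i·d/c⌋)) / (1 - ρ^(c+d))`,
and consequently `∑_{i=0}^∞ ρ^(1+i+⌊i/q⌋) = 1` iff
`1 - ρ^(c+d) - ∑_{i=0}^{c-1} ρ^(1+i+⌊i·d/c⌋) = 0`.
(Here `i * d / c` is natural-number division, i.e. the floor.) -/
theorem stmt_11 (c d : ℕ) (hc : 0 < c) (hd : 0 < d) (hcd : Nat.Coprime c d)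
    (ρ : ℂ) (hρ0 : 0 < ‖ρ‖) (hρ1 : ‖ρ‖ < 1) :
    (∑' i : ℕ, ρ ^ (1 + i + i * d / c)) =
      (∑ i ∈ Finset.range c, ρ ^ (1 + i + i * d / c)) / (1 - ρ ^ (c + d)) ∧
    ((∑' i : ℕ, ρ ^ (1 + i + i * d / c)) = 1 ↔
      1 - ρ ^ (c + d) - ∑ i ∈ Finset.range c, ρ ^ (1 + i + i * d / c) = 0) := by
  have hnorm : ‖ρ‖ < 1 := hρ1
  have habs : ‖ρ ^ (c + d)‖ < 1 := by
    rw [norm_pow]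
    exact pow_lt_one₀ (norm_nonneg ρ) hnorm (by omega)
  have hr1 : (1 : ℂ) - ρ ^ (c + d) ≠ 0 := by
    intro h
    rw [sub_eq_zero] at h
    rw [← h] at habs
    simp at habs
  set f : ℕ → ℂ := fun i => ρ ^ (1 + i + i * d / c) with hf
  have hsum : Summable f := by
    apply Summable.of_norm_bounded (g := fun i => ‖ρ‖ ^ i)
      (summable_geometric_of_lt_one (norm_nonneg ρ) hnorm)
    intro i
    rw [hf, norm_pow]
    exact pow_le_pow_of_le_one (norm_nonneg ρ) hnorm.le
      (le_trans (Nat.le_add_left i 1) (Nat.le_add_right (1 + i) _))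
  haveI : NeZero c := ⟨hc.ne'⟩
  have hfe : ∀ (k : ℕ) (j : Fin c), f ((Nat.divModEquiv c).symm (k, j))
      = ρ ^ (1 + (j : ℕ) + (j : ℕ) * d / c) * (ρ ^ (c + d)) ^ k := by
    intro k j
    have hrepr : ((Nat.divModEquiv c).symm (k, j) : ℕ) = (j : ℕ) + k * c := by
      simp [Nat.divModEquiv, Nat.add_comm]
    have hdiv : ((j : ℕ) + k * c) * d / c = (j : ℕ) * d / c + k * d := by
      rw [show ((j : ℕ) + k * c) * d = (j : ℕ) * d + c * (k * d) by ring,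
        Nat.add_mul_div_left _ _ hc]
    have hexp : 1 + ((j : ℕ) + k * c) + ((j : ℕ) + k * c) * d / c
        = (1 + (j : ℕ) + (j : ℕ) * d / c) + (c + d) * k := by
      rw [hdiv]; ring
    rw [hf]
    simp only [hrepr, hexp, pow_add, pow_mul]
  have hsum2 : Summable (fun p : ℕ × Fin c => f ((Nat.divModEquiv c).symm p)) :=
    ((Nat.divModEquiv c).symm.summable_iff (f := f)).2 hsum
  have key : (∑' i : ℕ, f i) =
      (∑ i ∈ Finset.range c, f i) / (1 - ρ ^ (c + d)) := by
    calc ∑' i : ℕ, f i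
        = ∑' p : ℕ × Fin c, f ((Nat.divModEquiv c).symm p) :=
          (Equiv.tsum_eq (Nat.divModEquiv c).symm f).symm
      _ = ∑' k : ℕ, ∑' j : Fin c, f ((Nat.divModEquiv c).symm (k, j)) :=
          Summable.tsum_prod' hsum2 (fun _ => Summable.of_finite)
      _ = ∑' k : ℕ, (∑ j : Fin c, ρ ^ (1 + (j : ℕ) + (j : ℕ) * d / c)) * (ρ ^ (c + d)) ^ k := by
          simp only [hfe, tsum_fintype, Finset.sum_mul]
      _ = (∑ j : Fin c, ρ ^ (1 + (j : ℕ) + (j : ℕ) * d / c)) * (1 - ρ ^ (c + d))⁻¹ := by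
          rw [tsum_mul_left, tsum_geometric_of_norm_lt_one habs]
      _ = (∑ i ∈ Finset.range c, f i) / (1 - ρ ^ (c + d)) := by
          rw [div_eq_mul_inv]
          congr 1
          exact Fin.sum_univ_eq_sum_range (fun j => ρ ^ (1 + j + j * d / c)) c
  refine ⟨key, ?_⟩
  rw [key, div_eq_one_iff_eq hr1]
  constructor <;> intro h <;> linear_combination -h
end

section
/- For every positive integer k, the positive real root ρ_{k/(k+1)} in (0,1) of the polynomial 1 - x^{2k+1} - Σ_{i=0}^{k-1} x^{1+2i} satisfies x + x^2 - 1 = x^{2k+3} (i.e., ρ_{k/(k+1)} is a root of 1 - x - x^2 + x^{2k+3}), and ρ_{k/(k+1)} → ρ_1 as k → ∞, where ρ_1 = (√5 − 1)/2 is the root in (0,1) of 1 - x - x^2. -/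
open Filter

/-- For each positive integer `k`, the positive real root `ρ_{k/(k+1)} ∈ (0,1)`
of the polynomial `1 - x^(2k+1) - ∑_{i=0}^{k-1} x^(1+2i)` is also a root of
`1 - x - x² + x^(2k+3)`, and `ρ_{k/(k+1)} → ρ₁ = (√5 - 1)/2` as `k → ∞`,
where `ρ₁` is the root in `(0,1)` of `1 - x - x²`. -/
theorem stmt_12 (ρ : ℕ → ℝ)
    (hmem : ∀ k : ℕ, 1 ≤ k → ρ k ∈ Set.Ioo (0:ℝ) 1)
    (hroot : ∀ k : ℕ, 1 ≤ k →
      1 - ρ k ^ (2 * k + 1) - ∑ i ∈ Finset.range k, ρ k ^ (1 + 2 * i) = 0) :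
    (∀ k : ℕ, 1 ≤ k → 1 - ρ k - ρ k ^ 2 + ρ k ^ (2 * k + 3) = 0) ∧
      Tendsto ρ atTop (nhds ((Real.sqrt 5 - 1) / 2)) := by
  have key : ∀ k : ℕ, 1 ≤ k → 1 - ρ k - ρ k ^ 2 + ρ k ^ (2 * k + 3) = 0 := by
    intro k hk
    obtain ⟨h0, h1⟩ := hmem k hk
    have hx2 : ρ k ^ 2 ≠ 1 := by nlinarith
    have hne : ρ k ^ 2 - 1 ≠ 0 := sub_ne_zero.mpr hx2
    have hsum : ∑ i ∈ Finset.range k, ρ k ^ (1 + 2 * i)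
        = ρ k * (((ρ k ^ 2) ^ k - 1) / (ρ k ^ 2 - 1)) := by
      rw [← geom_sum_eq hx2, Finset.mul_sum]
      refine Finset.sum_congr rfl fun i _ => ?_
      rw [pow_add, pow_mul]; ring
    have h := hroot k hk
    rw [hsum] at h
    field_simp at h
    have e1 : ρ k ^ (2*k+1) = (ρ k ^ 2) ^ k * ρ k := by rw [← pow_mul, ← pow_succ]
    have e2 : ρ k ^ (2*k+3) = (ρ k ^ 2) ^ k * ρ k ^ 3 := by
      rw [← pow_mul, ← pow_add]
    rw [e1] at h
    rw [e2]
    nlinarith [h]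
  refine ⟨key, ?_⟩
  obtain ⟨g, hgdef⟩ : ∃ g : ℝ, g = (Real.sqrt 5 - 1) / 2 := ⟨_, rfl⟩
  rw [← hgdef]
  have h5 : Real.sqrt 5 ^ 2 = 5 := Real.sq_sqrt (by norm_num)
  have hg1 : g + g ^ 2 = 1 := by rw [hgdef]; nlinarith
  have hg0 : 0 < g := by
    have : (1:ℝ) < Real.sqrt 5 := by nlinarith [Real.sqrt_nonneg 5]
    rw [hgdef]; linarith
  have hb : ∀ k : ℕ, 1 ≤ k → ρ k ≤ 0.9 := by
    intro k hk
    by_contra hcon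
    push_neg at hcon
    obtain ⟨h0, h1⟩ := hmem k hk
    have hk5 : ρ k ^ (2*k+3) ≤ ρ k ^ 5 :=
      pow_le_pow_of_le_one h0.le h1.le (by omega)
    have hkey := key k hk
    have h2 : (0.81:ℝ) < ρ k ^ 2 := by nlinarith
    have h3 : (0.729:ℝ) < ρ k ^ 3 := by nlinarith
    have h4 : (0.6561:ℝ) < ρ k ^ 4 := by nlinarith
    have hfac : (0:ℝ) < ρ k ^ 4 + ρ k ^ 3 + ρ k ^ 2 - 1 := by linarith
    nlinarith [mul_pos (sub_pos.mpr h1) hfac]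
  have hbound : ∀ k : ℕ, 1 ≤ k → g ≤ ρ k ∧ ρ k ≤ g + (0.9:ℝ) ^ k := by
    intro k hk
    obtain ⟨h0, h1⟩ := hmem k hk
    have hkey := key k hk
    have hp : 0 ≤ ρ k ^ (2*k+3) := pow_nonneg h0.le _
    have hlow : g ≤ ρ k := by nlinarith
    have h9 : ρ k ^ (2*k+3) ≤ (0.9:ℝ) ^ (2*k+3) :=
      pow_le_pow_left₀ h0.le (hb k hk) _
    have h9' : (0.9:ℝ) ^ (2*k+3) ≤ (0.9:ℝ) ^ k :=
      pow_le_pow_of_le_one (by norm_num) (by norm_num) (by omega)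
    have : ρ k - g ≤ ρ k ^ (2*k+3) := by
      nlinarith [mul_nonneg (sub_nonneg.mpr hlow) (by positivity : (0:ℝ) ≤ ρ k + g)]
    exact ⟨hlow, by linarith [this.trans (h9.trans h9')]⟩
  have hgt : Tendsto (fun _ : ℕ => g) atTop (nhds g) := tendsto_const_nhds
  have hht : Tendsto (fun k : ℕ => g + (0.9:ℝ) ^ k) atTop (nhds g) := by
    have := tendsto_pow_atTop_nhds_zero_of_lt_one (by norm_num : (0:ℝ) ≤ 0.9)
      (by norm_num : (0.9:ℝ) < 1)
    simpa using hgt.add this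
  refine tendsto_of_tendsto_of_tendsto_of_le_of_le' hgt hht ?_ ?_
  · filter_upwards [eventually_ge_atTop 1] with k hk using (hbound k hk).1
  · filter_upwards [eventually_ge_atTop 1] with k hk using (hbound k hk).2
end

section
/- For every positive integer k, the root ρ_{k/(k+1)} ∈ (0,1) of 1 = x + x^2 - x^{2k+3} satisfies ρ_{k/(k+1)} = ρ_1 + C·ρ_1^{2k}·(1 + o(1)) as k → ∞, where ρ_1 = (√5−1)/2 and C = ρ_1^3/(1 + 2ρ_1). -/
open Filter

set_option maxHeartbeats 1000000 in
/-- Let `ρ₁ = (√5 - 1)/2` (the unique root in `(0,1)` of `1 - x - x²`) and for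
each positive integer `k` let `ρ k ∈ (0,1)` be the unique root of
`x + x² - x^(2k+3) = 1`. Then `ρ k = ρ₁ + C·ρ₁^(2k)·(1 + o(1))` as `k → ∞`
with `C = ρ₁³/(1 + 2ρ₁)`, i.e. `(ρ k - ρ₁)/ρ₁^(2k) → ρ₁³/(1 + 2ρ₁)`. -/
theorem stmt_13 (ρ : ℕ → ℝ)
    (hmem : ∀ k : ℕ, 1 ≤ k → ρ k ∈ Set.Ioo (0:ℝ) 1)
    (hroot : ∀ k : ℕ, 1 ≤ k → ρ k + ρ k ^ 2 - ρ k ^ (2 * k + 3) = 1) :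
    Tendsto
      (fun k : ℕ => (ρ k - (Real.sqrt 5 - 1) / 2) / ((Real.sqrt 5 - 1) / 2) ^ (2 * k))
      atTop
      (nhds (((Real.sqrt 5 - 1) / 2) ^ 3 / (1 + 2 * ((Real.sqrt 5 - 1) / 2)))) := by
  set φ : ℝ := (Real.sqrt 5 - 1) / 2 with hφdef
  have h5 : Real.sqrt 5 ^ 2 = 5 := Real.sq_sqrt (by norm_num)
  have h5lb : (2:ℝ) < Real.sqrt 5 := by nlinarith [Real.sqrt_nonneg 5]
  have h5ub : Real.sqrt 5 < 3 := by nlinarith [Real.sqrt_nonneg 5]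
  have hφpos : 0 < φ := by rw [hφdef]; linarith
  have hφlt1 : φ < 1 := by rw [hφdef]; linarith
  have hφeq : φ + φ ^ 2 = 1 := by rw [hφdef]; nlinarith
  have key : ∀ k : ℕ, 1 ≤ k →
      (ρ k - φ) * (1 + ρ k + φ) = ρ k ^ (2 * k + 3) ∧ φ < ρ k ∧ ρ k ≤ 0.9 := by
    intro k hk
    obtain ⟨hr0, hr1⟩ := hmem k hk
    have hr := hroot k hk
    have hid : (ρ k - φ) * (1 + ρ k + φ) = ρ k ^ (2 * k + 3) := by nlinarith
    have hppos : 0 < ρ k ^ (2 * k + 3) := pow_pos hr0 _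
    have hden : 0 < 1 + ρ k + φ := by linarith
    have hgt : φ < ρ k := by nlinarith
    have hle : ρ k ≤ 0.9 := by
      by_contra h
      push_neg at h
      have h5le : ρ k ^ (2 * k + 3) ≤ ρ k ^ 5 :=
        pow_le_pow_of_le_one hr0.le hr1.le (by omega)
      have hA : (0:ℝ) < 1 - ρ k := by linarith
      have h2 : (0.81:ℝ) < ρ k ^ 2 := by nlinarith
      have h3 : (0.729:ℝ) < ρ k ^ 3 := by nlinarith
      have h4 : (0.6561:ℝ) < ρ k ^ 4 := by nlinarith
      have hB : (0:ℝ) < ρ k ^ 4 + ρ k ^ 3 + ρ k ^ 2 - 1 := by linarith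
      have hprod := mul_pos hA hB
      have heq : (1 - ρ k) * (ρ k ^ 4 + ρ k ^ 3 + ρ k ^ 2 - 1)
          = ρ k + ρ k ^ 2 - 1 - ρ k ^ 5 := by ring
      nlinarith
    exact ⟨hid, hgt, hle⟩
  have heps : ∀ k : ℕ, 1 ≤ k → ρ k - φ ≤ 0.9 ^ (2 * k) := by
    intro k hk
    obtain ⟨hid, hgt, hle⟩ := key k hk
    obtain ⟨hr0, hr1⟩ := hmem k hk
    have hden : (1:ℝ) ≤ 1 + ρ k + φ := by linarith
    have h1 : ρ k ^ (2 * k + 3) ≤ (0.9:ℝ) ^ (2 * k + 3) :=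
      pow_le_pow_left₀ hr0.le hle _
    have h2 : (0.9:ℝ) ^ (2 * k + 3) ≤ 0.9 ^ (2 * k) :=
      pow_le_pow_of_le_one (by norm_num) (by norm_num) (by omega)
    nlinarith [pow_pos hr0 (2*k+3)]
  have h09 : Tendsto (fun k : ℕ => (0.9:ℝ) ^ (2 * k)) atTop (nhds 0) := by
    have := tendsto_pow_atTop_nhds_zero_of_lt_one (r := (0.81:ℝ)) (by norm_num) (by norm_num)
    refine this.congr fun k => ?_
    rw [pow_mul]; norm_num
  have hρtend : Tendsto ρ atTop (nhds φ) := by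
    have h1 : Tendsto (fun k : ℕ => φ + (0.9:ℝ) ^ (2 * k)) atTop (nhds (φ + 0)) :=
      Tendsto.const_add _ h09
    rw [add_zero] at h1
    refine tendsto_of_tendsto_of_tendsto_of_le_of_le' tendsto_const_nhds h1 ?_ ?_
    · filter_upwards [eventually_ge_atTop 1] with k hk
      exact (key k hk).2.1.le
    · filter_upwards [eventually_ge_atTop 1] with k hk
      linarith [heps k hk]
  -- t k := (2k) * (0.9^(2k)/φ) → 0
  have htzero : Tendsto (fun k : ℕ => (2 * k : ℝ) * ((0.9:ℝ) ^ (2 * k) / φ)) atTop (nhds 0) := by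
    have hmain := tendsto_self_mul_const_pow_of_lt_one (r := (0.81:ℝ)) (by norm_num) (by norm_num)
    have := hmain.const_mul (2 / φ)
    rw [mul_zero] at this
    refine this.congr fun k => ?_
    rw [pow_mul]
    norm_num
    ring
  have hGtend : Tendsto (fun k : ℕ => (ρ k / φ) ^ (2 * k)) atTop (nhds 1) := by
    have hbig : Tendsto (fun k : ℕ => Real.exp ((2 * k : ℝ) * ((0.9:ℝ) ^ (2 * k) / φ)))
        atTop (nhds 1) := by
      exact Real.tendsto_exp_nhds_zero_nhds_one.comp htzero
    refine tendsto_of_tendsto_of_tendsto_of_le_of_le' tendsto_const_nhds hbig ?_ ?_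
    · filter_upwards [eventually_ge_atTop 1] with k hk
      obtain ⟨_, hgt, _⟩ := key k hk
      exact one_le_pow₀ (by rw [le_div_iff₀ hφpos]; linarith)
    · filter_upwards [eventually_ge_atTop 1] with k hk
      obtain ⟨_, hgt, _⟩ := key k hk
      obtain ⟨hr0, _⟩ := hmem k hk
      have ht : ρ k / φ = 1 + (ρ k - φ) / φ := by
        rw [sub_div, div_self hφpos.ne']; ring
      have h1 : ρ k / φ ≤ Real.exp ((ρ k - φ) / φ) := by
        rw [ht]; linarith [Real.add_one_le_exp ((ρ k - φ) / φ)]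
      calc (ρ k / φ) ^ (2 * k) ≤ Real.exp ((ρ k - φ) / φ) ^ (2 * k) :=
            pow_le_pow_left₀ (div_nonneg hr0.le hφpos.le) h1 _
        _ = Real.exp ((2 * k : ℝ) * ((ρ k - φ) / φ)) := by
            rw [← Real.exp_nat_mul]; push_cast; ring_nf
        _ ≤ Real.exp ((2 * k : ℝ) * ((0.9:ℝ) ^ (2 * k) / φ)) := by
            apply Real.exp_le_exp.2
            gcongr
            exact heps k hk
  -- H k := ρ k ^3 / (1 + ρ k + φ) → φ^3/(1+2φ)
  have hHtend : Tendsto (fun k : ℕ => ρ k ^ 3 / (1 + ρ k + φ)) atTop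
      (nhds (φ ^ 3 / (1 + 2 * φ))) := by
    have hnum : Tendsto (fun k : ℕ => ρ k ^ 3) atTop (nhds (φ ^ 3)) := hρtend.pow 3
    have hden : Tendsto (fun k : ℕ => 1 + ρ k + φ) atTop (nhds (1 + 2 * φ)) := by
      have := (hρtend.const_add 1).add_const φ
      convert this using 2
      ring
    exact hnum.div hden (by positivity)
  have hprod := hGtend.mul hHtend
  rw [one_mul] at hprod
  refine hprod.congr' ?_
  filter_upwards [eventually_ge_atTop 1] with k hk
  obtain ⟨hid, hgt, _⟩ := key k hk
  obtain ⟨hr0, _⟩ := hmem k hk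
  have hden : (0:ℝ) < 1 + ρ k + φ := by linarith
  have hφpow : (0:ℝ) < φ ^ (2 * k) := pow_pos hφpos _
  have hexp : ρ k ^ (2 * k + 3) = ρ k ^ (2 * k) * ρ k ^ 3 := by rw [pow_add]
  rw [hexp] at hid
  have : ρ k - φ = ρ k ^ (2 * k) * ρ k ^ 3 / (1 + ρ k + φ) := by
    field_simp at hid ⊢
    linarith
  rw [div_pow, this]
  field_simp
end

section
/- Let p, r, c, d, k be positive integers with cr − dp = 1. The triangle with vertices A=(0,0), B=(c(k+1), d(k+1)), C=(p+ck, r+dk) has area (k+1)/2, contains exactly k+3 lattice points on its boundary, and contains no lattice points in its interior. -/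
open MeasureTheory Set


lemma mem_tri {E : Type*} [AddCommGroup E] [Module ℝ E] {x y q : E} :
    q ∈ convexHull ℝ {(0:E), x, y} ↔
      ∃ a b : ℝ, 0 ≤ a ∧ 0 ≤ b ∧ a + b ≤ 1 ∧ q = a • x + b • y := by
  rw [show ({(0:E), x, y} : Set E) = insert 0 {x, y} from rfl,
    convexHull_insert ⟨x, by simp⟩, convexHull_pair, mem_convexJoin]
  constructor
  · rintro ⟨z, hz, w, ⟨t, s, ht, hs, hts, rfl⟩, α, β, hα, hβ, hαβ, rfl⟩
    rw [Set.mem_singleton_iff] at hz; subst hz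
    exact ⟨β * t, β * s, by positivity, by positivity,
      by nlinarith, by simp [smul_add, smul_smul]⟩
  · rintro ⟨a, b, ha, hb, hab, rfl⟩
    rcases eq_or_lt_of_le (by positivity : (0:ℝ) ≤ a + b) with h | h
    · refine ⟨0, rfl, x, left_mem_segment ℝ x y, ?_⟩
      have ha' : a = 0 := by linarith
      have hb' : b = 0 := by linarith
      simp [ha', hb', left_mem_segment]
    · refine ⟨0, rfl, (a/(a+b)) • x + (b/(a+b)) • y,
        ⟨a/(a+b), b/(a+b), by positivity, by positivity, by field_simp, rfl⟩,
        1 - (a+b), a + b, by linarith, by linarith, by ring, ?_⟩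
      rw [smul_zero, zero_add, smul_add, smul_smul, smul_smul,
        mul_div_cancel₀ _ (ne_of_gt h), mul_div_cancel₀ _ (ne_of_gt h)]

lemma T0_eq : convexHull ℝ {(0:ℝ×ℝ), ((1:ℝ),(0:ℝ)), ((0:ℝ),(1:ℝ))} =
    {q : ℝ × ℝ | 0 ≤ q.1 ∧ 0 ≤ q.2 ∧ q.1 + q.2 ≤ 1} := by
  ext q
  rw [mem_tri]
  constructor
  · rintro ⟨a, b, ha, hb, hab, rfl⟩
    simp [Prod.smul_def]
    constructor <;> [skip; constructor] <;> simpa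
  · rintro ⟨h1, h2, h3⟩
    exact ⟨q.1, q.2, h1, h2, h3, by ext <;> simp⟩

lemma null1 : volume {q : ℝ × ℝ | q.1 = 0} = 0 := by
  have : {q : ℝ × ℝ | q.1 = 0} = ({0} : Set ℝ) ×ˢ (Set.univ : Set ℝ) := by
    ext q
    simp only [Set.mem_setOf_eq, Set.mem_prod, Set.mem_singleton_iff, Set.mem_univ, and_true,
      true_and]
  rw [this, show (volume : Measure (ℝ×ℝ)) = (volume : Measure ℝ).prod volume from rfl,
    Measure.prod_prod]
  simp

lemma null2 : volume {q : ℝ × ℝ | q.2 = 0} = 0 := by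
  have : {q : ℝ × ℝ | q.2 = 0} = (Set.univ : Set ℝ) ×ˢ ({0} : Set ℝ) := by
    ext q
    simp only [Set.mem_setOf_eq, Set.mem_prod, Set.mem_singleton_iff, Set.mem_univ, and_true,
      true_and]
  rw [this, show (volume : Measure (ℝ×ℝ)) = (volume : Measure ℝ).prod volume from rfl,
    Measure.prod_prod]
  simp

lemma null3 : volume {q : ℝ × ℝ | q.1 + q.2 = 1} = 0 := by
  have himg : {q : ℝ × ℝ | q.1 + q.2 = 1} =
      (LinearMap.prod (LinearMap.snd ℝ ℝ ℝ) (LinearMap.fst ℝ ℝ ℝ - LinearMap.snd ℝ ℝ ℝ)) ''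
        {q : ℝ × ℝ | q.1 = 1} := by
    ext q
    constructor
    · intro hq
      exact ⟨(1, q.1), rfl, by simp at hq ⊢; ext <;> simp <;> linarith⟩
    · rintro ⟨w, hw, rfl⟩
      simp at hw ⊢
      simp [hw]
  rw [himg, Measure.addHaar_image_linearMap]
  have : volume {q : ℝ × ℝ | q.1 = 1} = 0 := by
    have : {q : ℝ × ℝ | q.1 = 1} = ({1} : Set ℝ) ×ˢ (Set.univ : Set ℝ) := by
      ext q
      simp only [Set.mem_setOf_eq, Set.mem_prod, Set.mem_singleton_iff, Set.mem_univ, and_true]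
    rw [this, show (volume : Measure (ℝ×ℝ)) = (volume : Measure ℝ).prod volume from rfl,
      Measure.prod_prod]
    simp
  rw [this, mul_zero]

lemma volume_T0 : volume (convexHull ℝ {(0:ℝ×ℝ), ((1:ℝ),(0:ℝ)), ((0:ℝ),(1:ℝ))}) =
    ENNReal.ofReal (1/2) := by
  rw [T0_eq]
  have hreg : (volume : Measure ℝ).prod volume
      (regionBetween (fun _ : ℝ => (0:ℝ)) (fun x : ℝ => 1 - x) (Set.Ioo 0 1)) =
      ENNReal.ofReal (1/2) := by
    rw [volume_regionBetween_eq_integral]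
    · congr 1
      simp only [Pi.sub_apply, sub_zero]
      rw [← MeasureTheory.integral_Ioc_eq_integral_Ioo,
        ← intervalIntegral.integral_of_le (by norm_num : (0:ℝ) ≤ 1),
        intervalIntegral.integral_sub intervalIntegrable_const
          intervalIntegral.intervalIntegrable_id, intervalIntegral.integral_const, integral_id]
      norm_num
    · exact integrableOn_const (C := (0:ℝ)) (by simp)
    · exact ((continuous_const.sub continuous_id).integrableOn_Icc).mono_set Set.Ioo_subset_Icc_self
    · exact measurableSet_Ioo
    · intro x hx; simp at hx ⊢; linarith [hx.2]
  have hRsub : regionBetween (fun _ : ℝ => (0:ℝ)) (fun x : ℝ => 1 - x) (Set.Ioo 0 1) ⊆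
      {q : ℝ × ℝ | 0 ≤ q.1 ∧ 0 ≤ q.2 ∧ q.1 + q.2 ≤ 1} := by
    rintro ⟨x, y⟩ ⟨hx, hy⟩
    simp [regionBetween] at hx hy ⊢
    constructor
    · linarith [hx.1]
    constructor
    · linarith [hy.1]
    · linarith [hy.2]
  have hsub2 : {q : ℝ × ℝ | 0 ≤ q.1 ∧ 0 ≤ q.2 ∧ q.1 + q.2 ≤ 1} ⊆
      regionBetween (fun _ : ℝ => (0:ℝ)) (fun x : ℝ => 1 - x) (Set.Ioo 0 1) ∪
      ({q : ℝ × ℝ | q.1 = 0} ∪ {q : ℝ × ℝ | q.2 = 0} ∪ {q : ℝ × ℝ | q.1 + q.2 = 1}) := by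
    rintro ⟨x, y⟩ ⟨h1, h2, h3⟩
    by_cases hx0 : x = 0
    · exact Or.inr (Or.inl (Or.inl hx0))
    by_cases hy0 : y = 0
    · exact Or.inr (Or.inl (Or.inr hy0))
    by_cases hs : x + y = 1
    · exact Or.inr (Or.inr hs)
    left
    have hx : 0 < x := lt_of_le_of_ne h1 (Ne.symm hx0)
    have hy : 0 < y := lt_of_le_of_ne h2 (Ne.symm hy0)
    refine ⟨⟨hx, by linarith [lt_of_le_of_ne h3 hs]⟩, ?_⟩
    simp only [Set.mem_Ioo]
    exact ⟨hy, by linarith [lt_of_le_of_ne h3 hs]⟩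
  have hprod : (volume : Measure (ℝ×ℝ)) = (volume : Measure ℝ).prod volume := rfl
  refine le_antisymm ?_ ?_
  · calc volume {q : ℝ × ℝ | 0 ≤ q.1 ∧ 0 ≤ q.2 ∧ q.1 + q.2 ≤ 1}
        ≤ volume (regionBetween (fun _ : ℝ => (0:ℝ)) (fun x : ℝ => 1 - x) (Set.Ioo 0 1)) +
          volume ({q : ℝ × ℝ | q.1 = 0} ∪ {q : ℝ × ℝ | q.2 = 0} ∪ {q : ℝ × ℝ | q.1 + q.2 = 1}) :=
          le_trans (measure_mono hsub2) (measure_union_le _ _)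
      _ = ENNReal.ofReal (1/2) := by
          rw [measure_union_null (measure_union_null null1 null2) null3, add_zero, hprod, hreg]
  · rw [← hreg, ← hprod]
    exact measure_mono hRsub

lemma tri_volume (u v : ℝ × ℝ) :
    volume (convexHull ℝ {(0:ℝ×ℝ), u, v}) =
      ENNReal.ofReal (|u.1 * v.2 - u.2 * v.1| / 2) := by
  set L := Matrix.toLin (Module.Basis.finTwoProd ℝ) (Module.Basis.finTwoProd ℝ) !![u.1, v.1; u.2, v.2] with hL
  have himg : L '' {(0:ℝ×ℝ), ((1:ℝ),(0:ℝ)), ((0:ℝ),(1:ℝ))} = {(0:ℝ×ℝ), u, v} := by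
    simp only [Set.image_insert_eq, Set.image_singleton, map_zero]
    have h1 : L ((1:ℝ),(0:ℝ)) = u := by
      rw [hL, Matrix.toLin_finTwoProd_apply]; simp
    have h2 : L ((0:ℝ),(1:ℝ)) = v := by
      rw [hL, Matrix.toLin_finTwoProd_apply]; simp
    rw [h1, h2]
  have hdet : LinearMap.det L = u.1 * v.2 - u.2 * v.1 := by
    rw [hL, LinearMap.det_toLin, Matrix.det_fin_two_of]; ring
  rw [← himg, ← LinearMap.image_convexHull, Measure.addHaar_image_linearMap, hdet, volume_T0,
    ← ENNReal.ofReal_mul (abs_nonneg _), mul_one_div]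


/-- Let `p, r, c, d, k` be positive integers with `cr - dp = 1`. The triangle
with vertices `A = (0,0)`, `B = (c(k+1), d(k+1))`, `C = (p+ck, r+dk)` has area
`(k+1)/2`, has exactly `k+3` lattice points on its boundary, and contains no
lattice point in its interior. -/
theorem stmt_15 (p r c d k : ℕ) (hp : 0 < p) (hr : 0 < r) (hc : 0 < c)
    (hd : 0 < d) (hk : 0 < k) (hdet : c * r = d * p + 1) :
    let A : ℝ × ℝ := (0, 0)
    let B : ℝ × ℝ := ((c : ℝ) * (k + 1), (d : ℝ) * (k + 1))
    let C : ℝ × ℝ := ((p : ℝ) + c * k, (r : ℝ) + d * k)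
    let boundary : Set (ℝ × ℝ) :=
      segment ℝ A B ∪ segment ℝ B C ∪ segment ℝ C A
    volume (convexHull ℝ {A, B, C}) = ENNReal.ofReal (((k : ℝ) + 1) / 2) ∧
      {z : ℤ × ℤ | ((z.1 : ℝ), (z.2 : ℝ)) ∈ boundary}.ncard = k + 3 ∧
      {z : ℤ × ℤ | ((z.1 : ℝ), (z.2 : ℝ)) ∈ convexHull ℝ {A, B, C} ∧
        ((z.1 : ℝ), (z.2 : ℝ)) ∉ boundary} = ∅ := by
  intro A B C boundary
  have hZ : (c:ℤ) * r = d * p + 1 := by exact_mod_cast hdet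
  have hR : (c:ℝ) * r = d * p + 1 := by exact_mod_cast hdet
  have hA0 : A = 0 := rfl
  have hsets : ({A, B, C} : Set (ℝ × ℝ)) = {0, B, C} := by rw [hA0]
  have hkpos : (0:ℝ) < (k:ℝ) + 1 := by positivity
  -- Part 1 : area
  have part1 : volume (convexHull ℝ {A, B, C}) = ENNReal.ofReal (((k : ℝ) + 1) / 2) := by
    rw [hsets, tri_volume B C]
    have hBC : B.1 * C.2 - B.2 * C.1 = (k:ℝ) + 1 := by
      show ((c:ℝ) * (k+1)) * ((r:ℝ) + d * k) - ((d:ℝ) * (k+1)) * ((p:ℝ) + c * k) = (k:ℝ) + 1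
      linear_combination ((k:ℝ) + 1) * hR
    rw [hBC, abs_of_pos hkpos]
  -- key classification of lattice points in the hull
  have key : ∀ z : ℤ × ℤ, ((z.1 : ℝ), (z.2 : ℝ)) ∈ convexHull ℝ {A, B, C} →
      (∃ m : ℤ, 0 ≤ m ∧ m ≤ (k:ℤ) + 1 ∧ z.1 = m * c ∧ z.2 = m * d) ∨
        (z.1 = (p:ℤ) + c * k ∧ z.2 = (r:ℤ) + d * k) := by
    intro z hz
    rw [hsets, mem_tri] at hz
    obtain ⟨a, b, ha, hb, hab, hq⟩ := hz
    have hq' : ((z.1 : ℝ), (z.2 : ℝ)) =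
        (a * ((c:ℝ) * (k+1)) + b * ((p:ℝ) + c * k),
         a * ((d:ℝ) * (k+1)) + b * ((r:ℝ) + d * k)) := by
      rw [hq]
      show a • ((c : ℝ) * (k + 1), (d : ℝ) * (k + 1)) +
        b • ((p : ℝ) + c * k, (r : ℝ) + d * k) = _
      simp [Prod.smul_mk, Prod.mk_add_mk, smul_eq_mul]
    rw [Prod.mk.injEq] at hq'
    obtain ⟨h1, h2⟩ := hq'
    have hn : (((-(d:ℤ)) * z.1 + c * z.2 : ℤ) : ℝ) = b := by
      push_cast
      rw [h1, h2]
      linear_combination b * hR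
    have hn0 : (0:ℤ) ≤ -(d:ℤ) * z.1 + c * z.2 := by
      have : (0:ℝ) ≤ (((-(d:ℤ)) * z.1 + c * z.2 : ℤ) : ℝ) := by rw [hn]; exact hb
      exact_mod_cast this
    have hn1 : -(d:ℤ) * z.1 + c * z.2 ≤ 1 := by
      have : (((-(d:ℤ)) * z.1 + c * z.2 : ℤ) : ℝ) ≤ 1 := by rw [hn]; linarith
      exact_mod_cast this
    have hm : (((r:ℤ) * z.1 - p * z.2 : ℤ) : ℝ) = a * ((k:ℝ) + 1) + b * k := by
      push_cast
      rw [h1, h2]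
      linear_combination (a * ((k:ℝ) + 1) + b * (k:ℝ)) * hR
    rcases (by omega : -(d:ℤ) * z.1 + c * z.2 = 0 ∨ -(d:ℤ) * z.1 + c * z.2 = 1) with h | h
    · -- b = 0, on segment A B
      have hb0 : b = 0 := by rw [← hn, h]; norm_num
      left
      refine ⟨(r:ℤ) * z.1 - p * z.2, ?_, ?_, ?_, ?_⟩
      · have : (0:ℝ) ≤ (((r:ℤ) * z.1 - p * z.2 : ℤ) : ℝ) := by
          rw [hm, hb0]; nlinarith
        exact_mod_cast this
      · have : (((r:ℤ) * z.1 - p * z.2 : ℤ) : ℝ) ≤ (k:ℝ) + 1 := by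
          rw [hm, hb0]; nlinarith
        exact_mod_cast this
      · have : (z.1 : ℝ) = (((r:ℤ) * z.1 - p * z.2 : ℤ) : ℝ) * c := by
          rw [hm, hb0, h1, hb0]; ring
        exact_mod_cast this
      · have : (z.2 : ℝ) = (((r:ℤ) * z.1 - p * z.2 : ℤ) : ℝ) * d := by
          rw [hm, hb0, h2, hb0]; ring
        exact_mod_cast this
    · -- b = 1, z = C
      have hb1 : b = 1 := by rw [← hn, h]; norm_num
      have ha0 : a = 0 := by linarith
      right
      constructor
      · have : (z.1 : ℝ) = (p:ℝ) + c * k := by rw [h1, hb1, ha0]; ring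
        exact_mod_cast this
      · have : (z.2 : ℝ) = (r:ℝ) + d * k := by rw [h2, hb1, ha0]; ring
        exact_mod_cast this
  -- lattice points on segment A B
  have bd1 : ∀ m : ℤ, 0 ≤ m → m ≤ (k:ℤ) + 1 →
      (((m * c : ℤ) : ℝ), ((m * d : ℤ) : ℝ)) ∈ segment ℝ A B := by
    intro m hm0 hm1
    have hm0' : (0:ℝ) ≤ (m:ℝ) := by exact_mod_cast hm0
    have hm1' : (m:ℝ) ≤ (k:ℝ) + 1 := by exact_mod_cast hm1
    refine ⟨1 - (m:ℝ) / ((k:ℝ) + 1), (m:ℝ) / ((k:ℝ) + 1), ?_, ?_, by ring, ?_⟩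
    · have : (m:ℝ) / ((k:ℝ) + 1) ≤ 1 := by
        rw [div_le_one hkpos]; exact hm1'
      linarith
    · positivity
    · show (1 - (m:ℝ) / ((k:ℝ) + 1)) • ((0:ℝ), (0:ℝ)) +
        ((m:ℝ) / ((k:ℝ) + 1)) • ((c : ℝ) * (k + 1), (d : ℝ) * (k + 1)) = _
      rw [Prod.smul_mk, Prod.smul_mk, Prod.mk_add_mk, Prod.mk.injEq]
      constructor <;> (simp only [smul_eq_mul, mul_zero, zero_add, Int.cast_mul, Int.cast_natCast]; rw [div_mul_eq_mul_div, ← mul_assoc, mul_div_cancel_right₀ _ hkpos.ne'])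
  -- C is on the boundary
  have bdC : ((((p:ℤ) + c * k : ℤ) : ℝ), (((r:ℤ) + d * k : ℤ) : ℝ)) ∈ boundary := by
    have hCeq : ((((p:ℤ) + c * k : ℤ) : ℝ), (((r:ℤ) + d * k : ℤ) : ℝ)) = C := by
      rw [Prod.mk.injEq]
      constructor <;> push_cast <;> ring
    rw [hCeq]
    exact Or.inr (left_mem_segment ℝ C A)
  -- boundary is inside the hull
  have hullsub : boundary ⊆ convexHull ℝ {A, B, C} := by
    have hAm : A ∈ convexHull ℝ {A, B, C} := subset_convexHull ℝ _ (by simp)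
    have hBm : B ∈ convexHull ℝ {A, B, C} := subset_convexHull ℝ _ (by simp)
    have hCm : C ∈ convexHull ℝ {A, B, C} := subset_convexHull ℝ _ (by simp)
    have hcx := convex_convexHull ℝ ({A, B, C} : Set (ℝ × ℝ))
    rintro x ((h | h) | h)
    · exact hcx.segment_subset hAm hBm h
    · exact hcx.segment_subset hBm hCm h
    · exact hcx.segment_subset hCm hAm h
  -- every lattice point of the hull is on the boundary
  have bd_of_hull : ∀ z : ℤ × ℤ, ((z.1 : ℝ), (z.2 : ℝ)) ∈ convexHull ℝ {A, B, C} →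
      ((z.1 : ℝ), (z.2 : ℝ)) ∈ boundary := by
    intro z hz
    rcases key z hz with ⟨m, hm0, hm1, e1, e2⟩ | ⟨e1, e2⟩
    · have : ((z.1 : ℝ), (z.2 : ℝ)) = (((m * c : ℤ) : ℝ), ((m * d : ℤ) : ℝ)) := by
        rw [e1, e2]
      rw [this]
      exact Or.inl (Or.inl (bd1 m hm0 hm1))
    · have : ((z.1 : ℝ), (z.2 : ℝ)) =
          ((((p:ℤ) + c * k : ℤ) : ℝ), (((r:ℤ) + d * k : ℤ) : ℝ)) := by
        rw [e1, e2]
      rw [this]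
      exact bdC
  -- Part 2 : boundary count
  have part2 : {z : ℤ × ℤ | ((z.1 : ℝ), (z.2 : ℝ)) ∈ boundary}.ncard = k + 3 := by
    classical
    set F : Finset (ℤ × ℤ) :=
      (Finset.Icc (0:ℤ) ((k:ℤ) + 1)).image (fun m => (m * (c:ℤ), m * (d:ℤ))) ∪
        {((p:ℤ) + c * k, (r:ℤ) + d * k)} with hF
    have hset : {z : ℤ × ℤ | ((z.1 : ℝ), (z.2 : ℝ)) ∈ boundary} = ↑F := by
      ext z
      simp only [Set.mem_setOf_eq, Finset.coe_union, Set.mem_union, Finset.coe_image,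
        Set.mem_image, Finset.mem_coe, Finset.mem_Icc, Finset.coe_singleton,
        Set.mem_singleton_iff, hF]
      constructor
      · intro hz
        rcases key z (hullsub hz) with ⟨m, hm0, hm1, e1, e2⟩ | ⟨e1, e2⟩
        · exact Or.inl ⟨m, ⟨hm0, hm1⟩, by rw [Prod.ext_iff]; exact ⟨e1.symm, e2.symm⟩⟩
        · exact Or.inr (by rw [Prod.ext_iff]; exact ⟨e1, e2⟩)
      · rintro (⟨m, ⟨hm0, hm1⟩, hzeq⟩ | hzeq)
        · have e1 : z.1 = m * c := by rw [← hzeq]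
          have e2 : z.2 = m * d := by rw [← hzeq]
          have : ((z.1 : ℝ), (z.2 : ℝ)) = (((m * c : ℤ) : ℝ), ((m * d : ℤ) : ℝ)) := by
            rw [e1, e2]
          rw [this]
          exact Or.inl (Or.inl (bd1 m hm0 hm1))
        · have : ((z.1 : ℝ), (z.2 : ℝ)) =
              ((((p:ℤ) + c * k : ℤ) : ℝ), (((r:ℤ) + d * k : ℤ) : ℝ)) := by
            rw [hzeq]
          rw [this]
          exact bdC
    rw [hset, Set.ncard_coe_finset, hF]
    have hnotmem : ((p:ℤ) + c * k, (r:ℤ) + d * k) ∉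
        (Finset.Icc (0:ℤ) ((k:ℤ) + 1)).image (fun m => (m * (c:ℤ), m * (d:ℤ))) := by
      intro hmem
      rw [Finset.mem_image] at hmem
      obtain ⟨m, _, hmeq⟩ := hmem
      rw [Prod.mk.injEq] at hmeq
      obtain ⟨e1, e2⟩ := hmeq
      have hcr : (c:ℤ) * r = d * p := by linear_combination (d:ℤ) * e1 - (c:ℤ) * e2
      linarith [hZ, hcr]
    rw [Finset.union_comm, Finset.card_union_of_disjoint (by simpa using hnotmem),
      Finset.card_singleton, Finset.card_image_of_injective _ ?_, Int.card_Icc]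
    · simp only [sub_zero]
      omega
    · intro m m' hmm
      rw [Prod.mk.injEq] at hmm
      have hc0 : (c:ℤ) ≠ 0 := by exact_mod_cast hc.ne'
      exact mul_right_cancel₀ hc0 hmm.1
  -- Part 3 : no interior lattice points
  refine ⟨part1, part2, ?_⟩
  ext z
  simp only [Set.mem_setOf_eq, Set.mem_empty_iff_false, iff_false, not_and, not_not]
  exact fun hz => bd_of_hull z hz
end

section
/- For q ∈ ℝ⁺ let ρ_q ∈ (0,1) be the unique solution of Σ_{i=0}^∞ x^{1+i+⌊i/q⌋} = 1, and set Φ(q) = 1/ρ_q. Then Φ is strictly increasing on (0,∞), satisfies 1 < Φ(q) < 2 for all q > 0, Φ(q) → 1 as q → 0⁺, and Φ(q) → 2 as q → ∞. -/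
open Filter Set

private lemma aux_summable {q x : ℝ} (h0 : 0 ≤ x) (h1 : x < 1) :
    Summable (fun i : ℕ => x ^ (1 + i + ⌊(i : ℝ) / q⌋₊)) :=
  Summable.of_nonneg_of_le (fun i => pow_nonneg h0 _)
    (fun i => pow_le_pow_of_le_one h0 h1.le (by omega))
    (summable_geometric_of_lt_one h0 h1)

-- monotone in x
private lemma aux_mono_x {q x y : ℝ} (h0 : 0 ≤ x) (hxy : x ≤ y) (h1 : y < 1) :
    (∑' i : ℕ, x ^ (1 + i + ⌊(i : ℝ) / q⌋₊)) ≤ ∑' i : ℕ, y ^ (1 + i + ⌊(i : ℝ) / q⌋₊) :=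
  Summable.tsum_le_tsum (fun i => pow_le_pow_left₀ h0 hxy _)
    (aux_summable h0 (lt_of_le_of_lt hxy h1)) (aux_summable (h0.trans hxy) h1)

-- strictly increasing in q
private lemma aux_lt_q {q1 q2 x : ℝ} (hq1 : 0 < q1) (hq : q1 < q2) (hx0 : 0 < x) (hx1 : x < 1) :
    (∑' i : ℕ, x ^ (1 + i + ⌊(i : ℝ) / q1⌋₊)) < ∑' i : ℕ, x ^ (1 + i + ⌊(i : ℝ) / q2⌋₊) := by
  have hq2 : 0 < q2 := hq1.trans hq
  set i₀ : ℕ := ⌈q1 * q2 / (q2 - q1)⌉₊ with hi₀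
  have hdpos : 0 < q2 - q1 := by linarith
  have hkey : (i₀ : ℝ) / q1 ≥ (i₀ : ℝ) / q2 + 1 := by
    have h1 : q1 * q2 / (q2 - q1) ≤ (i₀ : ℝ) := Nat.le_ceil _
    rw [ge_iff_le, div_add' _ _ _ hq2.ne', div_le_div_iff₀ hq2 hq1]
    have : q1 * q2 ≤ (i₀ : ℝ) * (q2 - q1) := by
      rw [div_le_iff₀ hdpos] at h1; linarith
    ring_nf
    nlinarith
  have hfl : ∀ i : ℕ, ⌊(i : ℝ) / q2⌋₊ ≤ ⌊(i : ℝ) / q1⌋₊ := fun i =>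
    Nat.floor_le_floor (div_le_div_of_nonneg_left (by positivity) hq1 hq.le)
  have hfl0 : ⌊(i₀ : ℝ) / q2⌋₊ + 1 ≤ ⌊(i₀ : ℝ) / q1⌋₊ := by
    apply Nat.le_floor
    push_cast
    have := Nat.floor_le (show (0:ℝ) ≤ (i₀ : ℝ) / q2 by positivity)
    linarith
  refine Summable.tsum_lt_tsum_of_nonneg (i := i₀) (fun i => pow_nonneg hx0.le _)
    (fun i => pow_le_pow_of_le_one hx0.le hx1.le (by have := hfl i; omega)) ?_
    (aux_summable hx0.le hx1)
  exact pow_lt_pow_right_of_lt_one₀ hx0 hx1 (by omega)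

private lemma aux_half_lt {q : ℝ} (hq : 0 < q) {x : ℝ} (hx0 : 0 < x) (hx1 : x < 1)
    (hsum : (∑' i : ℕ, x ^ (1 + i + ⌊(i : ℝ) / q⌋₊)) = 1) : 1 / 2 < x := by
  by_contra hc
  push_neg at hc
  -- S < ∑ x^(1+i) = x/(1-x) ≤ 1
  have hgs : Summable (fun i : ℕ => x ^ (1 + i)) :=
    (summable_geometric_of_lt_one hx0.le hx1).comp_injective (add_right_injective 1) |>.congr
      (fun i => rfl)
  have hstrict : (∑' i : ℕ, x ^ (1 + i + ⌊(i : ℝ) / q⌋₊)) < ∑' i : ℕ, x ^ (1 + i) := by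
    refine Summable.tsum_lt_tsum_of_nonneg (fun i => pow_nonneg hx0.le _)
      (fun i => pow_le_pow_of_le_one hx0.le hx1.le (by omega)) (i := ⌈q⌉₊) ?_ hgs
    have h1 : 1 ≤ ⌊(⌈q⌉₊ : ℝ) / q⌋₊ := by
      apply Nat.le_floor
      rw [Nat.cast_one, le_div_iff₀ hq, one_mul]
      exact Nat.le_ceil q
    exact pow_lt_pow_right_of_lt_one₀ hx0 hx1 (by omega)
  have hval : (∑' i : ℕ, x ^ (1 + i)) = x / (1 - x) := by
    have : (∑' i : ℕ, x ^ (1 + i)) = ∑' i : ℕ, x * x ^ i := by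
      congr 1; funext i; rw [pow_add, pow_one]
    rw [this, tsum_mul_left, tsum_geometric_of_lt_one hx0.le hx1]
    field_simp
  rw [hsum, hval] at hstrict
  rw [lt_div_iff₀ (by linarith)] at hstrict
  linarith

/-- For `q > 0` let `ρ q ∈ (0,1)` be the unique solution of
`∑_{i=0}^∞ x^(1+i+⌊i/q⌋) = 1` and set `Φ(q) = 1/ρ q`. Then `Φ` is strictly
increasing on `(0,∞)`, satisfies `1 < Φ(q) < 2` for all `q > 0`,
`Φ(q) → 1` as `q → 0⁺`, and `Φ(q) → 2` as `q → ∞`. -/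
theorem stmt_17 (ρ : ℝ → ℝ)
    (hρ : ∀ q : ℝ, 0 < q → ρ q ∈ Set.Ioo (0:ℝ) 1 ∧
      (∑' i : ℕ, ρ q ^ (1 + i + ⌊(i : ℝ) / q⌋₊)) = 1) :
    StrictMonoOn (fun q => 1 / ρ q) (Set.Ioi (0:ℝ)) ∧
      (∀ q : ℝ, 0 < q → 1 < 1 / ρ q ∧ 1 / ρ q < 2) ∧
      Tendsto (fun q => 1 / ρ q) (nhdsWithin 0 (Set.Ioi (0:ℝ))) (nhds 1) ∧
      Tendsto (fun q => 1 / ρ q) atTop (nhds 2) := by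
  -- basic facts
  have hmem : ∀ q : ℝ, 0 < q → 0 < ρ q ∧ ρ q < 1 := fun q hq =>
    ⟨(hρ q hq).1.1, (hρ q hq).1.2⟩
  have hhalf : ∀ q : ℝ, 0 < q → 1 / 2 < ρ q := fun q hq =>
    aux_half_lt hq (hmem q hq).1 (hmem q hq).2 (hρ q hq).2
  -- ρ is strictly antitone
  have hanti : ∀ q1 q2 : ℝ, 0 < q1 → q1 < q2 → ρ q2 < ρ q1 := by
    intro q1 q2 hq1 hq
    have hq2 : 0 < q2 := hq1.trans hq
    by_contra hc
    push_neg at hc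
    have h1 : (∑' i : ℕ, ρ q1 ^ (1 + i + ⌊(i : ℝ) / q1⌋₊)) ≤
        ∑' i : ℕ, ρ q2 ^ (1 + i + ⌊(i : ℝ) / q1⌋₊) :=
      aux_mono_x (hmem q1 hq1).1.le hc (hmem q2 hq2).2
    have h2 : (∑' i : ℕ, ρ q2 ^ (1 + i + ⌊(i : ℝ) / q1⌋₊)) <
        ∑' i : ℕ, ρ q2 ^ (1 + i + ⌊(i : ℝ) / q2⌋₊) :=
      aux_lt_q hq1 hq (hmem q2 hq2).1 (hmem q2 hq2).2
    rw [(hρ q1 hq1).2, (hρ q2 hq2).2] at *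
    linarith
  refine ⟨?_, ?_, ?_, ?_⟩
  · intro q1 h1 q2 h2 hlt
    simp only [Set.mem_Ioi] at h1 h2
    have := hanti q1 q2 h1 hlt
    have hp1 := (hmem q1 h1).1
    have hp2 := (hmem q2 h2).1
    exact one_div_lt_one_div_of_lt hp2 this
  · intro q hq
    constructor
    · exact one_lt_one_div (hmem q hq).1 (hmem q hq).2
    · rw [div_lt_iff₀ (hmem q hq).1]
      have := hhalf q hq; linarith
  · -- q → 0⁺, 1/ρ → 1 i.e. ρ → 1
    have hρt : Tendsto ρ (nhdsWithin 0 (Set.Ioi (0:ℝ))) (nhds 1) := by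
      rw [Metric.tendsto_nhdsWithin_nhds]
      intro ε hε
      set e : ℝ := min ε (1/2) with he_def
      have he : 0 < e := lt_min hε (by norm_num)
      have he2 : e ≤ 1/2 := min_le_right _ _
      set b : ℝ := 1 - e with hb_def
      have hb0 : 0 ≤ b := by simp only [hb_def]; linarith
      have hb1 : b < 1 := by simp only [hb_def]; linarith
      obtain ⟨m, hm⟩ := exists_pow_lt_of_lt_one he hb1
      refine ⟨1 / (m + 1 : ℝ), by positivity, ?_⟩
      intro q hqpos hqd
      simp only [Set.mem_Ioi] at hqpos
      rw [Real.dist_eq, sub_zero, abs_of_pos hqpos] at hqd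
      have hx0 := (hmem q hqpos).1
      have hx1 := (hmem q hqpos).2
      -- ρ q > b
      have hgt : b < ρ q := by
        by_contra hc
        push_neg at hc
        set x : ℝ := ρ q with hx_def
        -- floors are large
        have hfl : ∀ i : ℕ, (m + 1) * i ≤ ⌊(i : ℝ) / q⌋₊ := by
          intro i
          apply Nat.le_floor
          rw [le_div_iff₀ hqpos]
          push_cast
          have h1 : (m + 1 : ℝ) * q ≤ 1 := by
            have h := hqd.le
            rw [le_div_iff₀ (by positivity : (0:ℝ) < (m:ℝ) + 1)] at h
            linarith
          nlinarith [Nat.cast_nonneg (α := ℝ) i]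
        have hxm : x ^ (m + 2) < 1 := by
          apply pow_lt_one₀ hx0.le hx1; omega
        have hgsum : Summable (fun i : ℕ => x ^ (1 + (m + 2) * i)) := by
          have : (fun i : ℕ => x ^ (1 + (m + 2) * i)) = fun i : ℕ => x * (x ^ (m + 2)) ^ i := by
            funext i; rw [add_comm 1 ((m+2)*i), pow_succ', pow_mul]
          rw [this]
          exact (summable_geometric_of_lt_one (by positivity) hxm).mul_left x
        have hle : (∑' i : ℕ, x ^ (1 + i + ⌊(i : ℝ) / q⌋₊)) ≤
            ∑' i : ℕ, x ^ (1 + (m + 2) * i) := by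
          refine Summable.tsum_le_tsum (fun i => pow_le_pow_of_le_one hx0.le hx1.le ?_)
            (aux_summable hx0.le hx1) hgsum
          have h := hfl i; have h2 : (m+2)*i = (m+1)*i + i := by ring
          omega
        have hval : (∑' i : ℕ, x ^ (1 + (m + 2) * i)) = x / (1 - x ^ (m + 2)) := by
          have h1 : (fun i : ℕ => x ^ (1 + (m + 2) * i)) = fun i : ℕ => x * (x ^ (m + 2)) ^ i := by
            funext i; rw [add_comm 1 ((m+2)*i), pow_succ', pow_mul]
          rw [h1, tsum_mul_left, tsum_geometric_of_lt_one (by positivity) hxm]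
          field_simp
        rw [(hρ q hqpos).2, hval] at hle
        rw [le_div_iff₀ (by linarith)] at hle
        -- so x + x^(m+2) ≥ 1; but x ≤ b gives contradiction
        have h2 : x ^ (m + 2) ≤ b ^ (m + 2) := pow_le_pow_left₀ hx0.le hc _
        have h3 : b ^ (m + 2) ≤ b ^ m := pow_le_pow_of_le_one hb0 hb1.le (by omega)
        nlinarith
      rw [Real.dist_eq, abs_lt]
      constructor
      · have : e ≤ ε := min_le_left _ _
        simp only [hb_def] at hgt; linarith
      · linarith
    have := hρt.inv₀ (one_ne_zero)
    simp only [inv_one] at this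
    exact this.congr (fun q => (one_div _).symm)
  · -- q → ∞, 1/ρ → 2 i.e. ρ → 1/2
    have hρt : Tendsto ρ atTop (nhds (1/2)) := by
      rw [Metric.tendsto_atTop]
      intro ε hε
      set e : ℝ := min ε (1/4) with he_def
      have he : 0 < e := lt_min hε (by norm_num)
      have he2 : e ≤ 1/4 := min_le_right _ _
      set a : ℝ := 1/2 + e with ha_def
      have ha0 : 0 < a := by simp only [ha_def]; linarith
      have ha1 : a < 1 := by simp only [ha_def]; linarith
      obtain ⟨n, hn⟩ := exists_pow_lt_of_lt_one (show (0:ℝ) < 2 * e by linarith) ha1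
      refine ⟨max (n : ℝ) 1, ?_⟩
      intro q hq
      have hqn : (n : ℝ) ≤ q := le_trans (le_max_left _ _) hq
      have hqpos : (0:ℝ) < q := lt_of_lt_of_le (by norm_num) (le_trans (le_max_right _ _) hq)
      have hx0 := (hmem q hqpos).1
      have hx1 := (hmem q hqpos).2
      have hgthalf := hhalf q hqpos
      -- ρ q < a
      have hlt : ρ q < a := by
        by_contra hc
        push_neg at hc
        set x : ℝ := ρ q with hx_def
        -- partial sum over range n with zero floors
        have hfl : ∀ i ∈ Finset.range n, x ^ (1 + i + ⌊(i : ℝ) / q⌋₊) = x ^ (1 + i) := by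
          intro i hi
          rw [Finset.mem_range] at hi
          have : ⌊(i : ℝ) / q⌋₊ = 0 := by
            apply Nat.floor_eq_zero.mpr
            rw [div_lt_one hqpos]
            calc (i : ℝ) < n := by exact_mod_cast hi
            _ ≤ q := hqn
          rw [this, Nat.add_zero]
        have hps : (∑ i ∈ Finset.range n, x ^ (1 + i + ⌊(i : ℝ) / q⌋₊)) ≤
            ∑' i : ℕ, x ^ (1 + i + ⌊(i : ℝ) / q⌋₊) :=
          Summable.sum_le_tsum _ (fun i _ => pow_nonneg hx0.le _) (aux_summable hx0.le hx1)
        rw [(hρ q hqpos).2, Finset.sum_congr rfl hfl] at hps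
        have h2 : (∑ i ∈ Finset.range n, a ^ (1 + i)) ≤ ∑ i ∈ Finset.range n, x ^ (1 + i) :=
          Finset.sum_le_sum (fun i _ => pow_le_pow_left₀ ha0.le hc _)
        have h3 : (∑ i ∈ Finset.range n, a ^ (1 + i)) = a * ((a ^ n - 1) / (a - 1)) := by
          have : (∑ i ∈ Finset.range n, a ^ (1 + i)) = a * ∑ i ∈ Finset.range n, a ^ i := by
            rw [Finset.mul_sum]
            exact Finset.sum_congr rfl (fun i _ => by rw [pow_add, pow_one])
          rw [this, geom_sum_eq (ne_of_lt ha1)]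
        have h4 : 1 < a * ((a ^ n - 1) / (a - 1)) := by
          rw [mul_div_assoc', lt_div_iff_of_neg (by linarith : a - 1 < 0)]
          have hp : (0:ℝ) < a ^ n := pow_pos ha0 n
          have hh : 0 < (1 - a) * a ^ n := mul_pos (by linarith) hp
          have h2e : 2 * e = 2 * a - 1 := by simp only [ha_def]; ring
          nlinarith
        linarith
      rw [Real.dist_eq, abs_lt]
      have : e ≤ ε := min_le_left _ _
      constructor
      · linarith
      · simp only [ha_def] at hlt; linarith
    have := hρt.inv₀ (by norm_num : (1/2:ℝ) ≠ 0)
    norm_num at this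
    exact this.congr (fun q => (one_div _).symm)
end

section
/- Let Φ(q) = 1/ρ_q where ρ_q ∈ (0,1) solves Σ_{i=0}^∞ x^{1+i+⌊i/q⌋} = 1. Then Φ is left-continuous at every positive rational q and continuous at every positive irrational q; moreover at every positive rational q = c/d (irreducible), lim_{δ→0⁺} Φ(q+δ) > Φ(q), i.e., Φ has a jump discontinuity from the right at every positive rational. -/
open Filter Set

namespace Stmt18Aux

/-- floor-exponent -/
noncomputable def e (q : ℝ) (i : ℕ) : ℕ := 1 + i + ⌊(i : ℝ) / q⌋₊
/-- ceil-exponent (right-limit) -/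
noncomputable def e' (q : ℝ) (i : ℕ) : ℕ := if i = 0 then 1 else i + ⌈(i : ℝ) / q⌉₊

lemma e_ge (q : ℝ) (i : ℕ) : 1 + i ≤ e q i := Nat.le_add_right _ _
lemma e'_ge (q : ℝ) (i : ℕ) : i ≤ e' q i := by unfold e'; split <;> omega
lemma e_zero (q : ℝ) : e q 0 = 1 := by simp [e]
lemma e'_zero (q : ℝ) : e' q 0 = 1 := by simp [e']

lemma summable_exp {x : ℝ} (hx0 : 0 ≤ x) (hx1 : x < 1) (f : ℕ → ℕ) (hf : ∀ i, i ≤ f i) :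
    Summable (fun i => x ^ f i) :=
  Summable.of_nonneg_of_le (fun i => pow_nonneg hx0 _)
    (fun i => pow_le_pow_of_le_one hx0 hx1.le (hf i))
    (summable_geometric_of_lt_one hx0 hx1)

lemma summable_e {x : ℝ} (hx0 : 0 ≤ x) (hx1 : x < 1) (q : ℝ) :
    Summable (fun i => x ^ e q i) :=
  summable_exp hx0 hx1 _ (fun i => le_trans (Nat.le_add_left _ _) (e_ge q i))

lemma summable_e' {x : ℝ} (hx0 : 0 ≤ x) (hx1 : x < 1) (q : ℝ) :
    Summable (fun i => x ^ e' q i) :=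
  summable_exp hx0 hx1 _ (e'_ge q)

noncomputable def F (q x : ℝ) : ℝ := ∑' i : ℕ, x ^ e q i
noncomputable def G (q x : ℝ) : ℝ := ∑' i : ℕ, x ^ e' q i

lemma F_mono_x (q : ℝ) {x y : ℝ} (hx0 : 0 ≤ x) (hxy : x ≤ y) (hy : y < 1) :
    F q x ≤ F q y :=
  Summable.tsum_le_tsum (fun i => pow_le_pow_left₀ hx0 hxy _)
    (summable_e hx0 (lt_of_le_of_lt hxy hy) q) (summable_e (hx0.trans hxy) hy q)

lemma F_strict_x (q : ℝ) {x y : ℝ} (hx0 : 0 ≤ x) (hxy : x < y) (hy : y < 1) :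
    F q x < F q y := by
  refine Summable.tsum_lt_tsum (i := 0) (fun i => pow_le_pow_left₀ hx0 hxy.le _) ?_
    (summable_e hx0 (hxy.trans hy) q) (summable_e (hx0.trans hxy.le) hy q)
  rw [e_zero, pow_one, pow_one]; exact hxy

lemma G_mono_x (q : ℝ) {x y : ℝ} (hx0 : 0 ≤ x) (hxy : x ≤ y) (hy : y < 1) :
    G q x ≤ G q y :=
  Summable.tsum_le_tsum (fun i => pow_le_pow_left₀ hx0 hxy _)
    (summable_e' hx0 (lt_of_le_of_lt hxy hy) q) (summable_e' (hx0.trans hxy) hy q)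

lemma e_anti_q {t q : ℝ} (ht : 0 < t) (htq : t ≤ q) (i : ℕ) : e q i ≤ e t i := by
  unfold e
  have : (i : ℝ) / q ≤ (i : ℝ) / t :=
    div_le_div_of_nonneg_left (Nat.cast_nonneg i) ht htq
  have := Nat.floor_mono this
  omega

lemma F_mono_q {t q x : ℝ} (ht : 0 < t) (htq : t ≤ q) (hx0 : 0 ≤ x) (hx1 : x < 1) :
    F t x ≤ F q x :=
  Summable.tsum_le_tsum (fun i => pow_le_pow_of_le_one hx0 hx1.le (e_anti_q ht htq i))
    (summable_e hx0 hx1 t) (summable_e hx0 hx1 q)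

lemma e_le_e' {q t : ℝ} (hq : 0 < q) (hqt : q < t) (i : ℕ) : e t i ≤ e' q i := by
  rcases Nat.eq_zero_or_pos i with rfl | hi
  · rw [e_zero, e'_zero]
  · have hipos : (0 : ℝ) < i := by exact_mod_cast hi
    have h1 : (i : ℝ) / t < (i : ℝ) / q := div_lt_div_of_pos_left hipos hq hqt
    have h2 : (i : ℝ) / t < (⌈(i : ℝ) / q⌉₊ : ℝ) := h1.trans_le (Nat.le_ceil _)
    have h3 : ⌊(i : ℝ) / t⌋₊ < ⌈(i : ℝ) / q⌉₊ :=
      (Nat.floor_lt (div_nonneg (Nat.cast_nonneg i) (hq.trans hqt).le)).2 h2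
    unfold e e'
    rw [if_neg (Nat.pos_iff_ne_zero.mp hi)]
    omega

lemma e'_le_e (q : ℝ) (i : ℕ) : e' q i ≤ e q i := by
  rcases Nat.eq_zero_or_pos i with rfl | hi
  · rw [e_zero, e'_zero]
  · have := Nat.ceil_le_floor_add_one ((i : ℝ) / q)
    unfold e e'
    rw [if_neg (Nat.pos_iff_ne_zero.mp hi)]
    omega

lemma F_le_G {q x : ℝ} (hx0 : 0 ≤ x) (hx1 : x < 1) : F q x ≤ G q x :=
  Summable.tsum_le_tsum (fun i => pow_le_pow_of_le_one hx0 hx1.le (e'_le_e q i))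
    (summable_e hx0 hx1 q) (summable_e' hx0 hx1 q)

lemma G_le_F {q t x : ℝ} (hq : 0 < q) (hqt : q < t) (hx0 : 0 ≤ x) (hx1 : x < 1) :
    G q x ≤ F t x :=
  Summable.tsum_le_tsum (fun i => pow_le_pow_of_le_one hx0 hx1.le (e_le_e' hq hqt i))
    (summable_e' hx0 hx1 q) (summable_e hx0 hx1 t)

lemma tendsto_div_nat {q : ℝ} (hq : 0 < q) (i : ℕ) (l : Filter ℝ) (hl : l ≤ nhds q) :
    Tendsto (fun t : ℝ => (i : ℝ) / t) l (nhds ((i : ℝ) / q)) :=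
  (Tendsto.div tendsto_const_nhds tendsto_id hq.ne').mono_left hl

lemma ev_left {q : ℝ} (hq : 0 < q) (i : ℕ) : ∀ᶠ t in nhdsWithin q (Iio q), e t i = e q i := by
  have hcont := tendsto_div_nat hq i _ (nhdsWithin_le_nhds (s := Iio q))
  have hlt : (i : ℝ) / q < (⌊(i : ℝ) / q⌋₊ : ℝ) + 1 := Nat.lt_floor_add_one _
  have h1 : ∀ᶠ t in nhdsWithin q (Iio q), (i : ℝ) / t < (⌊(i : ℝ) / q⌋₊ : ℝ) + 1 :=
    (tendsto_order.1 hcont).2 _ hlt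
  have h2 : ∀ᶠ t in nhdsWithin q (Iio q), t ∈ Ioo 0 q :=
    Ioo_mem_nhdsLT_of_mem ⟨hq, le_refl q⟩
  filter_upwards [h1, h2] with t h1t h2t
  have hle : (i : ℝ) / q ≤ (i : ℝ) / t :=
    div_le_div_of_nonneg_left (Nat.cast_nonneg i) h2t.1 h2t.2.le
  have hfl : ⌊(i : ℝ) / t⌋₊ = ⌊(i : ℝ) / q⌋₊ := by
    refine le_antisymm ?_ (Nat.floor_mono hle)
    have := (Nat.floor_lt (div_nonneg (Nat.cast_nonneg i) h2t.1.le)).2 (by exact_mod_cast h1t)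
    omega
  unfold e; rw [hfl]

lemma ev_right {q : ℝ} (hq : 0 < q) (i : ℕ) : ∀ᶠ t in nhdsWithin q (Ioi q), e t i = e' q i := by
  rcases Nat.eq_zero_or_pos i with rfl | hi
  · exact Eventually.of_forall fun t => by rw [e_zero, e'_zero]
  · have hipos : (0 : ℝ) < i := by exact_mod_cast hi
    set m := ⌈(i : ℝ) / q⌉₊ with hm
    have hm1 : 1 ≤ m := Nat.one_le_ceil_iff.2 (div_pos hipos hq)
    have hcont := tendsto_div_nat hq i _ (nhdsWithin_le_nhds (s := Ioi q))
    have hlt : (m : ℝ) - 1 < (i : ℝ) / q := by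
      have := Nat.ceil_lt_add_one (a := (i : ℝ) / q) (div_nonneg (Nat.cast_nonneg i) hq.le)
      linarith
    have h1 : ∀ᶠ t in nhdsWithin q (Ioi q), (m : ℝ) - 1 < (i : ℝ) / t :=
      (tendsto_order.1 hcont).1 _ hlt
    have h2 : ∀ᶠ t in nhdsWithin q (Ioi q), t ∈ Ioi q := eventually_mem_nhdsWithin
    filter_upwards [h1, h2] with t h1t h2t
    have ht : q < t := h2t
    have hup : (i : ℝ) / t < m := by
      have : (i : ℝ) / t < (i : ℝ) / q := div_lt_div_of_pos_left hipos hq ht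
      exact this.trans_le (Nat.le_ceil _)
    have hfl : ⌊(i : ℝ) / t⌋₊ = m - 1 := by
      rw [Nat.floor_eq_iff (div_nonneg (Nat.cast_nonneg i) (hq.trans ht).le)]
      constructor
      · rw [Nat.cast_sub hm1, Nat.cast_one]; exact h1t.le
      · rw [Nat.cast_sub hm1, Nat.cast_one]; linarith
    unfold e e'
    rw [if_neg (Nat.pos_iff_ne_zero.mp hi), hfl]
    omega

lemma tendsto_F_left {q x : ℝ} (hq : 0 < q) (hx0 : 0 ≤ x) (hx1 : x < 1) :
    Tendsto (fun t => F t x) (nhdsWithin q (Iio q)) (nhds (F q x)) := by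
  refine tendsto_tsum_of_dominated_convergence (bound := fun i => x ^ (1 + i))
    (summable_exp hx0 hx1 _ fun i => Nat.le_add_left _ _) (fun i => ?_) ?_
  · exact tendsto_const_nhds.congr' ((ev_left hq i).mono fun t h => by
      show x ^ e q i = x ^ e t i; rw [h])
  · refine Eventually.of_forall fun t => fun i => ?_
    rw [Real.norm_of_nonneg (pow_nonneg hx0 _)]
    exact pow_le_pow_of_le_one hx0 hx1.le (e_ge t i)

lemma tendsto_F_right {q x : ℝ} (hq : 0 < q) (hx0 : 0 ≤ x) (hx1 : x < 1) :
    Tendsto (fun t => F t x) (nhdsWithin q (Ioi q)) (nhds (G q x)) := by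
  refine tendsto_tsum_of_dominated_convergence (bound := fun i => x ^ (1 + i))
    (summable_exp hx0 hx1 _ fun i => Nat.le_add_left _ _) (fun i => ?_) ?_
  · exact tendsto_const_nhds.congr' ((ev_right hq i).mono fun t h => by
      show x ^ e' q i = x ^ e t i; rw [h])
  · refine Eventually.of_forall fun t => fun i => ?_
    rw [Real.norm_of_nonneg (pow_nonneg hx0 _)]
    exact pow_le_pow_of_le_one hx0 hx1.le (e_ge t i)

end Stmt18Aux

namespace Stmt18Aux

variable {ρ : ℝ → ℝ}

lemma F_rho (hρ : ∀ q : ℝ, 0 < q → ρ q ∈ Set.Ioo (0:ℝ) 1 ∧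
      (∑' i : ℕ, ρ q ^ (1 + i + ⌊(i : ℝ) / q⌋₊)) = 1) {q : ℝ} (hq : 0 < q) :
    F q (ρ q) = 1 := (hρ q hq).2

lemma rho_anti (hρ : ∀ q : ℝ, 0 < q → ρ q ∈ Set.Ioo (0:ℝ) 1 ∧
      (∑' i : ℕ, ρ q ^ (1 + i + ⌊(i : ℝ) / q⌋₊)) = 1) {t q : ℝ}
    (ht : 0 < t) (htq : t < q) : ρ q ≤ ρ t := by
  by_contra h
  push_neg at h
  have hq : 0 < q := ht.trans htq
  have h1 : F t (ρ t) < F t (ρ q) := F_strict_x t (hρ t ht).1.1.le h (hρ q hq).1.2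
  have h2 : F t (ρ q) ≤ F q (ρ q) := F_mono_q ht htq.le (hρ q hq).1.1.le (hρ q hq).1.2
  rw [F_rho hρ ht] at h1
  rw [F_rho hρ hq] at h2
  linarith

lemma rho_left (hρ : ∀ q : ℝ, 0 < q → ρ q ∈ Set.Ioo (0:ℝ) 1 ∧
      (∑' i : ℕ, ρ q ^ (1 + i + ⌊(i : ℝ) / q⌋₊)) = 1) {q : ℝ} (hq : 0 < q) :
    Tendsto ρ (nhdsWithin q (Iio q)) (nhds (ρ q)) := by
  rw [tendsto_order]
  constructor
  · intro b hb
    filter_upwards [Ioo_mem_nhdsLT_of_mem (show q ∈ Ioc (0:ℝ) q from ⟨hq, le_refl q⟩)]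
      with t ht
    exact hb.trans_le (rho_anti hρ ht.1 ht.2)
  · intro y hy
    rcases lt_or_ge y 1 with hy1 | hy1
    · have hy0 : 0 ≤ y := ((hρ q hq).1.1.trans hy).le
      have hFy : 1 < F q y := by
        rw [← F_rho hρ hq]; exact F_strict_x q (hρ q hq).1.1.le hy hy1
      have h1 : ∀ᶠ t in nhdsWithin q (Iio q), 1 < F t y :=
        (tendsto_order.1 (tendsto_F_left hq hy0 hy1)).1 _ hFy
      filter_upwards [h1, Ioo_mem_nhdsLT_of_mem (show q ∈ Ioc (0:ℝ) q from ⟨hq, le_refl q⟩)]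
        with t h1t h2t
      by_contra hcon
      push_neg at hcon
      have h3 : F t y ≤ F t (ρ t) := F_mono_x t hy0 hcon (hρ t h2t.1).1.2
      rw [F_rho hρ h2t.1] at h3
      linarith
    · filter_upwards [Ioo_mem_nhdsLT_of_mem (show q ∈ Ioc (0:ℝ) q from ⟨hq, le_refl q⟩)]
        with t ht
      exact lt_of_lt_of_le (hρ t ht.1).1.2 hy1

lemma right_lim (hρ : ∀ q : ℝ, 0 < q → ρ q ∈ Set.Ioo (0:ℝ) 1 ∧
      (∑' i : ℕ, ρ q ^ (1 + i + ⌊(i : ℝ) / q⌋₊)) = 1) {q : ℝ} (hq : 0 < q) :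
    ∃ L, 0 < L ∧ L < 1 ∧ L ≤ ρ q ∧ Tendsto ρ (nhdsWithin q (Ioi q)) (nhds L) ∧ G q L = 1 := by
  set S := ρ '' Ioo q (q+1) with hS
  have hq1 : q < q + 1 := by linarith
  have hhalf : q < q + 1/2 ∧ q + 1/2 < q + 1 := by constructor <;> linarith
  have hne : S.Nonempty := ⟨ρ (q + 1/2), ⟨q + 1/2, ⟨hhalf.1, hhalf.2⟩, rfl⟩⟩
  have hub : ∀ x ∈ S, x ≤ ρ q := by
    rintro x ⟨t, ht, rfl⟩; exact rho_anti hρ hq ht.1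
  have hbdd : BddAbove S := ⟨ρ q, fun x hx => hub x hx⟩
  set L := sSup S with hL
  have hLle : L ≤ ρ q := csSup_le hne hub
  have hL0 : 0 < L :=
    lt_of_lt_of_le (hρ (q + 1/2) (hq.trans hhalf.1)).1.1
      (le_csSup hbdd ⟨q + 1/2, ⟨hhalf.1, hhalf.2⟩, rfl⟩)
  have hL1 : L < 1 := lt_of_le_of_lt hLle (hρ q hq).1.2
  have hmemL : ∀ t ∈ Ioo q (q+1), ρ t ≤ L := fun t ht => le_csSup hbdd ⟨t, ht, rfl⟩
  have htend : Tendsto ρ (nhdsWithin q (Ioi q)) (nhds L) := by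
    rw [tendsto_order]
    constructor
    · intro b hb
      obtain ⟨x, ⟨t₀, ht₀, rfl⟩, hx⟩ := exists_lt_of_lt_csSup hne hb
      filter_upwards [Ioo_mem_nhdsGT_of_mem (show q ∈ Ico q t₀ from ⟨le_refl q, ht₀.1⟩)]
        with t ht
      exact hx.trans_le (rho_anti hρ (hq.trans ht.1) ht.2)
    · intro y hy
      filter_upwards [Ioo_mem_nhdsGT_of_mem (show q ∈ Ico q (q+1) from ⟨le_refl q, hq1⟩)]
        with t ht
      exact lt_of_le_of_lt (hmemL t ht) hy
  have hGge : 1 ≤ G q L := by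
    refine ge_of_tendsto (tendsto_F_right hq hL0.le hL1) ?_
    filter_upwards [Ioo_mem_nhdsGT_of_mem (show q ∈ Ico q (q+1) from ⟨le_refl q, hq1⟩)]
      with t ht
    have ht0 : 0 < t := hq.trans ht.1
    have h1 : F t (ρ t) ≤ F t L := F_mono_x t (hρ t ht0).1.1.le (hmemL t ht) hL1
    rw [F_rho hρ ht0] at h1
    exact h1
  have hGle : G q L ≤ 1 := by
    refine Summable.tsum_le_of_sum_le (summable_e' hL0.le hL1 q) fun s => ?_
    have htends : Tendsto (fun t => ∑ i ∈ s, (ρ t) ^ e' q i) (nhdsWithin q (Ioi q))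
        (nhds (∑ i ∈ s, L ^ e' q i)) :=
      tendsto_finset_sum s (fun i _ => htend.pow _)
    refine le_of_tendsto htends ?_
    filter_upwards [Ioo_mem_nhdsGT_of_mem (show q ∈ Ico q (q+1) from ⟨le_refl q, hq1⟩)]
      with t ht
    have ht0 : 0 < t := hq.trans ht.1
    have hmem := (hρ t ht0).1
    calc ∑ i ∈ s, (ρ t) ^ e' q i
        ≤ G q (ρ t) :=
          Summable.sum_le_tsum s (fun i _ => pow_nonneg hmem.1.le _) (summable_e' hmem.1.le hmem.2 q)
      _ ≤ F t (ρ t) := G_le_F hq ht.1 hmem.1.le hmem.2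
      _ = 1 := F_rho hρ ht0
  exact ⟨L, hL0, hL1, hLle, htend, le_antisymm hGle hGge⟩

end Stmt18Aux

open Stmt18Aux

/-- For `q > 0` let `ρ q ∈ (0,1)` be the unique solution of
`∑_{i=0}^∞ x^(1+i+⌊i/q⌋) = 1` and set `Φ(q) = 1/ρ q`. Then `Φ` is
left-continuous at every positive rational point and continuous at every
positive irrational point; moreover at every positive rational `q` the right
limit `lim_{δ→0⁺} Φ(q+δ)` exists and is strictly greater than `Φ(q)`, i.e.
`Φ` has a jump discontinuity from the right at every positive rational. -/
theorem stmt_18 (ρ : ℝ → ℝ)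
    (hρ : ∀ q : ℝ, 0 < q → ρ q ∈ Set.Ioo (0:ℝ) 1 ∧
      (∑' i : ℕ, ρ q ^ (1 + i + ⌊(i : ℝ) / q⌋₊)) = 1) :
    (∀ q : ℝ, 0 < q → (∃ a : ℚ, (a : ℝ) = q) →
      Tendsto (fun t => 1 / ρ t) (nhdsWithin q (Set.Ioo 0 q))
        (nhds (1 / ρ q)) ∧
      ∃ L : ℝ, Tendsto (fun t => 1 / ρ t) (nhdsWithin q (Set.Ioi q))
          (nhds L) ∧ 1 / ρ q < L) ∧
    (∀ q : ℝ, 0 < q → Irrational q →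
      ContinuousWithinAt (fun t => 1 / ρ t) (Set.Ioi (0:ℝ)) q) := by
  constructor
  · rintro q hq ⟨a, ha⟩
    obtain ⟨L, hL0, hL1, hLle, htend, hG1⟩ := right_lim hρ hq
    refine ⟨?_, 1/L, ?_, ?_⟩
    · rw [nhdsWithin_Ioo_eq_nhdsLT hq]
      simpa only [one_div] using (rho_left hρ hq).inv₀ (ne_of_gt (hρ q hq).1.1)
    · simpa only [one_div] using htend.inv₀ hL0.ne'
    · -- strict jump
      have ha_pos : 0 < a := by
        have : (0:ℝ) < (a:ℝ) := ha ▸ hq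
        exact_mod_cast this
      have hnum : 0 < a.num := Rat.num_pos.2 ha_pos
      set i₀ : ℕ := a.num.toNat with hi₀def
      have hi₀ : i₀ ≠ 0 := by
        simp only [hi₀def, ne_eq, Int.toNat_eq_zero, not_le]
        exact hnum
      have hcast : (i₀ : ℝ) = (a.num : ℝ) := by
        rw [hi₀def]
        exact_mod_cast congrArg (Int.cast : ℤ → ℝ) (Int.toNat_of_nonneg hnum.le)
      have hden : ((a.den : ℝ)) ≠ 0 := by exact_mod_cast a.den_nz
      have hq' : q = (a.num : ℝ) / (a.den : ℝ) := by rw [← ha, Rat.cast_def]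
      have key : (i₀ : ℝ) / q = (a.den : ℕ) := by
        rw [eq_comm, eq_div_iff (ne_of_gt hq), hq', hcast]
        field_simp
      have hflo : ⌊(i₀:ℝ)/q⌋₊ = a.den := by rw [key, Nat.floor_natCast]
      have hcei : ⌈(i₀:ℝ)/q⌉₊ = a.den := by rw [key, Nat.ceil_natCast]
      have hee : e' q i₀ < e q i₀ := by
        unfold e e'; rw [if_neg hi₀, hflo, hcei]; omega
      have hmem := (hρ q hq).1
      have hterm : (ρ q) ^ e q i₀ < (ρ q) ^ e' q i₀ :=
        pow_lt_pow_right_of_lt_one₀ hmem.1 hmem.2 hee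
      have hstr : F q (ρ q) < G q (ρ q) :=
        Summable.tsum_lt_tsum (fun i => pow_le_pow_of_le_one hmem.1.le hmem.2.le (e'_le_e q i))
          hterm (summable_e hmem.1.le hmem.2 q) (summable_e' hmem.1.le hmem.2 q)
      rw [F_rho hρ hq] at hstr
      have hLlt : L < ρ q := by
        by_contra hcon
        push_neg at hcon
        have h4 := G_mono_x q hmem.1.le hcon hL1
        rw [hG1] at h4
        linarith
      exact one_div_lt_one_div_of_lt hL0 hLlt
  · intro q hq hirr
    have heq : ∀ i, e' q i = e q i := by
      intro i
      rcases Nat.eq_zero_or_pos i with rfl | hi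
      · rw [e_zero, e'_zero]
      · have hi0 : i ≠ 0 := Nat.pos_iff_ne_zero.mp hi
        have hirr2 : Irrational ((i:ℝ)/q) := hirr.natCast_div hi0
        have h1 : (⌊(i:ℝ)/q⌋₊ : ℝ) < (i:ℝ)/q :=
          lt_of_le_of_ne (Nat.floor_le (div_nonneg (Nat.cast_nonneg i) hq.le))
            (Ne.symm (hirr2.ne_nat _))
        have h2 : ⌊(i:ℝ)/q⌋₊ < ⌈(i:ℝ)/q⌉₊ := Nat.lt_ceil.2 h1
        have h3 := Nat.ceil_le_floor_add_one ((i:ℝ)/q)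
        unfold e e'; rw [if_neg hi0]; omega
    have hGF : ∀ x : ℝ, G q x = F q x := fun x => tsum_congr fun i => by rw [heq i]
    obtain ⟨L, hL0, hL1, hLle, htend, hG1⟩ := right_lim hρ hq
    have hmem := (hρ q hq).1
    have hLrho : L = ρ q := by
      rcases lt_trichotomy L (ρ q) with h | h | h
      · exfalso
        have h5 : F q L < F q (ρ q) := F_strict_x q hL0.le h hmem.2
        rw [F_rho hρ hq, ← hGF, hG1] at h5
        exact lt_irrefl 1 h5
      · exact h
      · exact absurd h (not_lt.2 hLle)
    have h1 : ContinuousWithinAt (fun t => 1 / ρ t) (Iio q) q := by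
      have := (rho_left hρ hq).inv₀ hmem.1.ne'
      simpa only [ContinuousWithinAt, one_div] using this
    have h2 : ContinuousWithinAt (fun t => 1 / ρ t) (Ioi q) q := by
      have := htend.inv₀ hL0.ne'
      rw [hLrho] at this
      simpa only [ContinuousWithinAt, one_div] using this
    have hC : ContinuousAt (fun t => 1 / ρ t) q :=
      continuousAt_iff_continuous_left_right.2
        ⟨continuousWithinAt_Iio_iff_Iic.1 h1, continuousWithinAt_Ioi_iff_Ici.1 h2⟩
    exact hC.continuousWithinAt
end

section
/- Let q = c/d be an irreducible positive fraction and define Π_q(x) = 1 − x^{c+d} − Σ_{i=0}^{c-1} x^{1+i+⌊i·d/c⌋} and Π_q⁺(x) = 1 − (2−x)x^{c+d} − Σ_{i=0}^{c-1} x^{1+i+⌊i·d/c⌋}. Let ρ_q and ρ_q⁺ be their respective roots of smallest modulus. Then both ρ_q and ρ_q⁺ are real, lie in (0,1), and ρ_q⁺ < ρ_q. -/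
open Finset

set_option maxHeartbeats 1000000

private lemma tele19 {R : Type*} [CommRing R] (w : R) (a b : ℕ) (hab : a ≤ b) :
    (1 - w) * ∑ n ∈ Ico a b, w ^ n = w ^ a - w ^ b := by
  rw [Finset.sum_Ico_eq_sub _ hab, mul_sub]
  have h1 : ∀ k, (1 - w) * ∑ n ∈ range k, w ^ n = 1 - w ^ k := fun k => by
    linear_combination -geom_sum_mul w k
  rw [h1, h1]; ring

private lemma exp_le19 {c d : ℕ} (hc : 0 < c) (i : ℕ) (hi : i < c) :
    1 + i + i * d / c ≤ c + d := by
  have h1 : 1 + i ≤ c := by omega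
  have h2 : i * d / c ≤ d := by
    calc i * d / c ≤ c * d / c := Nat.div_le_div_right (Nat.mul_le_mul_right d hi.le)
    _ = d := Nat.mul_div_cancel_left d hc
  omega

private lemma idA19 {R : Type*} [CommRing R] (c d : ℕ) (hc : 0 < c) (w : R) :
    1 - w ^ (c + d) - ∑ i ∈ range c, w ^ (1 + i + i * d / c) =
    (1 - w) * (1 - ∑ i ∈ Ico 1 c, ∑ n ∈ Ico (1 + i + i * d / c) (c + d), w ^ n)
      - (c : R) * w ^ (c + d) := by
  have hsplit : ∑ i ∈ range c, w ^ (1 + i + i * d / c)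
      = w + ∑ i ∈ Ico 1 c, w ^ (1 + i + i * d / c) := by
    rw [range_eq_Ico, Finset.sum_eq_sum_Ico_succ_bot hc]
    norm_num
  have h1 : (1 - w) * ∑ i ∈ Ico 1 c, ∑ n ∈ Ico (1 + i + i * d / c) (c + d), w ^ n
      = ∑ i ∈ Ico 1 c, w ^ (1 + i + i * d / c) - ((c : R) - 1) * w ^ (c + d) := by
    rw [Finset.mul_sum,
      Finset.sum_congr rfl (fun i hi => tele19 w _ _ (exp_le19 hc i (mem_Ico.mp hi).2)),
      Finset.sum_sub_distrib, Finset.sum_const, Nat.card_Ico, nsmul_eq_mul]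
    have hcast : ((c - 1 : ℕ) : R) = (c : R) - 1 := by
      rw [Nat.cast_sub hc]; norm_num
    rw [hcast]
  linear_combination h1 - hsplit

private lemma idB19 {R : Type*} [CommRing R] (c d : ℕ) (hc : 0 < c) (w : R) :
    1 - (2 - w) * w ^ (c + d) - ∑ i ∈ range c, w ^ (1 + i + i * d / c) =
    (1 - w) * (1 - (w ^ (c + d) +
        ∑ i ∈ Ico 1 c, ∑ n ∈ Ico (1 + i + i * d / c) (c + d), w ^ n))
      - (c : R) * w ^ (c + d) := by
  linear_combination idA19 c d hc w

private lemma key19 {ι : Type*} (s : Finset ι) (m : ι → ℕ)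
    (K M : ℕ) (hK : 0 < K) (hM : 1 ≤ M) (r : ℝ) (hr0 : 0 < r) (hr1 : r < 1)
    (hr : (1 - r) * (1 - ∑ j ∈ s, r ^ m j) - (K : ℝ) * r ^ M = 0)
    (z : ℂ) (hz : (1 - z) * (1 - ∑ j ∈ s, z ^ m j) - (K : ℂ) * z ^ M = 0)
    (hle : ‖z‖ ≤ r) : z = (r : ℂ) := by
  have hρ0 : 0 ≤ ‖z‖ := norm_nonneg z
  have hρ1 : ‖z‖ < 1 := lt_of_le_of_lt hle hr1
  have hzne : (1 : ℂ) - z ≠ 0 := by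
    intro h
    have h1 : z = 1 := by linear_combination -h
    rw [h1] at hρ1
    simp at hρ1
  have habspos : 0 < ‖1 - z‖ := norm_pos_iff.mpr hzne
  have hu : 1 - ‖z‖ ≤ ‖1 - z‖ := by
    have h := norm_add_le (1 - z) z
    simp only [sub_add_cancel, norm_one] at h
    linarith
  have h1 : (1 : ℂ) = (∑ j ∈ s, z ^ m j) + (K : ℂ) * z ^ M / (1 - z) := by
    field_simp
    linear_combination hz
  have habsS : ‖∑ j ∈ s, z ^ m j‖ ≤ ∑ j ∈ s, ‖z‖ ^ m j := by
    refine le_trans (norm_sum_le _ _) ?_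
    simp [norm_pow]
  have habsT : ‖(K : ℂ) * z ^ M / (1 - z)‖
      = (K : ℝ) * ‖z‖ ^ M / ‖1 - z‖ := by
    simp [norm_div, norm_mul, norm_pow, Complex.norm_natCast]
  have hmain : 1 ≤ (∑ j ∈ s, ‖z‖ ^ m j)
      + (K : ℝ) * ‖z‖ ^ M / ‖1 - z‖ := by
    have h2 : (1 : ℝ) = ‖(∑ j ∈ s, z ^ m j) + (K : ℂ) * z ^ M / (1 - z)‖ := by
      rw [← h1]; simp
    calc (1:ℝ) = _ := h2
      _ ≤ ‖∑ j ∈ s, z ^ m j‖ + ‖(K : ℂ) * z ^ M / (1 - z)‖ :=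
          norm_add_le _ _
      _ ≤ _ := by rw [habsT]; linarith
  have h1r : (0:ℝ) < 1 - r := by linarith
  have hrsum : (∑ j ∈ s, r ^ m j) + (K : ℝ) * r ^ M / (1 - r) = 1 := by
    field_simp
    linear_combination -hr
  have hrρ : r ≤ ‖z‖ := by
    by_contra hcon
    push_neg at hcon
    have hS : (∑ j ∈ s, ‖z‖ ^ m j) ≤ ∑ j ∈ s, r ^ m j :=
      Finset.sum_le_sum fun j _ => pow_le_pow_left₀ hρ0 hcon.le (m j)
    have hT : (K : ℝ) * ‖z‖ ^ M / ‖1 - z‖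
        ≤ (K : ℝ) * ‖z‖ ^ M / (1 - ‖z‖) :=
      div_le_div_of_nonneg_left (by positivity) (by linarith) hu
    have hT2 : (K : ℝ) * ‖z‖ ^ M / (1 - ‖z‖)
        < (K : ℝ) * r ^ M / (1 - r) := by
      have hpow : ‖z‖ ^ M < r ^ M := pow_lt_pow_left₀ hcon hρ0 (by omega)
      have hKpos : (0:ℝ) < K := by exact_mod_cast hK
      have hnum : (K : ℝ) * ‖z‖ ^ M < (K : ℝ) * r ^ M := by nlinarith
      exact div_lt_div₀ hnum (by linarith) (by positivity) h1r
    linarith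
  have hρr : ‖z‖ = r := le_antisymm hle hrρ
  have h3 : (K : ℝ) * r ^ M / (1 - r) ≤ (K : ℝ) * r ^ M / ‖1 - z‖ := by
    rw [hρr] at hmain
    linarith
  have hKr : (0:ℝ) < (K : ℝ) * r ^ M := by
    have : (0:ℝ) < K := by exact_mod_cast hK
    positivity
  have habs1z : ‖1 - z‖ ≤ 1 - r := by
    rw [div_le_div_iff₀ h1r habspos] at h3
    exact le_of_mul_le_mul_left (by linarith) hKr
  have habs1z' : ‖1 - z‖ = 1 - r :=
    le_antisymm habs1z (by rw [← hρr]; exact hu)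
  have e1 : (1 - z.re) ^ 2 + z.im ^ 2 = (1 - r) ^ 2 := by
    have h4 : Complex.normSq (1 - z) = (1 - r) ^ 2 := by rw [← Complex.sq_norm, habs1z']
    simp only [Complex.normSq_apply, Complex.sub_re, Complex.sub_im, Complex.one_re,
      Complex.one_im] at h4
    nlinarith [h4]
  have e2 : z.re ^ 2 + z.im ^ 2 = r ^ 2 := by
    have h4 : Complex.normSq z = r ^ 2 := by rw [← Complex.sq_norm, hρr]
    simp only [Complex.normSq_apply] at h4
    nlinarith [h4]
  have hre : z.re = r := by nlinarith [e1, e2]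
  have him : z.im = 0 := by nlinarith [e1, e2, hre]
  apply Complex.ext
  · simp [hre]
  · simp [him]

/-- Let `q = c/d` be an irreducible positive fraction and define
`Π_q(x) = 1 - x^(c+d) - ∑_{i=0}^{c-1} x^(1+i+⌊i·d/c⌋)` and
`Π_q⁺(x) = 1 - (2-x)·x^(c+d) - ∑_{i=0}^{c-1} x^(1+i+⌊i·d/c⌋)`.
If `z` and `z'` are roots of smallest modulus of `Π_q` and `Π_q⁺`
respectively (among complex roots), then both are real, lie in `(0,1)`,
and `z' < z`. (Here `i * d / c` is natural-number division, i.e. the floor.) -/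
theorem stmt_19 (c d : ℕ) (hc : 0 < c) (hd : 0 < d) (hcd : Nat.Coprime c d)
    (z z' : ℂ)
    (hz : 1 - z ^ (c + d) - ∑ i ∈ Finset.range c, z ^ (1 + i + i * d / c) = 0)
    (hzmin : ∀ w : ℂ,
      1 - w ^ (c + d) - ∑ i ∈ Finset.range c, w ^ (1 + i + i * d / c) = 0 →
      ‖z‖ ≤ ‖w‖)
    (hz' : 1 - (2 - z') * z' ^ (c + d) -
      ∑ i ∈ Finset.range c, z' ^ (1 + i + i * d / c) = 0)
    (hz'min : ∀ w : ℂ,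
      1 - (2 - w) * w ^ (c + d) -
        ∑ i ∈ Finset.range c, w ^ (1 + i + i * d / c) = 0 →
      ‖z'‖ ≤ ‖w‖) :
    ∃ x x' : ℝ, z = (x : ℂ) ∧ z' = (x' : ℂ) ∧
      x ∈ Set.Ioo (0:ℝ) 1 ∧ x' ∈ Set.Ioo (0:ℝ) 1 ∧ x' < x := by
  have hepos : ∀ i : ℕ, 0 < 1 + i + i * d / c := fun i =>
    Nat.lt_of_lt_of_le one_pos ((Nat.le_add_right 1 i).trans (Nat.le_add_right (1 + i) _))
  have hNpos : 0 < c + d := by omega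
  -- real root of Π_q in (0,1)
  obtain ⟨r, hrIoo, hPr⟩ : ∃ r ∈ Set.Ioo (0:ℝ) 1,
      (fun x : ℝ => x ^ (c + d) + ∑ i ∈ range c, x ^ (1 + i + i * d / c)) r = 1 := by
    have hcont : ContinuousOn
        (fun x : ℝ => x ^ (c + d) + ∑ i ∈ range c, x ^ (1 + i + i * d / c))
        (Set.Icc 0 1) :=
      ((continuous_pow _).add (continuous_finset_sum _ fun i _ => continuous_pow _)).continuousOn
    have h := intermediate_value_Ioo (by norm_num : (0:ℝ) ≤ 1) hcont
    have hmem : (1:ℝ) ∈ Set.Ioo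
        ((fun x : ℝ => x ^ (c + d) + ∑ i ∈ range c, x ^ (1 + i + i * d / c)) 0)
        ((fun x : ℝ => x ^ (c + d) + ∑ i ∈ range c, x ^ (1 + i + i * d / c)) 1) := by
      constructor
      · simp only [zero_pow (by omega : c + d ≠ 0)]
        rw [Finset.sum_eq_zero fun i _ => zero_pow (hepos i).ne']
        norm_num
      · simp only [one_pow, Finset.sum_const, card_range, nsmul_eq_mul, mul_one]
        have : (1:ℝ) ≤ c := by exact_mod_cast hc
        linarith
    obtain ⟨r, hr1, hr2⟩ := h hmem
    exact ⟨r, hr1, hr2⟩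
  -- real root of Π_q⁺ in (0,1)
  obtain ⟨r', hr'Ioo, hPr'⟩ : ∃ r' ∈ Set.Ioo (0:ℝ) 1,
      (fun x : ℝ => (2 - x) * x ^ (c + d) + ∑ i ∈ range c, x ^ (1 + i + i * d / c)) r' = 1 := by
    have hcont : ContinuousOn
        (fun x : ℝ => (2 - x) * x ^ (c + d) + ∑ i ∈ range c, x ^ (1 + i + i * d / c))
        (Set.Icc 0 1) :=
      (((continuous_const.sub continuous_id).mul (continuous_pow _)).add
        (continuous_finset_sum _ fun i _ => continuous_pow _)).continuousOn
    have h := intermediate_value_Ioo (by norm_num : (0:ℝ) ≤ 1) hcont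
    have hmem : (1:ℝ) ∈ Set.Ioo
        ((fun x : ℝ => (2 - x) * x ^ (c + d) + ∑ i ∈ range c, x ^ (1 + i + i * d / c)) 0)
        ((fun x : ℝ => (2 - x) * x ^ (c + d) + ∑ i ∈ range c, x ^ (1 + i + i * d / c)) 1) := by
      constructor
      · simp only [zero_pow (by omega : c + d ≠ 0), mul_zero]
        rw [Finset.sum_eq_zero fun i _ => zero_pow (hepos i).ne']
        norm_num
      · simp only [one_pow, Finset.sum_const, card_range, nsmul_eq_mul, mul_one]
        have : (1:ℝ) ≤ c := by exact_mod_cast hc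
        linarith
    obtain ⟨r', h1, h2⟩ := h hmem
    exact ⟨r', h1, h2⟩
  simp only at hPr hPr'
  obtain ⟨hr0, hr1⟩ := hrIoo
  obtain ⟨hr'0, hr'1⟩ := hr'Ioo
  -- sigma index sets
  set sA : Finset ((_ : ℕ) × ℕ) :=
    (Ico 1 c).sigma (fun i => Ico (1 + i + i * d / c) (c + d)) with hsA
  have hsumA : ∀ {R : Type} [CommRing R] (w : R),
      ∑ j ∈ sA, w ^ j.2 = ∑ i ∈ Ico 1 c, ∑ n ∈ Ico (1 + i + i * d / c) (c + d), w ^ n :=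
    fun w => Finset.sum_sigma _ _ _
  have hnotmem : (⟨0, c + d⟩ : (_ : ℕ) × ℕ) ∉ sA := by
    simp [hsA, Finset.mem_sigma]
  -- key equation for r (real)
  have hrkey : (1 - r) * (1 - ∑ j ∈ sA, r ^ j.2) - (c : ℝ) * r ^ (c + d) = 0 := by
    rw [hsumA]
    have := idA19 c d hc r
    rw [← this]
    linarith [hPr]
  -- key equation for z (complex)
  have hzkey : (1 - z) * (1 - ∑ j ∈ sA, z ^ j.2) - (c : ℂ) * z ^ (c + d) = 0 := by
    rw [hsumA]
    have := idA19 c d hc z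
    rw [← this]
    exact hz
  -- |z| ≤ r
  have hrceq : 1 - (r : ℂ) ^ (c + d) -
      ∑ i ∈ range c, (r : ℂ) ^ (1 + i + i * d / c) = 0 := by
    have hreal : 1 - r ^ (c + d) - ∑ i ∈ range c, r ^ (1 + i + i * d / c) = 0 := by
      linarith [hPr]
    have := congrArg (Complex.ofReal) hreal
    push_cast at this
    convert this using 2
  have hlez : ‖z‖ ≤ r := by
    have h := hzmin _ hrceq
    rwa [Complex.norm_real, Real.norm_eq_abs, abs_of_pos hr0] at h
  have hzr : z = (r : ℂ) :=
    key19 sA (fun j => j.2) c (c + d) hc (by omega) r hr0 hr1 hrkey z hzkey hlez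
  -- key equation for r' (real)
  have hr'key : (1 - r') * (1 - ∑ j ∈ (insert ⟨0, c + d⟩ sA), r' ^ j.2)
      - (c : ℝ) * r' ^ (c + d) = 0 := by
    rw [Finset.sum_insert hnotmem, hsumA]
    have := idB19 c d hc r'
    rw [← this]
    linarith [hPr']
  have hz'key : (1 - z') * (1 - ∑ j ∈ (insert ⟨0, c + d⟩ sA), z' ^ j.2)
      - (c : ℂ) * z' ^ (c + d) = 0 := by
    rw [Finset.sum_insert hnotmem, hsumA]
    have := idB19 c d hc z'
    rw [← this]
    exact hz'
  have hr'ceq : 1 - (2 - (r' : ℂ)) * (r' : ℂ) ^ (c + d) -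
      ∑ i ∈ range c, (r' : ℂ) ^ (1 + i + i * d / c) = 0 := by
    have hreal : 1 - (2 - r') * r' ^ (c + d) -
        ∑ i ∈ range c, r' ^ (1 + i + i * d / c) = 0 := by
      linarith [hPr']
    have := congrArg (Complex.ofReal) hreal
    push_cast at this
    convert this using 2
  have hlez' : ‖z'‖ ≤ r' := by
    have h := hz'min _ hr'ceq
    rwa [Complex.norm_real, Real.norm_eq_abs, abs_of_pos hr'0] at h
  have hz'r' : z' = (r' : ℂ) :=
    key19 (insert ⟨0, c + d⟩ sA) (fun j => j.2) c (c + d) hc (by omega) r' hr'0 hr'1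
      hr'key z' hz'key hlez'
  -- r' < r
  have h1r : (0:ℝ) < 1 - r := by linarith
  have h1r' : (0:ℝ) < 1 - r' := by linarith
  have hΦr : (∑ j ∈ sA, r ^ j.2) + (c : ℝ) * r ^ (c + d) / (1 - r) = 1 := by
    field_simp
    linear_combination -hrkey
  have hΦr' : (∑ j ∈ sA, r' ^ j.2) + (c : ℝ) * r' ^ (c + d) / (1 - r') = 1 - r' ^ (c + d) := by
    rw [Finset.sum_insert hnotmem] at hr'key
    field_simp
    linear_combination -hr'key
  have hlt : r' < r := by
    by_contra hcon
    push_neg at hcon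
    have hmono : (∑ j ∈ sA, r ^ j.2) + (c : ℝ) * r ^ (c + d) / (1 - r)
        ≤ (∑ j ∈ sA, r' ^ j.2) + (c : ℝ) * r' ^ (c + d) / (1 - r') := by
      gcongr
    have hpow : (0:ℝ) < r' ^ (c + d) := by positivity
    rw [hΦr, hΦr'] at hmono
    linarith
  exact ⟨r, r', hzr, hz'r', ⟨hr0, hr1⟩, ⟨hr'0, hr'1⟩, hlt⟩
end
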